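/- arXiv:0710.0194 — 7 statements merged into one kernel-verified Lean document; each statement's English description precedes it below -/
import Mathlib

section
/- The family of operators {e_1^{γ_1} ∘ ⋯ ∘ e_n^{γ_n} ∘ ω_l : γ = (γ_1,…,γ_n) ∈ ℕ^n, l ∈ ℤ^n} is a basis of D as a ℂ-vector space. Equivalently, D is the direct sum over l ∈ ℤ^n of the subspaces M_l, where M_l is spanned by {e^γ ∘ ω_l : γ ∈ ℕ^n}, and each M_l is a free module of rank one over the polynomial algebra E = ℂ[e_1,…,e_n] with generator ω_l. -/
open MvPolynomial

noncomputable section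

/-- The polynomial ring `P = ℂ[x_1, …, x_n]`. -/
abbrev Pn (n : ℕ) := MvPolynomial (Fin n) ℂ

/-- Multiplication by the variable `x_j`, as a ℂ-linear endomorphism of `P`. -/
def Xop (n : ℕ) (j : Fin n) : Module.End ℂ (Pn n) :=
  LinearMap.mulLeft ℂ (X j)

/-- The partial derivative `∂_j`, as a ℂ-linear endomorphism of `P`. -/
def Dop (n : ℕ) (j : Fin n) : Module.End ℂ (Pn n) :=
  (pderiv j).toLinearMap

/-- The Weyl algebra `D`: the ℂ-subalgebra of `End_ℂ(P)` generated by the `X_j` and `∂_j`. -/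
def weylD (n : ℕ) : Subalgebra ℂ (Module.End ℂ (Pn n)) :=
  Algebra.adjoin ℂ (Set.range (Xop n) ∪ Set.range (Dop n))

/-- The Euler operator `e_j = X_j ∘ ∂_j`. -/
def eulOp (n : ℕ) (j : Fin n) : Module.End ℂ (Pn n) :=
  Xop n j * Dop n j

/-- The factor `v_j`: `X_j^{l_j}` if `l_j ≥ 0`, and `∂_j^{-l_j}` if `l_j < 0`. -/
def vOp (n : ℕ) (l : Fin n → ℤ) (j : Fin n) : Module.End ℂ (Pn n) :=
  if 0 ≤ l j then Xop n j ^ (l j).toNat else Dop n j ^ (-(l j)).toNat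

/-- The operator `ω_l = v_1 ∘ ⋯ ∘ v_n` attached to a lattice point `l ∈ ℤ^n`. -/
def omegaOp (n : ℕ) (l : Fin n → ℤ) : Module.End ℂ (Pn n) :=
  (List.ofFn (vOp n l)).prod

/-- The operator `e^γ = e_1^{γ_1} ∘ ⋯ ∘ e_n^{γ_n}` for a multi-index `γ ∈ ℕ^n`. -/
def eulPow (n : ℕ) (γ : Fin n → ℕ) : Module.End ℂ (Pn n) :=
  (List.ofFn fun j => eulOp n j ^ γ j).prod

namespace Stmt2Aux

variable {n : ℕ}

/-- Convert a function to a finsupp exponent. -/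
def fe (a : Fin n → ℕ) : Fin n →₀ ℕ := Finsupp.equivFunOnFinite.symm a

@[simp] lemma fe_apply (a : Fin n → ℕ) (j : Fin n) : fe a j = a j := rfl

@[simp] lemma fe_coe (d : Fin n →₀ ℕ) : fe (⇑d) = d := Finsupp.equivFunOnFinite.symm_apply_apply d

lemma endo_ext {f g : Module.End ℂ (Pn n)}
    (h : ∀ d : Fin n →₀ ℕ, ∀ c : ℂ, f (monomial d c) = g (monomial d c)) : f = g := by
  refine LinearMap.ext fun p => ?_
  induction p using MvPolynomial.induction_on' with
  | monomial d c => exact h d c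
  | add p q hp hq => simp [map_add, hp, hq]

lemma Xop_monomial (j : Fin n) (d : Fin n →₀ ℕ) (c : ℂ) :
    Xop n j (monomial d c) = monomial (d + Finsupp.single j 1) c := by
  simp [Xop, LinearMap.mulLeft_apply, X, monomial_mul, add_comm]

lemma Dop_monomial (j : Fin n) (d : Fin n →₀ ℕ) (c : ℂ) :
    Dop n j (monomial d c) = monomial (d - Finsupp.single j 1) ((d j : ℂ) * c) := by
  simp [Dop, pderiv_monomial, mul_comm]

lemma Xop_pow_monomial (j : Fin n) (k : ℕ) (d : Fin n →₀ ℕ) (c : ℂ) :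
    (Xop n j ^ k) (monomial d c) = monomial (d + Finsupp.single j k) c := by
  induction k with
  | zero => simp
  | succ k ih =>
      rw [pow_succ', Module.End.mul_apply, ih, Xop_monomial]
      congr 1
      rw [add_assoc, ← Finsupp.single_add]

lemma Dop_pow_monomial (j : Fin n) (m : ℕ) (d : Fin n →₀ ℕ) (c : ℂ) :
    (Dop n j ^ m) (monomial d c)
      = monomial (d - Finsupp.single j m) (((d j).descFactorial m : ℂ) * c) := by
  induction m with
  | zero => simp
  | succ m ih =>
      rw [pow_succ', Module.End.mul_apply, ih, Dop_monomial]
      congr 1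
      · rw [tsub_tsub, ← Finsupp.single_add]
      · rw [Finsupp.tsub_apply, Finsupp.single_apply, if_pos rfl,
          Nat.descFactorial_succ, Nat.cast_mul]
        ring

lemma vOp_monomial (l : Fin n → ℤ) (j : Fin n) (d : Fin n →₀ ℕ) (c : ℂ) :
    vOp n l j (monomial d c)
      = monomial (d + Finsupp.single j (l j).toNat - Finsupp.single j (-(l j)).toNat)
          (((d j).descFactorial (-(l j)).toNat : ℂ) * c) := by
  unfold vOp
  split_ifs with h
  · have : (-(l j)).toNat = 0 := by omega
    simp [this, Xop_pow_monomial]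
  · have : (l j).toNat = 0 := by omega
    simp [this, Dop_pow_monomial]


/-- The exponent shift produced by `ω_l`. -/
def expShift (a : Fin n → ℕ) (l : Fin n → ℤ) : Fin n → ℕ :=
  fun j => a j + (l j).toNat - (-(l j)).toNat

/-- The (natural-number) coefficient produced by `ω_l` on the monomial `x^a`. -/
def coefOmega (a : Fin n → ℕ) (l : Fin n → ℤ) : ℂ :=
  ∏ j, ((a j).descFactorial (-(l j)).toNat : ℂ)

lemma omega_aux (l : Fin n → ℤ) (L : List (Fin n)) (hL : L.Nodup) (a : Fin n → ℕ) (c : ℂ) :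
    (L.map (vOp n l)).prod (monomial (fe a) c)
      = monomial (fe fun j => if j ∈ L then a j + (l j).toNat - (-(l j)).toNat else a j)
          ((L.map fun j => ((a j).descFactorial (-(l j)).toNat : ℂ)).prod * c) := by
  induction L with
  | nil => simp
  | cons j L ih =>
      obtain ⟨hj, hL⟩ := List.nodup_cons.mp hL
      rw [List.map_cons, List.prod_cons, Module.End.mul_apply, ih hL, vOp_monomial]
      have hfj : (fe fun k => if k ∈ L then a k + (l k).toNat - (-(l k)).toNat else a k) j
          = a j := by simp [hj]
      rw [hfj]
      have hexp : ((fe fun k => if k ∈ L then a k + (l k).toNat - (-(l k)).toNat else a k)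
            + Finsupp.single j (l j).toNat) - Finsupp.single j (-(l j)).toNat
          = fe (fun k => if k ∈ j :: L then a k + (l k).toNat - (-(l k)).toNat else a k) := by
        ext k
        rw [Finsupp.tsub_apply, Finsupp.add_apply]
        by_cases hk : k = j
        · subst hk
          simp [hj, Finsupp.single_apply]
        · simp [Finsupp.single_apply, hk, List.mem_cons, (Ne.symm hk : j ≠ k)]
      rw [hexp]
      congr 1
      rw [List.map_cons, List.prod_cons]
      ring

lemma omega_monomial (l : Fin n → ℤ) (a : Fin n → ℕ) (c : ℂ) :
    omegaOp n l (monomial (fe a) c) = monomial (fe (expShift a l)) (coefOmega a l * c) := by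
  rw [omegaOp, List.ofFn_eq_map]
  rw [omega_aux l _ (List.nodup_finRange n) a c]
  have h1 : (fe fun j => if j ∈ List.finRange n then a j + (l j).toNat - (-(l j)).toNat else a j)
      = fe (expShift a l) := by
    congr 1
    funext j
    simp [List.mem_finRange, expShift]
  rw [h1]
  have h2 : ((List.finRange n).map fun j => ((a j).descFactorial (-(l j)).toNat : ℂ)).prod
      = coefOmega a l := by
    rw [← List.ofFn_eq_map, List.prod_ofFn, coefOmega]
  rw [h2]

lemma eulOp_monomial (j : Fin n) (d : Fin n →₀ ℕ) (c : ℂ) :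
    eulOp n j (monomial d c) = monomial d ((d j : ℂ) * c) := by
  rw [eulOp, Module.End.mul_apply, Dop_monomial, Xop_monomial]
  by_cases h : d j = 0
  · simp [h]
  · have hd : d - Finsupp.single j 1 + Finsupp.single j 1 = d := by
      ext k
      rw [Finsupp.add_apply, Finsupp.tsub_apply]
      by_cases hk : k = j
      · subst hk; simp [Finsupp.single_apply]; omega
      · simp [Finsupp.single_apply, (Ne.symm hk : j ≠ k)]
    rw [hd]

lemma eulOp_pow_monomial (j : Fin n) (k : ℕ) (d : Fin n →₀ ℕ) (c : ℂ) :
    (eulOp n j ^ k) (monomial d c) = monomial d ((d j : ℂ) ^ k * c) := by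
  induction k with
  | zero => simp
  | succ k ih =>
      rw [pow_succ', Module.End.mul_apply, ih, eulOp_monomial]
      congr 1; ring

lemma eulPow_aux (γ : Fin n → ℕ) (L : List (Fin n)) (d : Fin n →₀ ℕ) (c : ℂ) :
    (L.map fun j => eulOp n j ^ γ j).prod (monomial d c)
      = monomial d ((L.map fun j => (d j : ℂ) ^ γ j).prod * c) := by
  induction L with
  | nil => simp
  | cons j L ih =>
      rw [List.map_cons, List.prod_cons, Module.End.mul_apply, ih, eulOp_pow_monomial,
        List.map_cons, List.prod_cons]
      congr 1; ring

lemma eulPow_monomial (γ : Fin n → ℕ) (d : Fin n →₀ ℕ) (c : ℂ) :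
    eulPow n γ (monomial d c) = monomial d ((∏ j, (d j : ℂ) ^ γ j) * c) := by
  rw [eulPow, List.ofFn_eq_map, eulPow_aux]
  have h2 : ((List.finRange n).map fun j => (d j : ℂ) ^ γ j).prod = ∏ j, (d j : ℂ) ^ γ j := by
    rw [← List.ofFn_eq_map, List.prod_ofFn]
  rw [h2]

/-- The basis operator. -/
def Fop (γ : Fin n → ℕ) (l : Fin n → ℤ) : Module.End ℂ (Pn n) :=
  eulPow n γ * omegaOp n l

lemma Fop_monomial (γ : Fin n → ℕ) (l : Fin n → ℤ) (a : Fin n → ℕ) (c : ℂ) :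
    Fop γ l (monomial (fe a) c)
      = monomial (fe (expShift a l))
          ((∏ j, (expShift a l j : ℂ) ^ γ j) * (coefOmega a l * c)) := by
  rw [Fop, Module.End.mul_apply, omega_monomial, eulPow_monomial]
  simp


/-! ### Helper product lemmas -/

lemma prod_pow_erase (x : Fin n → ℂ) (γ : Fin n → ℕ) (j : Fin n) :
    ∏ k, x k ^ γ k = x j ^ γ j * ∏ k ∈ Finset.univ.erase j, x k ^ γ k :=
  (Finset.mul_prod_erase _ _ (Finset.mem_univ j)).symm

lemma prod_pow_update (x : Fin n → ℂ) (γ : Fin n → ℕ) (j : Fin n) (m : ℕ) :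
    ∏ k, x k ^ (Function.update γ j m k)
      = x j ^ m * ∏ k ∈ Finset.univ.erase j, x k ^ γ k := by
  rw [prod_pow_erase x _ j, Function.update_self]
  congr 1
  refine Finset.prod_congr rfl fun k hk => ?_
  rw [Function.update_of_ne (Finset.mem_erase.mp hk).1]

lemma prod_pow_congr {x y : Fin n → ℂ} {γ : Fin n → ℕ} (j : Fin n) (hγ : γ j = 0)
    (h : ∀ k, k ≠ j → x k = y k) : ∏ k, x k ^ γ k = ∏ k, y k ^ γ k := by
  refine Finset.prod_congr rfl fun k _ => ?_
  by_cases hk : k = j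
  · subst hk; rw [hγ, pow_zero, pow_zero]
  · rw [h k hk]

lemma coefOmega_erase (a : Fin n → ℕ) (l : Fin n → ℤ) (j : Fin n) :
    coefOmega a l = ((a j).descFactorial (-(l j)).toNat : ℂ)
      * ∏ k ∈ Finset.univ.erase j, ((a k).descFactorial (-(l k)).toNat : ℂ) :=
  (Finset.mul_prod_erase _ _ (Finset.mem_univ j)).symm

lemma coefOmega_update (a : Fin n → ℕ) (l : Fin n → ℤ) (j : Fin n) (v : ℤ) :
    coefOmega a (Function.update l j v) = ((a j).descFactorial (-v).toNat : ℂ)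
      * ∏ k ∈ Finset.univ.erase j, ((a k).descFactorial (-(l k)).toNat : ℂ) := by
  rw [coefOmega_erase _ _ j, Function.update_self]
  congr 1
  refine Finset.prod_congr rfl fun k hk => ?_
  rw [Function.update_of_ne (Finset.mem_erase.mp hk).1]

lemma coefOmega_eq_zero {a : Fin n → ℕ} {l : Fin n → ℤ} {j : Fin n}
    (h : a j < (-(l j)).toNat) : coefOmega a l = 0 := by
  refine Finset.prod_eq_zero (Finset.mem_univ j) ?_
  rw [Nat.cast_eq_zero]
  exact Nat.descFactorial_eq_zero_iff_lt.mpr h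

lemma expShift_update_ne (a : Fin n → ℕ) (l : Fin n → ℤ) (j : Fin n) (v : ℤ) (k : Fin n)
    (hk : k ≠ j) : expShift a (Function.update l j v) k = expShift a l k := by
  unfold expShift
  rw [Function.update_of_ne hk]

/-! ### The operator identities -/

lemma eul_mul_Fop (γ : Fin n → ℕ) (l : Fin n → ℤ) (j : Fin n) :
    eulOp n j * Fop γ l = Fop (Function.update γ j (γ j + 1)) l := by
  refine endo_ext fun d c => ?_
  rw [Module.End.mul_apply, ← fe_coe d, Fop_monomial, Fop_monomial, eulOp_monomial]
  congr 1
  rw [fe_apply, prod_pow_update, prod_pow_erase (fun k => ((expShift (⇑d) l k : ℂ))) γ j,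
    pow_succ]
  ring

lemma Xop_eul_comm (j : Fin n) :
    Xop n j * eulOp n j = eulOp n j * Xop n j - Xop n j := by
  refine endo_ext fun d c => ?_
  rw [Module.End.mul_apply, LinearMap.sub_apply, Module.End.mul_apply, eulOp_monomial,
    Xop_monomial, Xop_monomial, eulOp_monomial, ← map_sub]
  congr 1
  rw [Finsupp.add_apply, Finsupp.single_apply, if_pos rfl]
  push_cast
  ring

lemma Dop_eul_comm (j : Fin n) :
    Dop n j * eulOp n j = eulOp n j * Dop n j + Dop n j := by
  refine endo_ext fun d c => ?_
  rw [Module.End.mul_apply, LinearMap.add_apply, Module.End.mul_apply, eulOp_monomial,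
    Dop_monomial, Dop_monomial, eulOp_monomial, ← map_add]
  congr 1
  rw [Finsupp.tsub_apply, Finsupp.single_apply, if_pos rfl]
  by_cases h : d j = 0
  · simp [h]
  · rw [Nat.cast_sub (by omega)]
    ring

lemma Xop_mul_Fop_of_nonneg {γ : Fin n → ℕ} {l : Fin n → ℤ} {j : Fin n}
    (hγ : γ j = 0) (hl : 0 ≤ l j) :
    Xop n j * Fop γ l = Fop γ (Function.update l j (l j + 1)) := by
  refine endo_ext fun d c => ?_
  rw [Module.End.mul_apply, ← fe_coe d, Fop_monomial, Fop_monomial, Xop_monomial]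
  set a := ⇑d
  set l' := Function.update l j (l j + 1) with hl'
  have hexp : fe (expShift a l) + Finsupp.single j 1 = fe (expShift a l') := by
    ext k
    rw [Finsupp.add_apply, Finsupp.single_apply]
    by_cases hk : k = j
    · subst hk
      rw [if_pos rfl, fe_apply, fe_apply]
      unfold expShift
      rw [hl', Function.update_self]
      omega
    · rw [if_neg (by exact fun h => hk h.symm), fe_apply, fe_apply, add_zero,
        expShift_update_ne a l j _ k hk]
  rw [hexp]
  congr 1
  have h1 : (∏ k, ((expShift a l' k : ℂ)) ^ γ k) = ∏ k, ((expShift a l k : ℂ)) ^ γ k :=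
    prod_pow_congr j hγ fun k hk => by rw [expShift_update_ne a l j _ k hk]
  have h2 : coefOmega a l' = coefOmega a l := by
    rw [coefOmega_update, coefOmega_erase a l j]
    have : (-(l j + 1)).toNat = (-(l j)).toNat := by omega
    rw [this]
  rw [h1, h2]

lemma Xop_mul_Fop_of_neg {γ : Fin n → ℕ} {l : Fin n → ℤ} {j : Fin n}
    (hγ : γ j = 0) (hl : l j < 0) :
    Xop n j * Fop γ l = Fop (Function.update γ j 1) (Function.update l j (l j + 1)) := by
  refine endo_ext fun d c => ?_
  rw [Module.End.mul_apply, ← fe_coe d, Fop_monomial, Fop_monomial, Xop_monomial]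
  set a := ⇑d
  set l' := Function.update l j (l j + 1) with hl'
  set m := (-(l j)).toNat with hm
  have hm1 : 1 ≤ m := by omega
  have hl'j : l' j = l j + 1 := Function.update_self _ _ _
  by_cases hc : m ≤ a j
  · have hexp : fe (expShift a l) + Finsupp.single j 1 = fe (expShift a l') := by
      ext k
      rw [Finsupp.add_apply, Finsupp.single_apply]
      by_cases hk : k = j
      · subst hk
        rw [if_pos rfl, fe_apply, fe_apply]
        unfold expShift
        rw [hl'j]
        omega
      · rw [if_neg (by exact fun h => hk h.symm), fe_apply, fe_apply, add_zero,
          expShift_update_ne a l j _ k hk]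
    rw [hexp]
    congr 1
    have h1 : (∏ k, ((expShift a l' k : ℂ)) ^ (Function.update γ j 1 k))
        = (expShift a l' j : ℂ) * ∏ k ∈ Finset.univ.erase j, ((expShift a l k : ℂ)) ^ γ k := by
      rw [prod_pow_update, pow_one]
      congr 1
      refine Finset.prod_congr rfl fun k hk => ?_
      rw [expShift_update_ne a l j _ k (Finset.mem_erase.mp hk).1]
    have h2 : (∏ k, ((expShift a l k : ℂ)) ^ γ k)
        = ∏ k ∈ Finset.univ.erase j, ((expShift a l k : ℂ)) ^ γ k := by
      rw [prod_pow_erase _ γ j, hγ, pow_zero, one_mul]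
    have h3 : coefOmega a l' = ((a j).descFactorial (m - 1) : ℂ)
        * ∏ k ∈ Finset.univ.erase j, ((a k).descFactorial (-(l k)).toNat : ℂ) := by
      rw [coefOmega_update]
      have : (-(l j + 1)).toNat = m - 1 := by omega
      rw [this]
    have key : (expShift a l' j : ℂ) * ((a j).descFactorial (m - 1) : ℂ)
        = ((a j).descFactorial m : ℂ) := by
      have e1 : expShift a l' j = a j - (m - 1) := by
        unfold expShift; rw [hl'j]; omega
      have e2 : (a j).descFactorial m = (a j - (m - 1)) * (a j).descFactorial (m - 1) := by
        conv_lhs => rw [show m = (m - 1) + 1 by omega]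
        rw [Nat.descFactorial_succ]
      rw [e1, e2]
      push_cast
      ring
    rw [h1, h2, h3, coefOmega_erase a l j, ← hm]
    rw [← key]
    ring
  · push_neg at hc
    have hz1 : coefOmega a l = 0 := coefOmega_eq_zero (by rw [← hm]; exact hc)
    rw [hz1, zero_mul, mul_zero, monomial_zero]
    rcases Nat.lt_or_ge (a j) (m - 1) with hc2 | hc2
    · have hz2 : coefOmega a l' = 0 := coefOmega_eq_zero (by rw [hl'j]; omega)
      rw [hz2, zero_mul, mul_zero, monomial_zero]
    · have hje : a j = m - 1 := by omega
      have hz3 : (∏ k, ((expShift a l' k : ℂ)) ^ (Function.update γ j 1 k)) = 0 := by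
        refine Finset.prod_eq_zero (Finset.mem_univ j) ?_
        rw [Function.update_self, pow_one, Nat.cast_eq_zero]
        unfold expShift
        rw [hl'j]
        omega
      rw [hz3, zero_mul, monomial_zero]

lemma Dop_mul_Fop_of_nonpos {γ : Fin n → ℕ} {l : Fin n → ℤ} {j : Fin n}
    (hγ : γ j = 0) (hl : l j ≤ 0) :
    Dop n j * Fop γ l = Fop γ (Function.update l j (l j - 1)) := by
  refine endo_ext fun d c => ?_
  rw [Module.End.mul_apply, ← fe_coe d, Fop_monomial, Fop_monomial, Dop_monomial]
  set a := ⇑d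
  set l' := Function.update l j (l j - 1) with hl'
  have hl'j : l' j = l j - 1 := Function.update_self _ _ _
  have hexp : fe (expShift a l) - Finsupp.single j 1 = fe (expShift a l') := by
    ext k
    rw [Finsupp.tsub_apply, Finsupp.single_apply]
    by_cases hk : k = j
    · subst hk
      rw [if_pos rfl, fe_apply, fe_apply]
      unfold expShift
      rw [hl'j]
      omega
    · rw [if_neg (by exact fun h => hk h.symm), fe_apply, fe_apply, Nat.sub_zero,
        expShift_update_ne a l j _ k hk]
  rw [hexp]
  congr 1
  have h1 : (∏ k, ((expShift a l' k : ℂ)) ^ γ k) = ∏ k, ((expShift a l k : ℂ)) ^ γ k :=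
    prod_pow_congr j hγ fun k hk => by rw [expShift_update_ne a l j _ k hk]
  have key : coefOmega a l' = (expShift a l j : ℂ) * coefOmega a l := by
    rw [coefOmega_update, coefOmega_erase a l j]
    have e1 : (-(l j - 1)).toNat = (-(l j)).toNat + 1 := by omega
    have e2 : expShift a l j = a j - (-(l j)).toNat := by unfold expShift; omega
    rw [e1, Nat.descFactorial_succ, e2]
    push_cast
    ring
  rw [h1, key]
  rw [fe_apply]
  ring

lemma Dop_mul_Fop_of_pos {γ : Fin n → ℕ} {l : Fin n → ℤ} {j : Fin n}
    (hγ : γ j = 0) (hl : 0 < l j) :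
    Dop n j * Fop γ l = Fop (Function.update γ j 1) (Function.update l j (l j - 1))
      + Fop γ (Function.update l j (l j - 1)) := by
  refine endo_ext fun d c => ?_
  rw [Module.End.mul_apply, LinearMap.add_apply, ← fe_coe d, Fop_monomial, Fop_monomial,
    Fop_monomial, Dop_monomial, ← map_add]
  set a := ⇑d
  set l' := Function.update l j (l j - 1) with hl'
  have hl'j : l' j = l j - 1 := Function.update_self _ _ _
  have hexp : fe (expShift a l) - Finsupp.single j 1 = fe (expShift a l') := by
    ext k
    rw [Finsupp.tsub_apply, Finsupp.single_apply]
    by_cases hk : k = j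
    · subst hk
      rw [if_pos rfl, fe_apply, fe_apply]
      unfold expShift
      rw [hl'j]
      omega
    · rw [if_neg (by exact fun h => hk h.symm), fe_apply, fe_apply, Nat.sub_zero,
        expShift_update_ne a l j _ k hk]
  rw [hexp]
  congr 1
  have hcoef : coefOmega a l' = coefOmega a l := by
    rw [coefOmega_update, coefOmega_erase a l j]
    have : (-(l j - 1)).toNat = (-(l j)).toNat := by omega
    rw [this]
  have h1 : (∏ k, ((expShift a l' k : ℂ)) ^ γ k) = ∏ k, ((expShift a l k : ℂ)) ^ γ k :=
    prod_pow_congr j hγ fun k hk => by rw [expShift_update_ne a l j _ k hk]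
  have h2 : (∏ k, ((expShift a l' k : ℂ)) ^ (Function.update γ j 1 k))
      = (expShift a l' j : ℂ) * ∏ k, ((expShift a l k : ℂ)) ^ γ k := by
    rw [prod_pow_update, pow_one,
      prod_pow_erase (fun k => ((expShift a l k : ℂ))) γ j, hγ, pow_zero, one_mul]
    congr 1
    refine Finset.prod_congr rfl fun k hk => ?_
    rw [expShift_update_ne a l j _ k (Finset.mem_erase.mp hk).1]
  have key : (expShift a l j : ℂ) = (expShift a l' j : ℂ) + 1 := by
    have : expShift a l j = expShift a l' j + 1 := by
      unfold expShift; rw [hl'j]; omega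
    rw [this]
    push_cast
    ring
  rw [hcoef, h1, h2, fe_apply, key]
  ring


/-! ### The span -/

def Kspan (n : ℕ) : Submodule ℂ (Module.End ℂ (Pn n)) :=
  Submodule.span ℂ
    (Set.range fun p : (Fin n → ℕ) × (Fin n → ℤ) => eulPow n p.1 * omegaOp n p.2)

lemma Fop_mem_K (γ : Fin n → ℕ) (l : Fin n → ℤ) : Fop γ l ∈ Kspan n :=
  Submodule.subset_span ⟨(γ, l), rfl⟩

lemma mulLeft_mem_K {T : Module.End ℂ (Pn n)}
    (hT : ∀ γ l, T * Fop γ l ∈ Kspan n) {u} (hu : u ∈ Kspan n) : T * u ∈ Kspan n := by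
  have h : Kspan n ≤ Submodule.comap (LinearMap.mulLeft ℂ T) (Kspan n) := by
    rw [Kspan, Submodule.span_le]
    rintro _ ⟨p, rfl⟩
    exact hT p.1 p.2
  exact h hu

lemma eul_mul_mem_K (j : Fin n) {u} (hu : u ∈ Kspan n) : eulOp n j * u ∈ Kspan n :=
  mulLeft_mem_K (fun γ l => by rw [eul_mul_Fop]; exact Fop_mem_K _ _) hu

lemma X_mul_Fop_mem_K (j : Fin n) (γ : Fin n → ℕ) (l : Fin n → ℤ) :
    Xop n j * Fop γ l ∈ Kspan n := by
  suffices H : ∀ k (γ : Fin n → ℕ) (l : Fin n → ℤ), γ j = k → Xop n j * Fop γ l ∈ Kspan n from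
    H (γ j) γ l rfl
  intro k
  induction k with
  | zero =>
      intro γ l hγ
      by_cases hl : 0 ≤ l j
      · rw [Xop_mul_Fop_of_nonneg hγ hl]; exact Fop_mem_K _ _
      · rw [Xop_mul_Fop_of_neg hγ (by omega)]; exact Fop_mem_K _ _
  | succ k ih =>
      intro γ l hγ
      set γ' := Function.update γ j k with hγ'
      have hup : γ = Function.update γ' j (γ' j + 1) := by
        funext k'
        by_cases hk : k' = j
        · subst hk; simp only [hγ', Function.update_self]; omega
        · rw [Function.update_of_ne hk, hγ', Function.update_of_ne hk]
      have hX : Xop n j * Fop γ' l ∈ Kspan n := ih γ' l (Function.update_self _ _ _)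
      rw [hup, ← eul_mul_Fop γ' l j, ← mul_assoc, Xop_eul_comm j, sub_mul, mul_assoc]
      exact Submodule.sub_mem _ (eul_mul_mem_K j hX) hX

lemma D_mul_Fop_mem_K (j : Fin n) (γ : Fin n → ℕ) (l : Fin n → ℤ) :
    Dop n j * Fop γ l ∈ Kspan n := by
  suffices H : ∀ k (γ : Fin n → ℕ) (l : Fin n → ℤ), γ j = k → Dop n j * Fop γ l ∈ Kspan n from
    H (γ j) γ l rfl
  intro k
  induction k with
  | zero =>
      intro γ l hγ
      by_cases hl : 0 < l j
      · rw [Dop_mul_Fop_of_pos hγ hl]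
        exact Submodule.add_mem _ (Fop_mem_K _ _) (Fop_mem_K _ _)
      · rw [Dop_mul_Fop_of_nonpos hγ (by omega)]; exact Fop_mem_K _ _
  | succ k ih =>
      intro γ l hγ
      set γ' := Function.update γ j k with hγ'
      have hup : γ = Function.update γ' j (γ' j + 1) := by
        funext k'
        by_cases hk : k' = j
        · subst hk; simp only [hγ', Function.update_self]; omega
        · rw [Function.update_of_ne hk, hγ', Function.update_of_ne hk]
      have hD : Dop n j * Fop γ' l ∈ Kspan n := ih γ' l (Function.update_self _ _ _)
      rw [hup, ← eul_mul_Fop γ' l j, ← mul_assoc, Dop_eul_comm j, add_mul, mul_assoc]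
      exact Submodule.add_mem _ (eul_mul_mem_K j hD) hD

lemma Fop_zero_zero : Fop (fun _ => (0 : ℕ)) (fun _ => (0 : ℤ)) = (1 : Module.End ℂ (Pn n)) := by
  refine endo_ext fun d c => ?_
  rw [Module.End.one_apply, ← fe_coe d, Fop_monomial]
  have h1 : expShift (⇑d) (fun _ => (0 : ℤ)) = ⇑d := by funext k; simp [expShift]
  rw [h1, fe_coe]
  simp [coefOmega]

lemma weylD_le_K : (Subalgebra.toSubmodule (weylD n) : Submodule ℂ (Module.End ℂ (Pn n)))
    ≤ Kspan n := by
  intro x hx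
  rw [Subalgebra.mem_toSubmodule] at hx
  have hx' : x ∈ Algebra.adjoin ℂ (Set.range (Xop n) ∪ Set.range (Dop n)) := hx
  have key : ∀ u ∈ Kspan n, x * u ∈ Kspan n := by
    refine Algebra.adjoin_induction
      (p := fun y _ => ∀ u ∈ Kspan n, y * u ∈ Kspan n) ?_ ?_ ?_ ?_ hx'
    · intro y hy u hu
      rcases hy with ⟨j, rfl⟩ | ⟨j, rfl⟩
      · exact mulLeft_mem_K (fun γ l => X_mul_Fop_mem_K j γ l) hu
      · exact mulLeft_mem_K (fun γ l => D_mul_Fop_mem_K j γ l) hu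
    · intro r u hu
      rw [Algebra.algebraMap_eq_smul_one, smul_mul_assoc, one_mul]
      exact Submodule.smul_mem _ _ hu
    · intro y z hy hz hy' hz' u hu
      rw [add_mul]
      exact Submodule.add_mem _ (hy' u hu) (hz' u hu)
    · intro y z hy hz hy' hz' u hu
      rw [mul_assoc]
      exact hy' _ (hz' u hu)
  have h1 := key 1 (by rw [← Fop_zero_zero]; exact Fop_mem_K _ _)
  rwa [mul_one] at h1

lemma Fop_mem_weylD (γ : Fin n → ℕ) (l : Fin n → ℤ) : Fop γ l ∈ weylD n := by
  have hX : ∀ j : Fin n, Xop n j ∈ weylD n := fun j =>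
    Algebra.subset_adjoin (Set.mem_union_left _ ⟨j, rfl⟩)
  have hD : ∀ j : Fin n, Dop n j ∈ weylD n := fun j =>
    Algebra.subset_adjoin (Set.mem_union_right _ ⟨j, rfl⟩)
  refine mul_mem ?_ ?_
  · refine list_prod_mem ?_
    intro x hx
    rw [List.mem_ofFn] at hx
    obtain ⟨j, rfl⟩ := hx
    exact pow_mem (mul_mem (hX j) (hD j)) _
  · refine list_prod_mem ?_
    intro x hx
    rw [List.mem_ofFn] at hx
    obtain ⟨j, rfl⟩ := hx
    unfold vOp
    split_ifs
    · exact pow_mem (hX j) _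
    · exact pow_mem (hD j) _

lemma K_eq_weylD : Kspan n = Subalgebra.toSubmodule (weylD n) := by
  refine le_antisymm ?_ weylD_le_K
  rw [Kspan, Submodule.span_le]
  rintro _ ⟨p, rfl⟩
  rw [SetLike.mem_coe, Subalgebra.mem_toSubmodule]
  exact Fop_mem_weylD p.1 p.2


/-! ### Vanishing on the natural grid -/

lemma grid_zero : ∀ {m : ℕ} (f : MvPolynomial (Fin m) ℂ),
    (∀ x : Fin m → ℕ, eval (fun j => (x j : ℂ)) f = 0) → f = 0 := by
  intro m
  induction m with
  | zero =>
      intro f h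
      obtain ⟨r, rfl⟩ := MvPolynomial.C_surjective (Fin 0) f
      have h0 := h fun _ => 0
      rw [eval_C] at h0
      rw [h0, map_zero]
  | succ m ih =>
      intro f h
      apply (finSuccEquiv ℂ m).injective
      rw [map_zero]
      refine Polynomial.ext fun k => ?_
      rw [Polynomial.coeff_zero]
      have key : ∀ x : Fin m → ℕ,
          (Polynomial.map (eval fun j => ((x j : ℂ))) (finSuccEquiv ℂ m f)) = 0 := by
        intro x
        refine Polynomial.eq_zero_of_infinite_isRoot _ ?_
        refine Set.Infinite.mono ?_
          (Set.infinite_range_of_injective (f := fun t : ℕ => (t : ℂ)) Nat.cast_injective)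
        rintro _ ⟨t, rfl⟩
        show Polynomial.IsRoot _ _
        rw [Polynomial.IsRoot, ← eval_eq_eval_mv_eval']
        have hc : (Fin.cons (t : ℂ) (fun j => (x j : ℂ)) : Fin (m + 1) → ℂ)
            = fun j => (((Fin.cons t x : Fin (m+1) → ℕ) j : ℕ) : ℂ) := by
          funext j
          refine Fin.cases ?_ ?_ j <;> simp
        rw [hc]
        exact h _
      refine ih _ fun x => ?_
      rw [← Polynomial.coeff_map, key x, Polynomial.coeff_zero]

/-! ### Linear independence -/

set_option maxHeartbeats 1000000 in
lemma fop_linearIndependent :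
    LinearIndependent ℂ
      (fun p : (Fin n → ℕ) × (Fin n → ℤ) => eulPow n p.1 * omegaOp n p.2) := by
  rw [linearIndependent_iff']
  intro s g hsum p₀ hp₀
  set N : ℕ := (s.sup fun p => Finset.univ.sup fun j => (p.2 j).natAbs) + 1 with hN
  have hNb : ∀ p ∈ s, ∀ j, (p.2 j).natAbs < N := by
    intro p hp j
    have h1 : (p.2 j).natAbs ≤ Finset.univ.sup fun j => (p.2 j).natAbs :=
      Finset.le_sup (f := fun j => (p.2 j).natAbs) (Finset.mem_univ j)
    have h2 : (Finset.univ.sup fun j => (p.2 j).natAbs)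
        ≤ s.sup fun p => Finset.univ.sup fun j => (p.2 j).natAbs :=
      Finset.le_sup (f := fun p => Finset.univ.sup fun j => (p.2 j).natAbs) hp
    omega
  set M : Fin n → ℕ := fun j => (N + p₀.2 j).toNat with hM
  set s' : Finset ((Fin n → ℕ) × (Fin n → ℤ)) := s.filter (fun p => p.2 = p₀.2) with hs'
  -- Step 1 : the grid identity
  have key : ∀ b : Fin n → ℕ,
      ∑ p ∈ s', g p * ∏ j, ((b j : ℂ) + (M j : ℂ)) ^ (p.1 j) = 0 := by
    intro b
    set a : Fin n → ℕ := fun j => N + b j with ha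
    have hex : ∀ j, expShift a p₀.2 j = b j + M j := by
      intro j
      have hb2 := hNb p₀ hp₀ j
      unfold expShift
      simp only [ha, hM]
      omega
    have hco : coefOmega a p₀.2 ≠ 0 := by
      rw [coefOmega]
      refine Finset.prod_ne_zero_iff.mpr fun j _ => ?_
      rw [Nat.cast_ne_zero, Ne, Nat.descFactorial_eq_zero_iff_lt, not_lt]
      have hb2 := hNb p₀ hp₀ j
      simp only [ha]
      omega
    have h1 : (∑ p ∈ s, g p • (eulPow n p.1 * omegaOp n p.2)) (monomial (fe a) 1) = 0 := by
      rw [hsum, LinearMap.zero_apply]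
    rw [LinearMap.sum_apply] at h1
    have h2 : ∀ p ∈ s, (g p • (eulPow n p.1 * omegaOp n p.2)) (monomial (fe a) 1)
        = monomial (fe (expShift a p.2))
            (g p * ((∏ j, (expShift a p.2 j : ℂ) ^ p.1 j) * (coefOmega a p.2 * 1))) := by
      intro p hp
      rw [LinearMap.smul_apply]
      rw [show eulPow n p.1 * omegaOp n p.2 = Fop p.1 p.2 from rfl, Fop_monomial]
      rw [smul_monomial]
      rfl
    rw [Finset.sum_congr rfl h2] at h1
    have h3 := congrArg (coeff (fe (expShift a p₀.2))) h1
    rw [coeff_zero, coeff_sum] at h3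
    have h4 : ∀ p ∈ s,
        coeff (fe (expShift a p₀.2)) (monomial (fe (expShift a p.2))
            (g p * ((∏ j, (expShift a p.2 j : ℂ) ^ p.1 j) * (coefOmega a p.2 * 1))))
        = (if p.2 = p₀.2 then (g p * ∏ j, ((b j : ℂ) + (M j : ℂ)) ^ (p.1 j))
            * coefOmega a p₀.2 else 0) := by
      intro p hp
      rw [coeff_monomial]
      have hiff : fe (expShift a p.2) = fe (expShift a p₀.2) ↔ p.2 = p₀.2 := by
        constructor
        · intro h
          funext j
          have hj := congrArg (fun F => F j) h
          simp only [fe_apply] at hj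
          have hb1 := hNb p hp j
          have hb2 := hNb p₀ hp₀ j
          unfold expShift at hj
          simp only [ha] at hj
          omega
        · intro h; rw [h]
      by_cases hc : p.2 = p₀.2
      · rw [if_pos (hiff.mpr hc), if_pos hc, hc]
        have hprod : (∏ j, (expShift a p₀.2 j : ℂ) ^ p.1 j)
            = ∏ j, ((b j : ℂ) + (M j : ℂ)) ^ (p.1 j) := by
          refine Finset.prod_congr rfl fun j _ => ?_
          rw [hex j]
          push_cast
          ring
        rw [hprod]
        ring
      · rw [if_neg (fun h => hc (hiff.mp h)), if_neg hc]
    rw [Finset.sum_congr rfl h4, ← Finset.sum_filter, ← hs', ← Finset.sum_mul] at h3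
    rcases mul_eq_zero.mp h3 with h | h
    · exact h
    · exact absurd h hco
  -- Step 2 : build the polynomial and conclude it vanishes
  set q : MvPolynomial (Fin n) ℂ :=
    ∑ p ∈ s', C (g p) * ∏ j, (X j + C ((M j : ℂ))) ^ (p.1 j) with hq
  have hqz : q = 0 := by
    refine grid_zero _ fun x => ?_
    rw [hq, map_sum]
    have he : ∀ p ∈ s', eval (fun j => ((x j : ℂ)))
        (C (g p) * ∏ j, (X j + C ((M j : ℂ))) ^ (p.1 j))
        = g p * ∏ j, ((x j : ℂ) + (M j : ℂ)) ^ (p.1 j) := by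
      intro p hp
      rw [map_mul, eval_C, map_prod]
      congr 1
      refine Finset.prod_congr rfl fun j _ => ?_
      rw [map_pow, map_add, eval_X, eval_C]
    rw [Finset.sum_congr rfl he]
    exact key x
  -- Step 3 : substitute back and extract the coefficient
  have h6 : (aeval (fun j => (X j - C ((M j : ℂ)) : Pn n))) q = 0 := by
    rw [hqz, map_zero]
  rw [hq, map_sum] at h6
  have h7 : ∀ p ∈ s', (aeval (fun j => (X j - C ((M j : ℂ)) : Pn n)))
      (C (g p) * ∏ j, (X j + C ((M j : ℂ))) ^ (p.1 j))
      = monomial (fe p.1) (g p) := by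
    intro p hp
    rw [map_mul, map_prod]
    have hC : (aeval (fun j => (X j - C ((M j : ℂ)) : Pn n))) (C (g p)) = C (g p) := by
      rw [aeval_C]
      rfl
    have hfac : ∀ j : Fin n, (aeval (fun j => (X j - C ((M j : ℂ)) : Pn n)))
        ((X j + C ((M j : ℂ))) ^ (p.1 j)) = (X j : Pn n) ^ (p.1 j) := by
      intro j
      rw [map_pow, map_add, aeval_X, aeval_C]
      congr 1
      have : (algebraMap ℂ (Pn n)) ((M j : ℂ)) = C ((M j : ℂ)) := rfl
      rw [this, sub_add_cancel]
    rw [hC, Finset.prod_congr rfl fun j _ => hfac j]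
    have hXp : (∏ j, (X j : Pn n) ^ p.1 j) = monomial (fe p.1) 1 := by
      rw [← prod_X_pow_eq_monomial (s := fe p.1)]
      refine (Finset.prod_subset (Finset.subset_univ _) fun j _ hj => ?_).symm
      have h0 : p.1 j = 0 := Finsupp.notMem_support_iff.mp hj
      rw [h0, pow_zero]
    rw [hXp, C_mul_monomial, mul_one]
  rw [Finset.sum_congr rfl h7] at h6
  have h8 := congrArg (coeff (fe p₀.1)) h6
  rw [coeff_zero, coeff_sum] at h8
  have h9 : ∑ p ∈ s', coeff (fe p₀.1) (monomial (fe p.1) (g p)) = g p₀ := by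
    have hstep := Finset.sum_eq_single_of_mem (s := s')
      (f := fun p => coeff (fe p₀.1) (monomial (fe p.1) (g p)))
      p₀ (Finset.mem_filter.mpr ⟨hp₀, rfl⟩) ?_
    · rw [hstep]
      show coeff (fe p₀.1) (monomial (fe p₀.1) (g p₀)) = g p₀
      rw [coeff_monomial, if_pos rfl]
    · intro p hp hne
      show coeff (fe p₀.1) (monomial (fe p.1) (g p)) = 0
      rw [coeff_monomial, if_neg]
      intro h
      have h1 : p.1 = p₀.1 := Finsupp.equivFunOnFinite.symm.injective h
      have h2 : p.2 = p₀.2 := (Finset.mem_filter.mp hp).2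
      exact hne (Prod.ext h1 h2)
  rw [h9] at h8
  exact h8

end Stmt2Aux

/-- the family `{e^γ ∘ ω_l : γ ∈ ℕ^n, l ∈ ℤ^n}` is a ℂ-basis of the Weyl
algebra `D`: it is linearly independent and spans `D`. -/
theorem stmt2 (n : ℕ) (hn : 1 ≤ n) :
    LinearIndependent ℂ
      (fun p : (Fin n → ℕ) × (Fin n → ℤ) => eulPow n p.1 * omegaOp n p.2) ∧
    Submodule.span ℂ
        (Set.range fun p : (Fin n → ℕ) × (Fin n → ℤ) => eulPow n p.1 * omegaOp n p.2)
      = Subalgebra.toSubmodule (weylD n) := by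
  exact ⟨Stmt2Aux.fop_linearIndependent, Stmt2Aux.K_eq_weylD⟩

end
end

section
/- The algebra of invariant differential operators decomposes as D^𝔤 = ⨁_{l ∈ A^⊥ ∩ ℤ^n} M_l; that is, D^𝔤 is exactly the ℂ-linear span of the operators {e_1^{γ_1} ∘ ⋯ ∘ e_n^{γ_n} ∘ ω_l : γ ∈ ℕ^n, l ∈ A^⊥ ∩ ℤ^n}. -/
open MvPolynomial

noncomputable section

/-- The operator `τ_c = -∑_j c_j e_j` attached to a vector `c ∈ ℂ^n`. -/
def tauC (n : ℕ) (c : Fin n → ℂ) : Module.End ℂ (Pn n) :=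
  -∑ j, c j • eulOp n j

/-- The algebra `D^𝔤` of invariant differential operators: elements of `D` commuting
with each `τ_i = -∑_j a^i_j e_j`. -/
def invD (n m : ℕ) (a : Fin m → Fin n → ℂ) : Set (Module.End ℂ (Pn n)) :=
  {ω | ω ∈ weylD n ∧ ∀ i : Fin m, tauC n (a i) * ω = ω * tauC n (a i)}

variable {n : ℕ}

/-- shorthand for the monomial basis -/
def mono (α : Fin n →₀ ℕ) : Pn n := monomial α (1 : ℂ)

lemma endExt {f g : Module.End ℂ (Pn n)} (h : ∀ α, f (mono α) = g (mono α)) : f = g := by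
  apply LinearMap.ext
  intro p
  induction p using MvPolynomial.induction_on' with
  | monomial α c =>
      have : (monomial α) c = c • mono α := by simp [mono, smul_monomial]
      rw [this, map_smul, map_smul, h]
  | add p q hp hq => simp [map_add, hp, hq]

lemma X_apply (j : Fin n) (α : Fin n →₀ ℕ) :
    Xop n j (mono α) = mono (α + Finsupp.single j 1) := by
  simp [Xop, mono, LinearMap.mulLeft_apply, X, monomial_mul, add_comm]

lemma D_apply (j : Fin n) (α : Fin n →₀ ℕ) :
    Dop n j (mono α) = ((α j : ℂ)) • mono (α - Finsupp.single j 1) := by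
  simp [Dop, mono, pderiv_monomial, smul_monomial]

lemma eul_apply (j : Fin n) (α : Fin n →₀ ℕ) :
    eulOp n j (mono α) = ((α j : ℂ)) • mono α := by
  rw [eulOp, Module.End.mul_apply, D_apply, map_smul, X_apply]
  rcases Nat.eq_zero_or_pos (α j) with h | h
  · simp [h]
  · congr 2
    ext k
    rcases eq_or_ne k j with rfl | hk
    · simp only [Finsupp.add_apply, Finsupp.tsub_apply, Finsupp.single_eq_same]
      omega
    · simp [Finsupp.single_apply, Ne.symm hk]

/-- falling-factorial polynomial attached to `k ∈ ℤ`: `1` if `k ≥ 0`,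
`t(t-1)⋯(t+k+1)` if `k < 0`. -/
def descC (k : ℤ) (t : ℂ) : ℂ := ∏ i ∈ Finset.range (-k).toNat, (t - i)

lemma cast_descFactorial (a b : ℕ) :
    ((a.descFactorial b : ℕ) : ℂ) = ∏ i ∈ Finset.range b, ((a : ℂ) - i) := by
  induction b with
  | zero => simp
  | succ b ih =>
    rw [Finset.prod_range_succ, ← ih, Nat.descFactorial_succ]
    rcases lt_or_ge a b with h | h
    · rw [Nat.descFactorial_eq_zero_iff_lt.2 h]; simp
    · have : ((a - b : ℕ) : ℂ) = (a : ℂ) - b := by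
        push_cast [h]; ring
      push_cast
      rw [this]; ring

lemma descC_natCast (k : ℤ) (a : ℕ) :
    descC k (a : ℂ) = ((a.descFactorial (-k).toNat : ℕ) : ℂ) := by
  rw [cast_descFactorial, descC]

lemma descC_nonneg {k : ℤ} (h : 0 ≤ k) (t : ℂ) : descC k t = 1 := by
  rw [descC, Int.toNat_of_nonpos (by omega), Finset.range_zero, Finset.prod_empty]

lemma descC_natCast_ne_zero {k : ℤ} {a : ℕ} (h : descC k (a : ℂ) ≠ 0) :
    0 ≤ (a : ℤ) + k := by
  by_contra hc
  push_neg at hc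
  apply h
  rw [descC]
  refine Finset.prod_eq_zero (i := a) ?_ (by simp)
  simp only [Finset.mem_range]
  omega

lemma Xpow_apply (j : Fin n) (k : ℕ) (α : Fin n →₀ ℕ) :
    (Xop n j ^ k) (mono α) = mono (α + Finsupp.single j k) := by
  induction k with
  | zero => simp [mono]
  | succ k ih =>
    rw [pow_succ', Module.End.mul_apply, ih, X_apply]
    congr 1
    ext k'
    rcases eq_or_ne k' j with rfl | hk
    · simp only [Finsupp.add_apply, Finsupp.single_eq_same]
      omega
    · simp [Finsupp.single_apply, Ne.symm hk]

lemma Dpow_apply (j : Fin n) (k : ℕ) (α : Fin n →₀ ℕ) :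
    (Dop n j ^ k) (mono α)
      = ((α j).descFactorial k : ℂ) • mono (α - Finsupp.single j k) := by
  induction k with
  | zero => simp [mono]
  | succ k ih =>
    rw [pow_succ', Module.End.mul_apply, ih, map_smul, D_apply, smul_smul]
    have h1 : ((α - Finsupp.single j k : Fin n →₀ ℕ)) j = α j - k := by simp
    rw [h1]
    have h2 : ((α j).descFactorial k : ℂ) * ((α j - k : ℕ) : ℂ)
        = ((α j).descFactorial (k + 1) : ℂ) := by
      rw [Nat.descFactorial_succ, Nat.cast_mul, mul_comm]
    rw [h2]
    congr 2
    ext k'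
    rcases eq_or_ne k' j with rfl | hk
    · simp only [Finsupp.tsub_apply, Finsupp.single_eq_same]
      omega
    · simp [Finsupp.single_apply, Ne.symm hk]

lemma vOp_apply (l : Fin n → ℤ) (j : Fin n) (α : Fin n →₀ ℕ) :
    vOp n l j (mono α)
      = descC (l j) ((α j : ℂ)) • mono (Finsupp.update α j ((α j : ℤ) + l j).toNat) := by
  rw [vOp]
  split_ifs with h
  · rw [Xpow_apply, descC_nonneg h, one_smul]
    congr 1
    ext k'
    rcases eq_or_ne k' j with rfl | hk
    · simp only [Finsupp.add_apply, Finsupp.single_eq_same, Finsupp.coe_update,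
        Function.update_self]
      omega
    · simp [Finsupp.single_apply, Ne.symm hk, Finsupp.coe_update, Function.update_apply, hk]
  · rw [Dpow_apply, descC_natCast]
    congr 2
    ext k'
    rcases eq_or_ne k' j with rfl | hk
    · simp only [Finsupp.tsub_apply, Finsupp.single_eq_same, Finsupp.coe_update,
        Function.update_self]
      omega
    · simp [Finsupp.single_apply, Ne.symm hk, Finsupp.coe_update, Function.update_apply, hk]

/-- The shifted exponent `α + l` (with truncation). -/
def expShift (l : Fin n → ℤ) (α : Fin n →₀ ℕ) : Fin n →₀ ℕ :=
  Finsupp.equivFunOnFinite.symm fun j => ((α j : ℤ) + l j).toNat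

lemma expShift_apply (l : Fin n → ℤ) (α : Fin n →₀ ℕ) (j : Fin n) :
    expShift l α j = ((α j : ℤ) + l j).toNat := rfl

/-- The scalar `C_l(t)`. -/
def CC (l : Fin n → ℤ) (t : Fin n → ℂ) : ℂ := ∏ j, descC (l j) (t j)

/-- cast of an exponent vector to `ℂ^n`. -/
def natC (α : Fin n →₀ ℕ) : Fin n → ℂ := fun j => (α j : ℂ)

lemma prodvOp_apply (l : Fin n → ℤ) (s : List (Fin n)) (hs : s.Nodup) (α : Fin n →₀ ℕ) :
    ((s.map (vOp n l)).prod) (mono α)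
      = (s.map fun j => descC (l j) ((α j : ℂ))).prod •
        mono (Finsupp.equivFunOnFinite.symm
          fun j => if j ∈ s then ((α j : ℤ) + l j).toNat else α j) := by
  induction s with
  | nil =>
      simp only [List.map_nil, List.prod_nil, Module.End.one_apply, List.not_mem_nil,
        if_false, one_smul]
      rw [show (fun j => α j) = ⇑α from rfl, Finsupp.equivFunOnFinite_symm_coe]
  | cons j t ih =>
      obtain ⟨hj, ht⟩ := List.nodup_cons.mp hs
      rw [List.map_cons, List.prod_cons, Module.End.mul_apply, ih ht, map_smul, vOp_apply]
      have hβ : ((Finsupp.equivFunOnFinite.symm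
          fun k => if k ∈ t then ((α k : ℤ) + l k).toNat else α k : Fin n →₀ ℕ)) j
          = α j := by
        simp only [Finsupp.coe_equivFunOnFinite_symm, if_neg hj]
      rw [hβ, smul_smul, List.map_cons, List.prod_cons]
      have hexp : Finsupp.update ((Finsupp.equivFunOnFinite.symm
            fun k => if k ∈ t then ((α k : ℤ) + l k).toNat else α k : Fin n →₀ ℕ)) j
            (((α j : ℤ) + l j).toNat)
          = (Finsupp.equivFunOnFinite.symm
            fun k => if k ∈ j :: t then ((α k : ℤ) + l k).toNat else α k : Fin n →₀ ℕ) := by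
        apply Finsupp.ext
        intro k
        rcases eq_or_ne k j with rfl | hk
        · simp [Finsupp.coe_update]
        · simp only [Finsupp.coe_update, Function.update_apply, if_neg hk,
            Finsupp.coe_equivFunOnFinite_symm, List.mem_cons]
          by_cases hkt : k ∈ t
          · simp [hkt]
          · simp [hkt, hk]
      rw [hexp, mul_comm]

lemma omega_apply (l : Fin n → ℤ) (α : Fin n →₀ ℕ) :
    omegaOp n l (mono α) = CC l (natC α) • mono (expShift l α) := by
  rw [omegaOp, List.ofFn_eq_map, prodvOp_apply l _ (List.nodup_finRange n) α]
  have h1 : (List.map (fun j => descC (l j) ((α j : ℂ))) (List.finRange n)).prod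
      = CC l (natC α) := by
    rw [← List.ofFn_eq_map, List.prod_ofFn]; rfl
  rw [h1]
  have h2 : (Finsupp.equivFunOnFinite.symm
      fun j => if j ∈ List.finRange n then ((α j : ℤ) + l j).toNat else α j : Fin n →₀ ℕ)
      = expShift l α := by
    apply Finsupp.ext
    intro j
    simp [expShift_apply, List.mem_finRange, Finsupp.coe_equivFunOnFinite_symm]
  rw [h2]

lemma eulOpPow_apply (j : Fin n) (k : ℕ) (α : Fin n →₀ ℕ) :
    (eulOp n j ^ k) (mono α) = ((α j : ℂ)) ^ k • mono α := by
  induction k with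
  | zero => simp
  | succ k ih =>
      rw [pow_succ', Module.End.mul_apply, ih, map_smul, eul_apply, smul_smul]
      rw [mul_comm, ← pow_succ']

lemma prodDiag {ι : Type*} (L : List ι) (f : ι → Module.End ℂ (Pn n)) (c : ι → ℂ)
    (α : Fin n →₀ ℕ) (h : ∀ i ∈ L, f i (mono α) = c i • mono α) :
    ((L.map f).prod) (mono α) = ((L.map c).prod) • mono α := by
  induction L with
  | nil => simp
  | cons i t ih =>
      rw [List.map_cons, List.prod_cons, Module.End.mul_apply,
        ih (fun i hi => h i (List.mem_cons_of_mem _ hi)), map_smul,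
        h i (List.mem_cons_self (a := i) (l := t)), List.map_cons, List.prod_cons, smul_smul, mul_comm]

lemma eulPow_apply (γ : Fin n → ℕ) (α : Fin n →₀ ℕ) :
    eulPow n γ (mono α) = (∏ j, ((α j : ℂ)) ^ γ j) • mono α := by
  rw [eulPow, List.ofFn_eq_map,
    prodDiag (List.finRange n) (fun j => eulOp n j ^ γ j) (fun j => ((α j : ℂ)) ^ γ j) α
      (fun i _ => eulOpPow_apply i (γ i) α)]
  congr 1

/-- coordinates of the shifted exponent, when the scalar is nonzero -/
lemma CC_ne_zero_coord {l : Fin n → ℤ} {α : Fin n →₀ ℕ} (h : CC l (natC α) ≠ 0)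
    (j : Fin n) : ((expShift l α j : ℕ) : ℤ) = (α j : ℤ) + l j := by
  have hj : descC (l j) ((α j : ℂ)) ≠ 0 := by
    intro h0
    exact h (Finset.prod_eq_zero (Finset.mem_univ j) h0)
  have := descC_natCast_ne_zero hj
  rw [expShift_apply]
  omega

lemma CC_ne_zero_coordC {l : Fin n → ℤ} {α : Fin n →₀ ℕ} (h : CC l (natC α) ≠ 0)
    (j : Fin n) : ((expShift l α j : ℕ) : ℂ) = (α j : ℂ) + (l j : ℂ) := by
  have h2 := congrArg (fun z : ℤ => (z : ℂ)) (CC_ne_zero_coord h j)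
  push_cast at h2
  exact h2

/-- Master formula: action of `e^γ ∘ ω_l` on a monomial. -/
lemma master (γ : Fin n → ℕ) (l : Fin n → ℤ) (α : Fin n →₀ ℕ) :
    (eulPow n γ * omegaOp n l) (mono α)
      = (CC l (natC α) * ∏ j, ((α j : ℂ) + l j) ^ γ j) • mono (expShift l α) := by
  rw [Module.End.mul_apply, omega_apply, map_smul, eulPow_apply, smul_smul]
  rcases eq_or_ne (CC l (natC α)) 0 with h | h
  · rw [h]; simp
  · have hprod : (∏ j, (((expShift l α) j : ℕ) : ℂ) ^ γ j)
        = ∏ j, ((α j : ℂ) + (l j : ℂ)) ^ γ j :=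
      Finset.prod_congr rfl fun j _ => by rw [CC_ne_zero_coordC h j]
    rw [hprod, mul_comm]

/-- monomial functions on `ℂ^n` -/
def polyFun (γ : Fin n → ℕ) : (Fin n → ℂ) → ℂ := fun t => ∏ j, t j ^ γ j

/-- span of the monomial functions (= polynomial functions) -/
def spanMon (n : ℕ) : Submodule ℂ ((Fin n → ℂ) → ℂ) :=
  Submodule.span ℂ (Set.range (polyFun (n := n)))

/-- the monomial basis of `P` -/
def Bm (n : ℕ) : Module.Basis (Fin n →₀ ℕ) ℂ (Pn n) := MvPolynomial.basisMonomials (Fin n) ℂ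

lemma Bm_apply (α : Fin n →₀ ℕ) : Bm n α = mono α := by
  rw [Bm, mono]
  exact congrFun (coe_basisMonomials (Fin n) ℂ) α

/-- the family `α ↦ C_l(α) q(α+l) x^{α+l}`, linear in `q`. -/
def famMap (l : Fin n → ℤ) : ((Fin n → ℂ) → ℂ) →ₗ[ℂ] ((Fin n →₀ ℕ) → Pn n) where
  toFun q := fun α => (CC l (natC α) * q fun j => (α j : ℂ) + (l j : ℂ)) • mono (expShift l α)
  map_add' q r := by funext α; simp [mul_add, add_smul]
  map_smul' c q := by funext α; simp [smul_smul, mul_comm, mul_left_comm]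

/-- The parametrization of `M_l` by polynomial functions. -/
def Psi (l : Fin n → ℤ) : ((Fin n → ℂ) → ℂ) →ₗ[ℂ] Module.End ℂ (Pn n) :=
  (((Bm n).constr ℂ).toLinearMap).comp (famMap l)

lemma Psi_apply_mono (l : Fin n → ℤ) (q : (Fin n → ℂ) → ℂ) (α : Fin n →₀ ℕ) :
    Psi l q (mono α)
      = (CC l (natC α) * q fun j => (α j : ℂ) + (l j : ℂ)) • mono (expShift l α) := by
  rw [Psi, LinearMap.comp_apply, ← Bm_apply]
  exact (Bm n).constr_basis ℂ _ α

lemma Psi_polyFun (l : Fin n → ℤ) (γ : Fin n → ℕ) :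
    Psi l (polyFun γ) = eulPow n γ * omegaOp n l := by
  apply endExt
  intro α
  rw [Psi_apply_mono, master]
  rfl

/-- The module `M_l`. -/
def Ml (l : Fin n → ℤ) : Submodule ℂ (Module.End ℂ (Pn n)) :=
  Submodule.span ℂ {T | ∃ γ : Fin n → ℕ, T = eulPow n γ * omegaOp n l}

lemma Psi_mem_Ml (l : Fin n → ℤ) {q : (Fin n → ℂ) → ℂ} (hq : q ∈ spanMon n) :
    Psi l q ∈ Ml l := by
  induction hq using Submodule.span_induction with
  | mem x hx =>
      obtain ⟨γ, rfl⟩ := hx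
      rw [Psi_polyFun]
      exact Submodule.subset_span ⟨γ, rfl⟩
  | zero => rw [map_zero]; exact zero_mem _
  | add x y _ _ hx hy => rw [map_add]; exact add_mem hx hy
  | smul c x _ hx => rw [map_smul]; exact Submodule.smul_mem _ _ hx

lemma descC_zero_of_neg {k : ℤ} {a : ℕ} (h : (a : ℤ) + k < 0) : descC k ((a : ℕ) : ℂ) = 0 := by
  by_contra hc
  have := descC_natCast_ne_zero hc
  omega

/-- The "weight space" `W_l`: operators homogeneous of multidegree `l`. -/
def Wl (l : Fin n → ℤ) : Submodule ℂ (Module.End ℂ (Pn n)) where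
  carrier := {T | ∀ α, T (mono α) ∈ Submodule.span ℂ {mono (expShift l α)} ∧
      ((∃ j, (α j : ℤ) + l j < 0) → T (mono α) = 0)}
  zero_mem' := fun α => by simp
  add_mem' := by
    intro f g hf hg α
    refine ⟨add_mem ((hf α).1) ((hg α).1), fun h => ?_⟩
    simp [LinearMap.add_apply, (hf α).2 h, (hg α).2 h]
  smul_mem' := by
    intro c f hf α
    refine ⟨Submodule.smul_mem _ c ((hf α).1), fun h => ?_⟩
    simp [LinearMap.smul_apply, (hf α).2 h]

lemma CC_zero_of_neg {l : Fin n → ℤ} {α : Fin n →₀ ℕ} (h : ∃ j, (α j : ℤ) + l j < 0) :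
    CC l (natC α) = 0 := by
  obtain ⟨j, hj⟩ := h
  exact Finset.prod_eq_zero (Finset.mem_univ j) (descC_zero_of_neg hj)

lemma Ml_le_Wl (l : Fin n → ℤ) : Ml l ≤ Wl l := by
  rw [Ml, Submodule.span_le]
  rintro T ⟨γ, rfl⟩
  intro α
  constructor
  · rw [master]
    exact Submodule.smul_mem _ _ (Submodule.mem_span_singleton_self _)
  · intro h
    rw [master, CC_zero_of_neg h, zero_mul, zero_smul]

lemma expShift_inj {l l' : Fin n → ℤ} {α : Fin n →₀ ℕ}
    (hl : ∀ j, 0 ≤ (α j : ℤ) + l j) (hl' : ∀ j, 0 ≤ (α j : ℤ) + l' j)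
    (h : expShift l α = expShift l' α) : l = l' := by
  funext j
  have := congrArg (fun β : Fin n →₀ ℕ => (β j : ℤ)) h
  simp only [expShift_apply] at this
  rw [Int.toNat_of_nonneg (hl j), Int.toNat_of_nonneg (hl' j)] at this
  omega

/-- Key directness lemma: homogeneous pieces of `0` vanish. -/
lemma direct (F : Finset (Fin n → ℤ)) (u : (Fin n → ℤ) → Module.End ℂ (Pn n))
    (hu : ∀ l ∈ F, u l ∈ Wl l) (hsum : ∑ l ∈ F, u l = 0) :
    ∀ l ∈ F, u l = 0 := by
  intro l0 hl0
  apply endExt (g := 0)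
  intro α
  rw [LinearMap.zero_apply]
  by_cases hneg : ∃ j, (α j : ℤ) + l0 j < 0
  · exact ((hu l0 hl0) α).2 hneg
  · push_neg at hneg
    obtain ⟨c, hc⟩ := Submodule.mem_span_singleton.mp ((hu l0 hl0 α).1)
    have h0 : ∑ l ∈ F, (u l) (mono α) = 0 := by
      have := congrArg (fun T : Module.End ℂ (Pn n) => T (mono α)) hsum
      simpa using this
    have hco := congrArg (fun p : Pn n => MvPolynomial.coeff (expShift l0 α) p) h0
    simp only [MvPolynomial.coeff_sum, MvPolynomial.coeff_zero] at hco
    have hterm : ∀ l ∈ F, l ≠ l0 →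
        MvPolynomial.coeff (expShift l0 α) ((u l) (mono α)) = 0 := by
      intro l hl hne
      by_cases hneg' : ∃ j, (α j : ℤ) + l j < 0
      · rw [(hu l hl α).2 hneg']
        simp
      · push_neg at hneg'
        obtain ⟨d, hd⟩ := Submodule.mem_span_singleton.mp ((hu l hl α).1)
        rw [← hd, MvPolynomial.coeff_smul, mono, MvPolynomial.coeff_monomial, if_neg]
        · simp
        · intro heq
          exact hne (expShift_inj hneg' hneg heq)
    rw [Finset.sum_eq_single_of_mem l0 hl0 (fun l hl hne => hterm l hl hne)] at hco
    rw [← hc, MvPolynomial.coeff_smul, mono, MvPolynomial.coeff_monomial, if_pos rfl] at hco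
    have hc0 : c = 0 := by simpa using hco
    rw [← hc, hc0, zero_smul]

lemma polyFun_mem (γ : Fin n → ℕ) : polyFun γ ∈ spanMon n :=
  Submodule.subset_span ⟨γ, rfl⟩

lemma one_mem_spanMon : (fun _ : Fin n → ℂ => (1 : ℂ)) ∈ spanMon n := by
  have : (fun _ : Fin n → ℂ => (1 : ℂ)) = polyFun (fun _ => 0) := by
    funext t; simp [polyFun]
  rw [this]; exact polyFun_mem _

lemma polyFun_mul (γ δ : Fin n → ℕ) :
    polyFun γ * polyFun δ = polyFun (γ + δ) := by
  funext t
  rw [Pi.mul_apply, polyFun, polyFun, polyFun, ← Finset.prod_mul_distrib]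
  exact Finset.prod_congr rfl fun j _ => by rw [Pi.add_apply, pow_add]

lemma mul_mem_spanMon {p q : (Fin n → ℂ) → ℂ} (hp : p ∈ spanMon n) (hq : q ∈ spanMon n) :
    p * q ∈ spanMon n := by
  have h := Submodule.mul_mem_mul hp hq
  rw [spanMon, Submodule.span_mul_span] at h
  refine Submodule.span_le.mpr ?_ h
  rw [Set.mul_subset_iff]
  rintro _ ⟨γ, rfl⟩ _ ⟨δ, rfl⟩
  rw [polyFun_mul]
  exact polyFun_mem _

lemma mul_mem_spanMon' {p q : (Fin n → ℂ) → ℂ} (hp : p ∈ spanMon n) (hq : q ∈ spanMon n) :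
    (fun t => p t * q t) ∈ spanMon n := mul_mem_spanMon hp hq

lemma coord_mem_spanMon (j : Fin n) : (fun t : Fin n → ℂ => t j) ∈ spanMon n := by
  have : (fun t : Fin n → ℂ => t j) = polyFun (Pi.single j 1) := by
    funext t
    rw [polyFun, Finset.prod_eq_single j (fun k _ hk => by simp [Pi.single_apply, hk])
      (fun h => absurd (Finset.mem_univ j) h)]
    simp
  rw [this]; exact polyFun_mem _

lemma linear_mem_spanMon (j : Fin n) (c : ℂ) :
    (fun t : Fin n → ℂ => t j - c) ∈ spanMon n := by
  have : (fun t : Fin n → ℂ => t j - c)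
      = (fun t : Fin n → ℂ => t j) - c • fun _ : Fin n → ℂ => (1 : ℂ) := by
    funext t; simp
  rw [this]
  exact sub_mem (coord_mem_spanMon j) (Submodule.smul_mem _ _ one_mem_spanMon)

lemma linpow_mem_spanMon (j : Fin n) (c : ℂ) (k : ℕ) :
    (fun t : Fin n → ℂ => (t j - c) ^ k) ∈ spanMon n := by
  induction k with
  | zero => simpa using one_mem_spanMon
  | succ k ih =>
      have : (fun t : Fin n → ℂ => (t j - c) ^ (k + 1))
          = fun t => (t j - c) ^ k * (t j - c) := by
        funext t; rw [pow_succ]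
      rw [this]; exact mul_mem_spanMon ih (linear_mem_spanMon j c)

lemma multiset_prod_mem_spanMon (j : Fin n) (M : Multiset ℤ) (b : ℤ) :
    (fun t : Fin n → ℂ => (M.map fun c => t j - ((b + c : ℤ) : ℂ)).prod) ∈ spanMon n := by
  induction M using Multiset.induction with
  | empty => simpa using one_mem_spanMon
  | cons c M ih =>
      have : (fun t : Fin n → ℂ => ((c ::ₘ M).map fun c => t j - ((b + c : ℤ) : ℂ)).prod)
          = fun t => (t j - ((b + c : ℤ) : ℂ)) *
              ((M.map fun c => t j - ((b + c : ℤ) : ℂ)).prod) := by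
        funext t; rw [Multiset.map_cons, Multiset.prod_cons]
      rw [this]
      exact mul_mem_spanMon (linear_mem_spanMon j _) ih

/-- the multiset of roots of `descC k` -/
def Rset (k : ℤ) : Multiset ℤ := (Multiset.range (-k).toNat).map (Nat.cast : ℕ → ℤ)

lemma Rset_nodup (k : ℤ) : (Rset k).Nodup :=
  Multiset.Nodup.map Nat.cast_injective (Multiset.nodup_range _)

lemma mem_Rset {k c : ℤ} : c ∈ Rset k ↔ 0 ≤ c ∧ c < -k := by
  constructor
  · rintro hc
    obtain ⟨i, hi, rfl⟩ := Multiset.mem_map.mp hc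
    rw [Multiset.mem_range] at hi
    omega
  · rintro ⟨h0, h1⟩
    exact Multiset.mem_map.mpr ⟨c.toNat, Multiset.mem_range.mpr (by omega), by omega⟩

lemma descC_eq_Rset (k : ℤ) (t : ℂ) :
    descC k t = ((Rset k).map (fun c : ℤ => t - (c : ℂ))).prod := by
  rw [descC, Rset, Multiset.map_map, Finset.prod_eq_multiset_prod]
  congr 1

/-- the collision multiset -/
def CollM (k l : ℤ) : Multiset ℤ := (Rset k + (Rset l).map (fun c : ℤ => c - k)) - Rset (k + l)

lemma Rset_le (k l : ℤ) : Rset (k + l) ≤ Rset k + (Rset l).map (fun c : ℤ => c - k) := by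
  rw [Multiset.le_iff_count]
  intro c
  by_cases hc : c ∈ Rset (k + l)
  · rw [Multiset.count_eq_one_of_mem (Rset_nodup _) hc]
    rw [Nat.one_le_iff_ne_zero, Ne, Multiset.count_eq_zero]
    intro hmem
    rw [mem_Rset] at hc
    rcases lt_or_ge c (-k) with h | h
    · exact hmem (Multiset.mem_add.mpr (Or.inl (mem_Rset.mpr ⟨hc.1, h⟩)))
    · refine hmem (Multiset.mem_add.mpr (Or.inr ?_))
      exact Multiset.mem_map.mpr ⟨c + k, mem_Rset.mpr ⟨by omega, by omega⟩, by ring⟩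
  · rw [Multiset.count_eq_zero_of_notMem hc]
    exact Nat.zero_le _

lemma descC_shift (k l : ℤ) (t : ℂ) :
    descC k t * descC l (t + k) =
      descC (k + l) t * ((CollM k l).map (fun c : ℤ => t - (c : ℂ))).prod := by
  have hsplit : Rset k + (Rset l).map (fun c : ℤ => c - k) = CollM k l + Rset (k + l) := by
    rw [CollM, tsub_add_cancel_of_le (Rset_le k l)]
  have h1 : descC k t * descC l (t + k)
      = ((Rset k + (Rset l).map (fun c : ℤ => c - k)).map (fun c : ℤ => t - (c : ℂ))).prod := by
    rw [Multiset.map_add, Multiset.prod_add, ← descC_eq_Rset]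
    congr 1
    rw [descC_eq_Rset, Multiset.map_map]
    congr 1
    apply Multiset.map_congr rfl
    intro c _
    simp only [Function.comp_apply]
    push_cast
    ring
  rw [h1, hsplit, Multiset.map_add, Multiset.prod_add, mul_comm, ← descC_eq_Rset]

def qFun (γ δ : Fin n → ℕ) (l k : Fin n → ℤ) : (Fin n → ℂ) → ℂ :=
  fun s => (∏ j, ((CollM (k j) (l j)).map fun c : ℤ => s j - ((k j + l j + c : ℤ) : ℂ)).prod)
    * (∏ j, (s j - (l j : ℂ)) ^ δ j) * ∏ j, (s j) ^ γ j

lemma prod_mem_spanMon (f : Fin n → ((Fin n → ℂ) → ℂ)) (h : ∀ j, f j ∈ spanMon n) :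
    (fun s => ∏ j, f j s) ∈ spanMon n := by
  have : (fun s => ∏ j, f j s) = ∏ j, f j := by
    funext s
    rw [Finset.prod_apply]
  rw [this]
  exact Finset.prod_induction f (· ∈ spanMon n) (fun a b ha hb => mul_mem_spanMon ha hb)
    one_mem_spanMon (fun j _ => h j)

lemma qFun_mem (γ δ : Fin n → ℕ) (l k : Fin n → ℤ) : qFun γ δ l k ∈ spanMon n := by
  refine mul_mem_spanMon (mul_mem_spanMon ?_ ?_) ?_
  · exact prod_mem_spanMon _ fun j => multiset_prod_mem_spanMon j _ _
  · exact prod_mem_spanMon _ fun j => linpow_mem_spanMon j _ _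
  · refine prod_mem_spanMon _ fun j => ?_
    have : (fun s : Fin n → ℂ => (s j) ^ γ j) = fun s : Fin n → ℂ => (s j - 0) ^ γ j := by
      funext s; rw [sub_zero]
    rw [this]
    exact linpow_mem_spanMon j _ _

lemma scalar_id (γ δ : Fin n → ℕ) (l k : Fin n → ℤ) (α : Fin n →₀ ℕ) :
    CC (fun j => k j + l j) (natC α)
        * qFun γ δ l k (fun j => (α j : ℂ) + ((k j : ℂ) + (l j : ℂ)))
      = (CC k (natC α) * ∏ j, ((α j : ℂ) + (k j : ℂ)) ^ δ j)
        * (CC l (fun j => (α j : ℂ) + (k j : ℂ))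
            * ∏ j, ((α j : ℂ) + (k j : ℂ) + (l j : ℂ)) ^ γ j) := by
  have hq : qFun γ δ l k (fun j => (α j : ℂ) + ((k j : ℂ) + (l j : ℂ)))
      = (∏ j, ((CollM (k j) (l j)).map fun c : ℤ => (α j : ℂ) - (c : ℂ)).prod)
        * (∏ j, ((α j : ℂ) + (k j : ℂ)) ^ δ j)
        * ∏ j, ((α j : ℂ) + (k j : ℂ) + (l j : ℂ)) ^ γ j := by
    rw [qFun]
    congr 1
    · congr 1
      · refine Finset.prod_congr rfl fun j _ => ?_
        congr 1
        apply Multiset.map_congr rfl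
        intro c _
        push_cast
        ring
      · exact Finset.prod_congr rfl fun j _ => by push_cast; ring_nf
    · exact Finset.prod_congr rfl fun j _ => by push_cast; ring_nf
  have hcomb : (∏ j, descC (k j + l j) ((α j : ℂ)))
        * (∏ j, ((CollM (k j) (l j)).map fun c : ℤ => (α j : ℂ) - (c : ℂ)).prod)
      = (∏ j, descC (k j) ((α j : ℂ))) * ∏ j, descC (l j) ((α j : ℂ) + (k j : ℂ)) := by
    rw [← Finset.prod_mul_distrib, ← Finset.prod_mul_distrib]
    exact Finset.prod_congr rfl fun j _ => (descC_shift (k j) (l j) ((α j : ℂ))).symm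
  have hCC1 : CC (fun j => k j + l j) (natC α) = ∏ j, descC (k j + l j) ((α j : ℂ)) := rfl
  have hCC2 : CC k (natC α) = ∏ j, descC (k j) ((α j : ℂ)) := rfl
  have hCC3 : CC l (fun j => (α j : ℂ) + (k j : ℂ))
      = ∏ j, descC (l j) ((α j : ℂ) + (k j : ℂ)) := rfl
  rw [hq, hCC1, hCC2, hCC3]
  linear_combination ((∏ j, ((α j : ℂ) + (k j : ℂ)) ^ δ j)
    * ∏ j, ((α j : ℂ) + (k j : ℂ) + (l j : ℂ)) ^ γ j) * hcomb

theorem gen_mul_gen (γ δ : Fin n → ℕ) (l k : Fin n → ℤ) :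
    (eulPow n γ * omegaOp n l) * (eulPow n δ * omegaOp n k)
      = Psi (fun j => k j + l j) (qFun γ δ l k) := by
  apply endExt
  intro α
  rw [Module.End.mul_apply, master, map_smul, master, smul_smul, Psi_apply_mono]
  simp only [Int.cast_add]
  rcases eq_or_ne (CC k (natC α)) 0 with h0 | h0
  · rw [scalar_id γ δ l k α, h0]
    simp
  · have hcoord : ∀ j, ((expShift k α j : ℕ) : ℂ) = (α j : ℂ) + (k j : ℂ) :=
      CC_ne_zero_coordC h0
    have hnatC : natC (expShift k α) = fun j => (α j : ℂ) + (k j : ℂ) := funext hcoord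
    have hP2 : (∏ j, (((expShift k α) j : ℂ) + (l j : ℂ)) ^ γ j)
        = ∏ j, ((α j : ℂ) + (k j : ℂ) + (l j : ℂ)) ^ γ j :=
      Finset.prod_congr rfl fun j _ => by rw [hcoord j]
    rw [hnatC, hP2, scalar_id γ δ l k α]
    rcases eq_or_ne (CC l (fun j => (α j : ℂ) + (k j : ℂ))) 0 with h1 | h1
    · rw [h1]
      simp
    · congr 1
      have hke : ∀ j, ((expShift k α j : ℕ) : ℤ) = (α j : ℤ) + k j := CC_ne_zero_coord h0
      have hle : ∀ j, 0 ≤ ((expShift k α j : ℕ) : ℤ) + l j := by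
        intro j
        apply descC_natCast_ne_zero (a := expShift k α j) (k := l j)
        intro h
        apply h1
        refine Finset.prod_eq_zero (Finset.mem_univ j) ?_
        show descC (l j) ((α j : ℂ) + (k j : ℂ)) = 0
        rw [← hcoord j]
        exact h
      apply congrArg
      apply Finsupp.ext
      intro j
      simp only [expShift_apply]
      have h1j := hke j
      have h2j := hle j
      omega

def Ttot (n : ℕ) : Submodule ℂ (Module.End ℂ (Pn n)) :=
  Submodule.span ℂ {T | ∃ (γ : Fin n → ℕ) (l : Fin n → ℤ), T = eulPow n γ * omegaOp n l}

lemma Ml_le_Ttot (l : Fin n → ℤ) : Ml l ≤ Ttot n :=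
  Submodule.span_mono fun T hT => by obtain ⟨γ, h⟩ := hT; exact ⟨γ, l, h⟩

lemma Ttot_mul_mem : ∀ x ∈ Ttot n, ∀ y ∈ Ttot n, x * y ∈ Ttot n := by
  intro x hx
  induction hx using Submodule.span_induction with
  | mem x hx =>
      intro y hy
      induction hy using Submodule.span_induction with
      | mem y hy =>
          obtain ⟨γ, l, rfl⟩ := hx
          obtain ⟨δ, k, rfl⟩ := hy
          rw [gen_mul_gen]
          exact Ml_le_Ttot _ (Psi_mem_Ml _ (qFun_mem γ δ l k))
      | zero => rw [mul_zero]; exact zero_mem _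
      | add y z _ _ hy hz => rw [mul_add]; exact add_mem hy hz
      | smul c y _ hy => rw [mul_smul_comm]; exact Submodule.smul_mem _ _ hy
  | zero => intro y _; rw [zero_mul]; exact zero_mem _
  | add x y _ _ hx hy => intro z hz; rw [add_mul]; exact add_mem (hx z hz) (hy z hz)
  | smul c x _ hx => intro z hz; rw [smul_mul_assoc]; exact Submodule.smul_mem _ _ (hx z hz)

lemma one_eq_gen : (1 : Module.End ℂ (Pn n)) = eulPow n 0 * omegaOp n 0 := by
  apply endExt
  intro α
  rw [master]
  have h1 : CC (0 : Fin n → ℤ) (natC α) = 1 :=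
    Finset.prod_eq_one fun j _ => descC_nonneg le_rfl _
  have h2 : expShift (0 : Fin n → ℤ) α = α := by
    apply Finsupp.ext
    intro j
    simp [expShift_apply]
  rw [h1, h2]
  simp

lemma one_mem_Ttot : (1 : Module.End ℂ (Pn n)) ∈ Ttot n := by
  rw [one_eq_gen]
  exact Submodule.subset_span ⟨0, 0, rfl⟩

lemma Xop_eq (j : Fin n) :
    Xop n j = eulPow n 0 * omegaOp n (fun k => if k = j then 1 else 0) := by
  apply endExt
  intro α
  rw [master, X_apply]
  have h1 : CC (fun k => if k = j then (1 : ℤ) else 0) (natC α) = 1 :=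
    Finset.prod_eq_one fun k _ => descC_nonneg (by dsimp only; split <;> omega) _
  have h2 : expShift (fun k => if k = j then (1 : ℤ) else 0) α = α + Finsupp.single j 1 := by
    apply Finsupp.ext
    intro k
    rw [expShift_apply]
    rcases eq_or_ne k j with rfl | hk
    · rw [if_pos rfl]
      simp only [Finsupp.add_apply, Finsupp.single_eq_same]
      omega
    · rw [if_neg hk]
      simp only [Finsupp.add_apply, Finsupp.single_apply, if_neg (Ne.symm hk), add_zero]
      omega
  rw [h1, h2]
  simp

lemma Dop_eq (j : Fin n) :
    Dop n j = eulPow n 0 * omegaOp n (fun k => if k = j then -1 else 0) := by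
  apply endExt
  intro α
  rw [master, D_apply]
  have h1 : CC (fun k => if k = j then (-1 : ℤ) else 0) (natC α) = (α j : ℂ) := by
    rw [CC]
    rw [Finset.prod_eq_single j
      (fun k _ hk => by rw [if_neg hk]; exact descC_nonneg le_rfl _)
      (fun h => absurd (Finset.mem_univ j) h)]
    rw [if_pos rfl]
    simp [descC, natC]
  have h2 : expShift (fun k => if k = j then (-1 : ℤ) else 0) α
      = α - Finsupp.single j 1 := by
    apply Finsupp.ext
    intro k
    rw [expShift_apply]
    rcases eq_or_ne k j with rfl | hk
    · rw [if_pos rfl]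
      simp only [Finsupp.tsub_apply, Finsupp.single_eq_same]
      omega
    · rw [if_neg hk]
      simp only [Finsupp.tsub_apply, Finsupp.single_apply, if_neg (Ne.symm hk)]
      omega
  rw [h1, h2]
  simp

lemma weylD_le_Ttot : ∀ x ∈ weylD n, x ∈ Ttot n := by
  intro x hx
  induction hx using Algebra.adjoin_induction with
  | mem y hy =>
      rcases hy with ⟨j, rfl⟩ | ⟨j, rfl⟩
      · exact Submodule.subset_span ⟨0, _, Xop_eq j⟩
      · exact Submodule.subset_span ⟨0, _, Dop_eq j⟩
  | algebraMap r =>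
      rw [Algebra.algebraMap_eq_smul_one]
      exact Submodule.smul_mem _ _ one_mem_Ttot
  | add x y _ _ hx hy => exact add_mem hx hy
  | mul x y _ _ hx hy => exact Ttot_mul_mem _ hx _ hy

lemma gen_mem_weylD (γ : Fin n → ℕ) (l : Fin n → ℤ) :
    eulPow n γ * omegaOp n l ∈ weylD n := by
  have hX : ∀ j, Xop n j ∈ weylD n := fun j => Algebra.subset_adjoin (Or.inl ⟨j, rfl⟩)
  have hD : ∀ j, Dop n j ∈ weylD n := fun j => Algebra.subset_adjoin (Or.inr ⟨j, rfl⟩)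
  refine mul_mem ?_ ?_
  · refine Subalgebra.list_prod_mem _ ?_
    intro x hx
    obtain ⟨j, rfl⟩ := Set.mem_range.mp ((List.mem_ofFn' _ _).mp hx)
    exact pow_mem (mul_mem (hX j) (hD j)) _
  · refine Subalgebra.list_prod_mem _ ?_
    intro x hx
    obtain ⟨j, rfl⟩ := Set.mem_range.mp ((List.mem_ofFn' _ _).mp hx)
    rw [vOp]
    split
    · exact pow_mem (hX j) _
    · exact pow_mem (hD j) _

lemma tau_apply (c : Fin n → ℂ) (α : Fin n →₀ ℕ) :
    tauC n c (mono α) = (-(∑ j, c j * (α j : ℂ))) • mono α := by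
  rw [tauC, LinearMap.neg_apply, LinearMap.sum_apply, neg_smul]
  congr 1
  rw [Finset.sum_smul]
  exact Finset.sum_congr rfl fun j _ => by
    rw [LinearMap.smul_apply, eul_apply, smul_smul]

lemma tau_comm_gen (c : Fin n → ℂ) (γ : Fin n → ℕ) (l : Fin n → ℤ) :
    tauC n c * (eulPow n γ * omegaOp n l) - (eulPow n γ * omegaOp n l) * tauC n c
      = (-(∑ j, (l j : ℂ) * c j)) • (eulPow n γ * omegaOp n l) := by
  apply endExt
  intro α
  rw [LinearMap.sub_apply, LinearMap.smul_apply, Module.End.mul_apply, master, map_smul,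
    tau_apply, Module.End.mul_apply, tau_apply, map_smul, master, smul_smul, smul_smul,
    smul_smul, ← sub_smul]
  congr 1
  rcases eq_or_ne (CC l (natC α)) 0 with h0 | h0
  · rw [h0]
    ring
  · have hc : ∀ j, ((expShift l α j : ℕ) : ℂ) = (α j : ℂ) + (l j : ℂ) := CC_ne_zero_coordC h0
    have hs : (∑ j, c j * ((expShift l α j : ℕ) : ℂ))
        = (∑ j, c j * (α j : ℂ)) + ∑ j, c j * (l j : ℂ) := by
      rw [← Finset.sum_add_distrib]
      exact Finset.sum_congr rfl fun j _ => by rw [hc j]; ring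
    rw [hs]
    have : (∑ j, (l j : ℂ) * c j) = ∑ j, c j * (l j : ℂ) :=
      Finset.sum_congr rfl fun j _ => mul_comm _ _
    rw [this]
    ring


/-- the commutator with `τ_c`, as a linear map -/
def commMapL (c : Fin n → ℂ) : Module.End ℂ (Pn n) →ₗ[ℂ] Module.End ℂ (Pn n) :=
  LinearMap.mulLeft ℂ (tauC n c) - LinearMap.mulRight ℂ (tauC n c)

lemma Ml_comm (c : Fin n → ℂ) (l : Fin n → ℤ) {T : Module.End ℂ (Pn n)} (hT : T ∈ Ml l) :
    commMapL c T = (-(∑ j, (l j : ℂ) * c j)) • T := by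
  have hker : Ml l ≤ LinearMap.ker
      (commMapL c - (-(∑ j, (l j : ℂ) * c j)) • (LinearMap.id : Module.End ℂ (Pn n) →ₗ[ℂ] _)) := by
    rw [Ml, Submodule.span_le]
    rintro T ⟨γ, rfl⟩
    rw [SetLike.mem_coe, LinearMap.mem_ker, LinearMap.sub_apply, LinearMap.smul_apply,
      LinearMap.id_apply, sub_eq_zero, commMapL, LinearMap.sub_apply,
      LinearMap.mulLeft_apply, LinearMap.mulRight_apply]
    exact tau_comm_gen c γ l
  have h := hker hT
  rw [LinearMap.mem_ker, LinearMap.sub_apply, LinearMap.smul_apply, LinearMap.id_apply,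
    sub_eq_zero] at h
  exact h

lemma Ttot_eq_iSup : Ttot n = ⨆ l : Fin n → ℤ, Ml l := by
  rw [Ttot]
  have hset : {T : Module.End ℂ (Pn n) | ∃ (γ : Fin n → ℕ) (l : Fin n → ℤ),
      T = eulPow n γ * omegaOp n l}
      = ⋃ l : Fin n → ℤ, {T | ∃ γ : Fin n → ℕ, T = eulPow n γ * omegaOp n l} := by
    ext T
    simp only [Set.mem_setOf_eq, Set.mem_iUnion]
    constructor
    · rintro ⟨γ, l, h⟩; exact ⟨l, γ, h⟩
    · rintro ⟨l, γ, h⟩; exact ⟨γ, l, h⟩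
  rw [hset, Submodule.span_iUnion]
  rfl


/-- `D^𝔤 = ⨁_{l ∈ A^⊥ ∩ ℤ^n} M_l`, i.e. `D^𝔤` is exactly the ℂ-linear span
of the operators `e^γ ∘ ω_l` with `γ ∈ ℕ^n` and `l ∈ A^⊥ ∩ ℤ^n`. -/
theorem stmt3 (n m : ℕ) (hn : 1 ≤ n) (a : Fin m → Fin n → ℂ) :
    invD n m a = ↑(Submodule.span ℂ
      {x : Module.End ℂ (Pn n) | ∃ (γ : Fin n → ℕ) (l : Fin n → ℤ),
        (∀ v ∈ Submodule.span ℂ (Set.range a), ∑ j, (l j : ℂ) * v j = 0) ∧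
        x = eulPow n γ * omegaOp n l}) := by
  ext ω
  simp only [invD, Set.mem_setOf_eq, SetLike.mem_coe]
  constructor
  · rintro ⟨hw, hcomm⟩
    have hωT : ω ∈ Ttot n := weylD_le_Ttot ω hw
    rw [Ttot_eq_iSup] at hωT
    obtain ⟨f, hf, hsum⟩ := (Submodule.mem_iSup_iff_exists_finsupp _ _).mp hωT
    have hperp : ∀ l ∈ f.support, ∀ i, ∑ j, (l j : ℂ) * a i j = 0 := by
      intro l hl i
      have h1 : commMapL (a i) ω = 0 := by
        rw [commMapL, LinearMap.sub_apply, LinearMap.mulLeft_apply, LinearMap.mulRight_apply,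
          hcomm i, sub_self]
      have hzero : ∑ l' ∈ f.support, (-(∑ j, (l' j : ℂ) * a i j)) • f l' = 0 := by
        calc ∑ l' ∈ f.support, (-(∑ j, (l' j : ℂ) * a i j)) • f l'
            = ∑ l' ∈ f.support, commMapL (a i) (f l') :=
              Finset.sum_congr rfl fun l' _ => (Ml_comm (a i) l' (hf l')).symm
          _ = commMapL (a i) (∑ l' ∈ f.support, f l') := (map_sum _ _ _).symm
          _ = commMapL (a i) ω := by rw [← hsum]; rfl
          _ = 0 := h1
      have hd := direct f.support (fun l' => (-(∑ j, (l' j : ℂ) * a i j)) • f l')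
        (fun l' hl' => Submodule.smul_mem _ _ (Ml_le_Wl l' (hf l'))) hzero l hl
      rcases smul_eq_zero.mp hd with h | h
      · have := neg_eq_zero.mp h
        exact this
      · exact absurd h (Finsupp.mem_support_iff.mp hl)
    have : ω = ∑ l ∈ f.support, f l := by rw [← hsum]; rfl
    rw [this]
    apply Submodule.sum_mem
    intro l hl
    have hMl : Ml l ≤ Submodule.span ℂ
        {x : Module.End ℂ (Pn n) | ∃ (γ : Fin n → ℕ) (l' : Fin n → ℤ),
          (∀ v ∈ Submodule.span ℂ (Set.range a), ∑ j, (l' j : ℂ) * v j = 0) ∧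
          x = eulPow n γ * omegaOp n l'} := by
      rw [Ml, Submodule.span_le]
      rintro T ⟨γ, rfl⟩
      refine Submodule.subset_span ⟨γ, l, ?_, rfl⟩
      intro v hv
      induction hv using Submodule.span_induction with
      | mem v hv =>
          obtain ⟨i, rfl⟩ := hv
          exact hperp l hl i
      | zero => simp
      | add v w _ _ hv hw =>
          have hsplit : ∑ j, (l j : ℂ) * (v + w) j
              = (∑ j, (l j : ℂ) * v j) + ∑ j, (l j : ℂ) * w j := by
            rw [← Finset.sum_add_distrib]
            exact Finset.sum_congr rfl fun j _ => by rw [Pi.add_apply]; ring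
          rw [hsplit, hv, hw, add_zero]
      | smul c v _ hv =>
          have hsplit : ∑ j, (l j : ℂ) * (c • v) j = c * ∑ j, (l j : ℂ) * v j := by
            rw [Finset.mul_sum]
            exact Finset.sum_congr rfl fun j _ => by rw [Pi.smul_apply, smul_eq_mul]; ring
          rw [hsplit, hv, mul_zero]
    exact hMl (hf l)
  · intro h
    induction h using Submodule.span_induction with
    | mem x hx =>
        obtain ⟨γ, l, hperp, rfl⟩ := hx
        refine ⟨gen_mem_weylD γ l, fun i => ?_⟩
        have h0 : ∑ j, (l j : ℂ) * a i j = 0 :=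
          hperp (a i) (Submodule.subset_span ⟨i, rfl⟩)
        have := tau_comm_gen (a i) γ l
        rw [h0, neg_zero, zero_smul, sub_eq_zero] at this
        exact this
    | zero => exact ⟨zero_mem _, fun i => by rw [mul_zero, zero_mul]⟩
    | add x y _ _ hx hy =>
        exact ⟨add_mem hx.1 hy.1, fun i => by
          rw [mul_add, add_mul, hx.2 i, hy.2 i]⟩
    | smul c x _ hx =>
        exact ⟨Subalgebra.smul_mem _ hx.1 c, fun i => by
          rw [mul_smul_comm, smul_mul_assoc, hx.2 i]⟩

end
end

section
/- If A^⊥ ∩ ℤ^n = {0}, then D^𝔤 = E, i.e. the invariant differential operators are exactly the polynomials in the Euler operators e_1,…,e_n. -/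
open MvPolynomial

noncomputable section

/-- The subalgebra `E = ℂ[e_1, …, e_n]` generated by the Euler operators. -/
def eulAlg (n : ℕ) : Subalgebra ℂ (Module.End ℂ (Pn n)) :=
  Algebra.adjoin ℂ (Set.range (eulOp n))

namespace Aux4
variable {n : ℕ}

lemma endo_ext {T U : Module.End ℂ (Pn n)}
    (h : ∀ γ : Fin n →₀ ℕ, T (monomial γ 1) = U (monomial γ 1)) : T = U := by
  apply LinearMap.ext; intro f
  induction f using MvPolynomial.induction_on' with
  | monomial γ c =>
    have hm : (monomial γ c : Pn n) = c • monomial γ 1 := by simp [smul_monomial]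
    rw [hm, map_smul, map_smul, h]
  | add p q hp hq => simp [map_add, hp, hq]

lemma Xop_monomial (j : Fin n) (γ : Fin n →₀ ℕ) (c : ℂ) :
    Xop n j (monomial γ c) = monomial (γ + Finsupp.single j 1) c := by
  rw [Xop, LinearMap.mulLeft_apply, X, monomial_mul]
  rw [one_mul, add_comm]

lemma Dop_monomial (j : Fin n) (γ : Fin n →₀ ℕ) (c : ℂ) :
    Dop n j (monomial γ c) = monomial (γ - Finsupp.single j 1) (c * γ j) := by
  simp [Dop, pderiv_monomial]

lemma eulOp_monomial (j : Fin n) (γ : Fin n →₀ ℕ) (c : ℂ) :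
    eulOp n j (monomial γ c) = (γ j : ℂ) • monomial γ c := by
  rw [eulOp, Module.End.mul_apply, Dop_monomial, Xop_monomial]
  rcases Nat.eq_zero_or_pos (γ j) with h | h
  · simp [h]
  · have he : γ - Finsupp.single j 1 + Finsupp.single j 1 = γ := by
      ext k; simp only [Finsupp.add_apply, Finsupp.tsub_apply, Finsupp.single_apply]
      rcases eq_or_ne j k with rfl | hk
      · simp; omega
      · simp [hk]
    rw [he, smul_monomial, smul_eq_mul, mul_comm]

lemma tauC_monomial (c : Fin n → ℂ) (γ : Fin n →₀ ℕ) (k : ℂ) :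
    tauC n c (monomial γ k) = (-∑ j, c j * γ j) • monomial γ k := by
  rw [tauC, LinearMap.neg_apply, LinearMap.sum_apply, neg_smul]
  congr 1
  rw [Finset.sum_smul]
  refine Finset.sum_congr rfl fun j _ => ?_
  rw [LinearMap.smul_apply, eulOp_monomial, smul_smul]

lemma coeff_eulOp (j : Fin n) (δ : Fin n →₀ ℕ) (g : Pn n) :
    coeff δ (eulOp n j g) = (δ j : ℂ) * coeff δ g := by
  induction g using MvPolynomial.induction_on' with
  | monomial γ c =>
    rw [eulOp_monomial, coeff_smul, coeff_monomial]
    split_ifs with hh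
    · subst hh; simp
    · simp
  | add p q hp hq => simp [map_add, hp, hq, mul_add]

lemma coeff_tauC (c : Fin n → ℂ) (δ : Fin n →₀ ℕ) (g : Pn n) :
    coeff δ (tauC n c g) = (-∑ j, c j * δ j) * coeff δ g := by
  rw [tauC, LinearMap.neg_apply, LinearMap.sum_apply, coeff_neg, coeff_sum, neg_mul, neg_inj,
    Finset.sum_mul]
  refine Finset.sum_congr rfl fun j _ => ?_
  rw [LinearMap.smul_apply, coeff_smul, coeff_eulOp, smul_eq_mul]; ring

/-- Evaluation of a polynomial at the Euler operators, as an element of `eulAlg`. -/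
lemma exists_diag (p : MvPolynomial (Fin n) ℂ) :
    ∃ T ∈ eulAlg n, ∀ γ : Fin n →₀ ℕ,
      T (monomial γ 1) = (eval (fun j => (γ j : ℂ)) p) • monomial γ 1 := by
  induction p using MvPolynomial.induction_on with
  | C c =>
    exact ⟨algebraMap ℂ _ c, Subalgebra.algebraMap_mem _ c,
      fun γ => by simp [Module.algebraMap_end_apply]⟩
  | add p q hp hq =>
    obtain ⟨T, hT, hTa⟩ := hp; obtain ⟨U, hU, hUa⟩ := hq
    exact ⟨T + U, add_mem hT hU, fun γ => by simp [hTa, hUa, add_smul]⟩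
  | mul_X p j hp =>
    obtain ⟨T, hT, hTa⟩ := hp
    refine ⟨T * eulOp n j, mul_mem hT (Algebra.subset_adjoin ⟨j, rfl⟩), fun γ => ?_⟩
    rw [Module.End.mul_apply, eulOp_monomial, map_smul, hTa, eval_mul, eval_X, smul_smul, mul_comm]


/-- product of descending factorials -/
def dd (γ β : Fin n →₀ ℕ) : ℕ := ∏ j, (γ j).descFactorial (β j)

lemma dd_zero (γ : Fin n →₀ ℕ) : dd γ 0 = 1 := by simp [dd]

lemma dd_succ (γ β : Fin n →₀ ℕ) (j : Fin n) :
    dd γ (β + Finsupp.single j 1) = (γ j - β j) * dd γ β := by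
  unfold dd
  rw [← Finset.mul_prod_erase Finset.univ _ (Finset.mem_univ j),
    ← Finset.mul_prod_erase Finset.univ (fun k => (γ k).descFactorial (β k)) (Finset.mem_univ j),
    ← mul_assoc]
  congr 1
  · simp [Nat.descFactorial_succ]
  · refine Finset.prod_congr rfl fun k hk => ?_
    have : k ≠ j := Finset.ne_of_mem_erase hk
    simp [Finsupp.single_apply, Ne.symm this]

lemma dd_eq_zero {γ β : Fin n →₀ ℕ} (h : ¬ β ≤ γ) : dd γ β = 0 := by
  rw [Finsupp.le_def] at h
  push_neg at h
  obtain ⟨j, hj⟩ := h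
  exact Finset.prod_eq_zero (Finset.mem_univ j) (Nat.descFactorial_eq_zero_iff_lt.mpr hj)

lemma dd_ne_zero_le {γ β : Fin n →₀ ℕ} (h : dd γ β ≠ 0) : β ≤ γ := by
  by_contra hc; exact h (dd_eq_zero hc)

/-- one normal-form term `c · dd(γ,β) X^{γ-β+α}` -/
def nfTerm (t : ℂ × (Fin n →₀ ℕ) × (Fin n →₀ ℕ)) (γ : Fin n →₀ ℕ) (k : ℂ) : Pn n :=
  (t.1 * k * dd γ t.2.2) • monomial (γ - t.2.2 + t.2.1) (1 : ℂ)

def inS (T : Module.End ℂ (Pn n)) : Prop :=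
  ∃ L : List (ℂ × (Fin n →₀ ℕ) × (Fin n →₀ ℕ)),
    ∀ γ k, T (monomial γ k) = (L.map (fun t => nfTerm t γ k)).sum

lemma inS_zero : inS (0 : Module.End ℂ (Pn n)) := ⟨[], fun γ k => by simp⟩

lemma inS_one : inS (1 : Module.End ℂ (Pn n)) := by
  refine ⟨[(1, 0, 0)], fun γ k => ?_⟩
  simp [nfTerm, dd_zero, smul_monomial]

lemma inS_add {T U : Module.End ℂ (Pn n)} (hT : inS T) (hU : inS U) : inS (T + U) := by
  obtain ⟨L1, h1⟩ := hT; obtain ⟨L2, h2⟩ := hU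
  refine ⟨L1 ++ L2, fun γ k => ?_⟩
  simp [LinearMap.add_apply, h1, h2]

lemma inS_smul (c : ℂ) {T : Module.End ℂ (Pn n)} (hT : inS T) : inS (c • T) := by
  obtain ⟨L, hL⟩ := hT
  refine ⟨L.map (fun t => (c * t.1, t.2)), fun γ k => ?_⟩
  rw [LinearMap.smul_apply, hL, List.smul_sum, List.map_map, List.map_map]
  congr 1
  refine List.map_congr_left fun t _ => ?_
  simp only [Function.comp_apply, nfTerm, smul_smul]
  ring_nf

lemma list_sum_map_add {α M : Type*} [AddCommMonoid M] (L : List α) (u v : α → M) :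
    (L.map fun t => u t + v t).sum = (L.map u).sum + (L.map v).sum := by
  induction L with
  | nil => simp
  | cons a l ih => simp [ih]; rw [add_add_add_comm]

lemma inS_X_mul (j : Fin n) {T : Module.End ℂ (Pn n)} (hT : inS T) : inS (Xop n j * T) := by
  obtain ⟨L, hL⟩ := hT
  refine ⟨L.map (fun t => (t.1, t.2.1 + Finsupp.single j 1, t.2.2)), fun γ k => ?_⟩
  rw [Module.End.mul_apply, hL, map_list_sum, List.map_map, List.map_map]
  congr 1
  refine List.map_congr_left fun t _ => ?_
  simp only [Function.comp_apply, nfTerm, map_smul, Xop_monomial]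
  rw [add_assoc]

lemma Dop_nfTerm (j : Fin n) (t : ℂ × (Fin n →₀ ℕ) × (Fin n →₀ ℕ)) (γ : Fin n →₀ ℕ) (k : ℂ) :
    Dop n j (nfTerm t γ k) =
      nfTerm (t.1, t.2.1, t.2.2 + Finsupp.single j 1) γ k
        + nfTerm ((t.2.1 j : ℂ) * t.1, t.2.1 - Finsupp.single j 1, t.2.2) γ k := by
  obtain ⟨c, α, β⟩ := t
  simp only [nfTerm, map_smul, Dop_monomial, one_mul]
  rw [dd_succ]
  have hδ : (γ - β + α) j = (γ j - β j) + α j := by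
    simp [Finsupp.add_apply, Finsupp.tsub_apply]
  by_cases h1 : γ j ≤ β j
  · have hq : γ j - β j = 0 := by omega
    have he : γ - β + α - Finsupp.single j 1 = γ - β + (α - Finsupp.single j 1) := by
      ext l; simp only [Finsupp.add_apply, Finsupp.tsub_apply, Finsupp.single_apply]
      rcases eq_or_ne j l with rfl | hl
      · simp; omega
      · simp [hl]
    rw [he, hδ, hq]
    push_cast
    simp only [hq, Nat.cast_zero, zero_add, mul_zero, zero_mul, zero_smul, zero_add,
      smul_monomial, smul_eq_mul, mul_one]
    congr 1
    ring
  · push_neg at h1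
    by_cases h2 : α j = 0
    · have he : γ - β + α - Finsupp.single j 1 = γ - (β + Finsupp.single j 1) + α := by
        ext l; simp only [Finsupp.add_apply, Finsupp.tsub_apply, Finsupp.single_apply]
        rcases eq_or_ne j l with rfl | hl
        · simp; omega
        · simp [hl]
      have he2 : α - Finsupp.single j 1 = α := by
        ext l; simp only [Finsupp.tsub_apply, Finsupp.single_apply]
        rcases eq_or_ne j l with rfl | hl
        · simp; omega
        · simp [hl]
      rw [he, hδ, h2, he2]
      push_cast [h2]
      simp only [zero_mul, zero_smul, add_zero, mul_zero, smul_monomial, smul_eq_mul, mul_one]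
      congr 1
      ring
    · -- α j ≥ 1, γ j > β j : all three exponents coincide
      have he1 : γ - β + α - Finsupp.single j 1 = γ - (β + Finsupp.single j 1) + α := by
        ext l; simp only [Finsupp.add_apply, Finsupp.tsub_apply, Finsupp.single_apply]
        rcases eq_or_ne j l with rfl | hl
        · simp; omega
        · simp [hl]
      have he2 : γ - β + (α - Finsupp.single j 1) = γ - (β + Finsupp.single j 1) + α := by
        ext l; simp only [Finsupp.add_apply, Finsupp.tsub_apply, Finsupp.single_apply]
        rcases eq_or_ne j l with rfl | hl
        · simp; omega
        · simp [hl]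
      rw [he1, he2, hδ]
      simp only [smul_monomial, smul_eq_mul, mul_one]
      rw [← map_add]
      congr 1
      push_cast
      ring

lemma inS_D_mul (j : Fin n) {T : Module.End ℂ (Pn n)} (hT : inS T) : inS (Dop n j * T) := by
  obtain ⟨L, hL⟩ := hT
  refine ⟨L.map (fun t => (t.1, t.2.1, t.2.2 + Finsupp.single j 1))
      ++ L.map (fun t => ((t.2.1 j : ℂ) * t.1, t.2.1 - Finsupp.single j 1, t.2.2)),
    fun γ k => ?_⟩
  rw [Module.End.mul_apply, hL, map_list_sum, List.map_map, List.map_append, List.map_map,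
    List.map_map, List.sum_append, ← list_sum_map_add]
  congr 1
  refine List.map_congr_left fun t _ => ?_
  simpa using Dop_nfTerm j t γ k

lemma inS_of_weylD {T : Module.End ℂ (Pn n)} (hT : T ∈ weylD n) : inS T := by
  have hmem : T ∈ Submodule.span ℂ
      ((Submonoid.closure (Set.range (Xop n) ∪ Set.range (Dop n)) : Submonoid _) : Set _) := by
    rw [← Algebra.adjoin_eq_span]
    exact hT
  refine Submodule.span_induction (fun x hx => ?_) inS_zero (fun x y _ _ => inS_add)
    (fun c x _ => inS_smul c) hmem
  induction hx using Submonoid.closure_induction_left with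
  | one => exact inS_one
  | mul_left x hx y hy ih =>
    rcases hx with ⟨j, rfl⟩ | ⟨j, rfl⟩
    · exact inS_X_mul j ih
    · exact inS_D_mul j ih


/-- falling-factorial polynomial -/
def ffPoly (β : Fin n →₀ ℕ) : MvPolynomial (Fin n) ℂ :=
  ∏ j, ∏ i ∈ Finset.range (β j), (X j - C (i : ℂ))

lemma cast_descFactorial (a b : ℕ) :
    ((a.descFactorial b : ℕ) : ℂ) = ∏ i ∈ Finset.range b, ((a : ℂ) - (i : ℂ)) := by
  rcases le_or_gt b a with hle | hlt
  · rw [Nat.descFactorial_eq_prod_range, Nat.cast_prod]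
    refine Finset.prod_congr rfl fun i hi => ?_
    have : i ≤ a := (lt_of_lt_of_le (Finset.mem_range.mp hi) hle).le
    push_cast [Nat.cast_sub this]
    rfl
  · rw [Nat.descFactorial_eq_zero_iff_lt.mpr hlt, Nat.cast_zero]
    refine (Finset.prod_eq_zero (Finset.mem_range.mpr hlt) ?_).symm
    simp

lemma eval_ffPoly (γ β : Fin n →₀ ℕ) :
    eval (fun j => (γ j : ℂ)) (ffPoly β) = (dd γ β : ℂ) := by
  rw [ffPoly, map_prod, dd, Nat.cast_prod]
  refine Finset.prod_congr rfl fun j _ => ?_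
  rw [map_prod, cast_descFactorial]
  refine Finset.prod_congr rfl fun i _ => ?_
  simp

lemma coeff_nfTerm_diag (t : ℂ × (Fin n →₀ ℕ) × (Fin n →₀ ℕ)) (γ : Fin n →₀ ℕ) :
    coeff γ (nfTerm t γ (1 : ℂ)) =
      eval (fun j => (γ j : ℂ)) (if t.2.1 = t.2.2 then t.1 • ffPoly t.2.2 else 0) := by
  obtain ⟨c, α, β⟩ := t
  simp only [nfTerm, coeff_smul, coeff_monomial, mul_one, smul_eq_mul]
  by_cases hab : α = β
  · subst hab
    rw [if_pos rfl, smul_eq_C_mul, eval_mul, eval_C, eval_ffPoly]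
    by_cases hβ : α ≤ γ
    · rw [if_pos (by rw [tsub_add_cancel_of_le hβ]), mul_one]
    · rw [dd_eq_zero hβ]
      simp
  · rw [if_neg hab, map_zero]
    by_cases hdd : dd γ β = 0
    · simp [hdd]
    · have hβ : β ≤ γ := dd_ne_zero_le hdd
      rw [if_neg, mul_zero]
      intro hcon
      apply hab
      ext j
      have h1 := congrFun (congrArg (fun (f : Fin n →₀ ℕ) (j : Fin n) => f j) hcon) j
      simp only [Finsupp.add_apply, Finsupp.tsub_apply] at h1
      have := Finsupp.le_def.mp hβ j
      omega

lemma eulOp_commute (j k : Fin n) : Commute (eulOp n j) (eulOp n k) := by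
  apply endo_ext
  intro γ
  simp only [Module.End.mul_apply, eulOp_monomial, map_smul, smul_smul, mul_comm]

lemma commute_eulAlg {ω : Module.End ℂ (Pn n)} (hω : ω ∈ eulAlg n) (c : Fin n → ℂ) :
    Commute (tauC n c) ω := by
  have key : ∀ j, Commute (eulOp n j) ω := by
    intro j
    induction hω using Algebra.adjoin_induction with
    | mem x hx => obtain ⟨k, rfl⟩ := hx; exact eulOp_commute j k
    | algebraMap c => exact Algebra.commute_algebraMap_right c _
    | add x y _ _ hx hy => exact hx.add_right hy
    | mul x y _ _ hx hy => exact hx.mul_right hy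
  rw [tauC]
  exact (Commute.sum_left _ _ _ (fun j _ => (key j).smul_left (c j))).neg_left

end Aux4

open Aux4

/-- if `A^⊥ ∩ ℤ^n = {0}` then `D^𝔤 = E`, i.e. the invariant differential
operators are exactly the polynomials in the Euler operators. -/
theorem stmt4 (n m : ℕ) (hn : 1 ≤ n) (a : Fin m → Fin n → ℂ)
    (h : ∀ l : Fin n → ℤ,
      (∀ v ∈ Submodule.span ℂ (Set.range a), ∑ j, (l j : ℂ) * v j = 0) → l = 0) :
    invD n m a = ↑(eulAlg n) := by
  ext ω
  simp only [invD, Set.mem_setOf_eq, SetLike.mem_coe]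
  constructor
  · rintro ⟨hW, hc⟩
    have hdiag : ∀ γ : Fin n →₀ ℕ, ω (monomial γ 1) =
        (coeff γ (ω (monomial γ 1))) • monomial γ 1 := by
      intro γ
      set f := ω (monomial γ 1) with hf
      have key : ∀ i, tauC n (a i) f = (-∑ j, a i j * γ j) • f := by
        intro i
        have h0 := congrArg (fun T : Module.End ℂ (Pn n) => T (monomial γ (1 : ℂ))) (hc i)
        simp only [Module.End.mul_apply] at h0
        rw [tauC_monomial, map_smul] at h0
        exact h0
      have hzero : ∀ δ : Fin n →₀ ℕ, δ ≠ γ → coeff δ f = 0 := by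
        intro δ hδ
        by_contra hne
        have hi : ∀ i, ∑ j, a i j * (δ j : ℂ) = ∑ j, a i j * (γ j : ℂ) := by
          intro i
          have h1 := congrArg (coeff δ) (key i)
          rw [coeff_tauC, coeff_smul, smul_eq_mul] at h1
          exact neg_inj.mp (mul_right_cancel₀ hne h1)
        have hl := h (fun j => (δ j : ℤ) - (γ j : ℤ)) ?_
        · apply hδ
          ext j
          have hj := congrFun hl j
          simp only [Pi.zero_apply] at hj
          omega
        · intro v hv
          induction hv using Submodule.span_induction with
          | mem x hx =>
            obtain ⟨i, rfl⟩ := hx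
            push_cast
            simp only [sub_mul]
            rw [Finset.sum_sub_distrib]
            have e1 : ∀ g : Fin n →₀ ℕ, ∑ j, ((g j : ℂ)) * a i j = ∑ j, a i j * (g j : ℂ) :=
              fun g => Finset.sum_congr rfl fun j _ => mul_comm _ _
            rw [e1, e1, hi i, sub_self]
          | zero => simp
          | add x y _ _ hx hy =>
            simp only [Pi.add_apply, mul_add, Finset.sum_add_distrib, hx, hy, add_zero]
          | smul c x _ hx =>
            simp only [Pi.smul_apply, smul_eq_mul]
            calc ∑ j, (((δ j : ℤ) - γ j : ℤ) : ℂ) * (c * x j)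
                = c * ∑ j, (((δ j : ℤ) - γ j : ℤ) : ℂ) * x j := by
                  rw [Finset.mul_sum]; exact Finset.sum_congr rfl fun j _ => by ring
              _ = 0 := by rw [hx, mul_zero]
      apply MvPolynomial.ext
      intro δ
      rw [coeff_smul, coeff_monomial, smul_eq_mul]
      rcases eq_or_ne δ γ with rfl | hδ
      · simp
      · rw [hzero δ hδ, if_neg (Ne.symm hδ), mul_zero]
    obtain ⟨L, hL⟩ := inS_of_weylD hW
    set p : MvPolynomial (Fin n) ℂ :=
      (L.map (fun t => if t.2.1 = t.2.2 then t.1 • ffPoly t.2.2 else 0)).sum with hp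
    obtain ⟨T, hT, hTa⟩ := exists_diag p
    have hωT : ω = T := by
      apply endo_ext
      intro γ
      rw [hdiag γ, hTa γ]
      congr 1
      rw [hL γ 1, hp, ← lcoeff_apply, map_list_sum, map_list_sum (eval fun j => (γ j : ℂ)),
        List.map_map, List.map_map]
      congr 1
      refine List.map_congr_left fun t _ => ?_
      simp only [Function.comp_apply, lcoeff_apply]
      exact coeff_nfTerm_diag t γ
    rw [hωT]; exact hT
  · intro hω
    have hle : eulAlg n ≤ weylD n := by
      apply Algebra.adjoin_le
      rintro x ⟨j, rfl⟩
      exact mul_mem (Algebra.subset_adjoin (Or.inl ⟨j, rfl⟩))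
        (Algebra.subset_adjoin (Or.inr ⟨j, rfl⟩))
    exact ⟨hle hω, fun i => commute_eulAlg hω (a i)⟩


end
end

section
/- The centralizer of E in the Weyl algebra D equals E itself: if ω ∈ D satisfies ω ∘ e_j = e_j ∘ ω for all j = 1,…,n, then ω ∈ E. -/
open MvPolynomial

noncomputable section
set_option synthInstance.maxHeartbeats 1000000
set_option maxHeartbeats 1000000


variable {n : ℕ}

lemma Xop_monomial (j : Fin n) (m : Fin n →₀ ℕ) (c : ℂ) :
    Xop n j (monomial m c) = monomial (m + Finsupp.single j 1) c := by
  simp [Xop, LinearMap.mulLeft_apply, X, monomial_mul, add_comm]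

lemma eulOp_monomial (j : Fin n) (m : Fin n →₀ ℕ) (c : ℂ) :
    eulOp n j (monomial m c) = (m j : ℂ) • monomial m c := by
  rw [eulOp, Module.End.mul_apply]
  show Xop n j (pderiv j (monomial m c)) = _
  rw [pderiv_monomial, Xop_monomial]
  by_cases h : m j = 0
  · simp [h]
  · have : m - Finsupp.single j 1 + Finsupp.single j 1 = m := by
      ext i
      rcases eq_or_ne i j with rfl | hij
      · simp; omega
      · simp [Finsupp.single_apply, Ne.symm hij]
    rw [this, smul_monomial, smul_eq_mul, mul_comm]

/-- two endomorphisms agreeing on monomials with coefficient 1 agree -/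
lemma ext_monomial {f g : Module.End ℂ (Pn n)}
    (h : ∀ m, f (monomial m 1) = g (monomial m 1)) : f = g := by
  refine LinearMap.ext fun p => ?_
  induction p using MvPolynomial.induction_on' with
  | monomial u a =>
    have : (monomial u a : Pn n) = a • monomial u 1 := by rw [smul_monomial, smul_eq_mul, mul_one]
    rw [this, map_smul, map_smul, h]
  | add p q hp hq => rw [map_add, map_add, hp, hq]

lemma eulOp_comm (i j : Fin n) : eulOp n i * eulOp n j = eulOp n j * eulOp n i := by
  apply ext_monomial
  intro m
  simp [Module.End.mul_apply, eulOp_monomial, map_smul, smul_smul, mul_comm]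

lemma coeff_eulOp (j : Fin n) (p : Pn n) (a : Fin n →₀ ℕ) :
    coeff a (eulOp n j p) = (a j : ℂ) * coeff a p := by
  induction p using MvPolynomial.induction_on' with
  | monomial u c =>
    rw [eulOp_monomial]
    simp only [coeff_smul, coeff_monomial, smul_eq_mul]
    by_cases h : u = a
    · subst h; simp
    · simp [h]
  | add p q hp hq => simp [map_add, hp, hq, mul_add]

lemma diag_of_comm {ω : Module.End ℂ (Pn n)}
    (hω : ∀ j, ω * eulOp n j = eulOp n j * ω) (m : Fin n →₀ ℕ) :
    ω (monomial m 1) = coeff m (ω (monomial m 1)) • monomial m 1 := by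
  have he : ∀ j, eulOp n j (ω (monomial m 1)) = (m j : ℂ) • ω (monomial m 1) := by
    intro j
    have h1 := congrArg (fun T : Module.End ℂ (Pn n) => T (monomial m 1)) (hω j)
    simp only [Module.End.mul_apply, eulOp_monomial, map_smul] at h1
    exact h1.symm
  apply MvPolynomial.ext
  intro a
  rcases eq_or_ne a m with rfl | hne
  · simp [coeff_smul, coeff_monomial]
  · have : ∃ j, a j ≠ m j := by
      by_contra hc
      push_neg at hc
      exact hne (Finsupp.ext hc)
    obtain ⟨j, hj⟩ := this
    have h2 := congrArg (coeff a) (he j)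
    rw [coeff_eulOp, coeff_smul, smul_eq_mul] at h2
    have : coeff a (ω (monomial m 1)) = 0 := by
      by_contra h0
      exact hj (Nat.cast_injective (mul_right_cancel₀ h0 h2))
    rw [this]
    simp [coeff_smul, coeff_monomial, Ne.symm hne]

/-- shift operator on eigenvalue functions -/
def Sop (n : ℕ) (j : Fin n) : Module.End ℂ ((Fin n →₀ ℕ) → ℂ) where
  toFun c := fun m => c (m + Finsupp.single j 1)
  map_add' _ _ := rfl
  map_smul' _ _ := rfl

@[simp] lemma Sop_apply (j : Fin n) (c : (Fin n →₀ ℕ) → ℂ) (m : Fin n →₀ ℕ) :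
    Sop n j c m = c (m + Finsupp.single j 1) := rfl

/-- the inner derivation ad(X_j) on End -/
def adX (n : ℕ) (j : Fin n) : Module.End ℂ (Module.End ℂ (Pn n)) :=
  LinearMap.mulLeft ℂ (Xop n j) - LinearMap.mulRight ℂ (Xop n j)

@[simp] lemma adX_apply (j : Fin n) (a : Module.End ℂ (Pn n)) :
    adX n j a = Xop n j * a - a * Xop n j := rfl

lemma adX_pow_diag {ω : Module.End ℂ (Pn n)} {c : (Fin n →₀ ℕ) → ℂ}
    (hd : ∀ m, ω (monomial m 1) = c m • monomial m 1) (j : Fin n) (k : ℕ) (m : Fin n →₀ ℕ) :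
    ((adX n j ^ k) ω) (monomial m 1)
      = (((1 - Sop n j) ^ k) c) m • monomial (m + Finsupp.single j k) 1 := by
  induction k generalizing m with
  | zero => simp [hd m]
  | succ k ih =>
    rw [pow_succ', Module.End.mul_apply, adX_apply, LinearMap.sub_apply, Module.End.mul_apply,
      Module.End.mul_apply]
    have hX : Xop n j (monomial m (1:ℂ)) = monomial (m + Finsupp.single j 1) 1 := Xop_monomial j m 1
    rw [hX, ih, ih, map_smul, Xop_monomial]
    rw [pow_succ' (1 - Sop n j), Module.End.mul_apply]
    have harr : m + Finsupp.single j 1 + Finsupp.single j (k:ℕ)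
        = m + Finsupp.single j (k+1) := by
      rw [add_assoc, ← Finsupp.single_add, add_comm 1 k]
    have harr2 : m + Finsupp.single j (k:ℕ) + Finsupp.single j 1
        = m + Finsupp.single j (k+1) := by
      rw [add_assoc, ← Finsupp.single_add]
    rw [harr, harr2, ← sub_smul]
    congr 1

lemma delta_pow_zero_of_adX {ω : Module.End ℂ (Pn n)} {c : (Fin n →₀ ℕ) → ℂ}
    (hd : ∀ m, ω (monomial m 1) = c m • monomial m 1) (j : Fin n) (k : ℕ)
    (h : (adX n j ^ k) ω = 0) : ((Sop n j - 1) ^ k) c = 0 := by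
  have h1 : ((1 - Sop n j) ^ k) c = 0 := by
    funext m
    have := adX_pow_diag hd j k m
    rw [h] at this
    simp only [LinearMap.zero_apply] at this
    have h2 := this.symm
    rcases smul_eq_zero.mp h2 with h3 | h3
    · exact h3
    · exact absurd h3 (monomial_eq_zero.not.mpr one_ne_zero)
  have heq : Sop n j - 1 = -(1 - Sop n j) := (neg_sub _ _).symm
  have hp := neg_pow (1 - Sop n j) k
  rw [heq, hp, Module.End.mul_apply, h1, map_zero]

lemma adX_mul (j : Fin n) (a b : Module.End ℂ (Pn n)) :
    adX n j (a * b) = adX n j a * b + a * adX n j b := by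
  simp only [adX_apply, mul_sub, sub_mul, mul_assoc]
  abel

lemma adX_pow_eventually_zero (j : Fin n) {a : Module.End ℂ (Pn n)} {k : ℕ}
    (h : (adX n j ^ k) a = 0) {K : ℕ} (hK : k ≤ K) : (adX n j ^ K) a = 0 := by
  obtain ⟨d, rfl⟩ := Nat.exists_eq_add_of_le hK
  rw [add_comm k d, pow_add, Module.End.mul_apply, h, map_zero]

lemma adX_pow_mul_mem (j : Fin n) (a b : Module.End ℂ (Pn n)) (k : ℕ) :
    (adX n j ^ k) (a * b) ∈ Submodule.span ℂ
      {x : Module.End ℂ (Pn n) | ∃ i1 i2, i1 + i2 = k ∧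
        x = (adX n j ^ i1) a * (adX n j ^ i2) b} := by
  induction k with
  | zero =>
    apply Submodule.subset_span
    exact ⟨0, 0, rfl, by simp⟩
  | succ k ih =>
    rw [pow_succ', Module.End.mul_apply]
    have hmap : ∀ x ∈ ({x : Module.End ℂ (Pn n) | ∃ i1 i2, i1 + i2 = k ∧
        x = (adX n j ^ i1) a * (adX n j ^ i2) b} : Set _),
        adX n j x ∈ Submodule.span ℂ
          {x : Module.End ℂ (Pn n) | ∃ i1 i2, i1 + i2 = k + 1 ∧
            x = (adX n j ^ i1) a * (adX n j ^ i2) b} := by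
      rintro x ⟨i1, i2, hi, rfl⟩
      rw [adX_mul]
      apply add_mem
      · apply Submodule.subset_span
        exact ⟨i1 + 1, i2, by omega, by rw [pow_succ', Module.End.mul_apply]⟩
      · apply Submodule.subset_span
        exact ⟨i1, i2 + 1, by omega, by rw [pow_succ' (adX n j) i2, Module.End.mul_apply]⟩
    -- now use span induction
    refine Submodule.span_induction (p := fun x _ => adX n j x ∈ _) hmap ?_ ?_ ?_ ih
    · simp
    · intro x y _ _ hx hy
      rw [map_add]; exact add_mem hx hy
    · intro r x _ hx
      rw [map_smul]; exact Submodule.smul_mem _ _ hx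

lemma nilpotent_adX_of_mem_weylD {ω : Module.End ℂ (Pn n)} (hω : ω ∈ weylD n) :
    ∀ j, ∃ k, (adX n j ^ k) ω = 0 := by
  refine Algebra.adjoin_induction (p := fun x _ => ∀ j, ∃ k, (adX n j ^ k) x = 0) ?_ ?_ ?_ ?_ hω
  · rintro x (⟨i, rfl⟩ | ⟨i, rfl⟩)
    · intro j
      refine ⟨1, ?_⟩
      rw [pow_one, adX_apply, sub_eq_zero]
      refine LinearMap.ext fun p => ?_
      show X j * (X i * p) = X i * (X j * p)
      ring
    · intro j
      -- Heisenberg relation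
      have heis : Dop n i * Xop n j - Xop n j * Dop n i
          = (if i = j then (1 : Module.End ℂ (Pn n)) else 0) := by
        refine LinearMap.ext fun p => ?_
        simp only [LinearMap.sub_apply, Module.End.mul_apply, Dop, Xop,
          LinearMap.mulLeft_apply, Derivation.coeFn_coe]
        rw [pderiv_mul, pderiv_X]
        rcases eq_or_ne i j with rfl | hij
        · simp
        · simp [Pi.single_apply, hij]
      refine ⟨2, ?_⟩
      have h1 : adX n j (Dop n i) = -(if i = j then (1 : Module.End ℂ (Pn n)) else 0) := by
        rw [adX_apply, ← heis]
        exact (neg_sub _ _).symm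
      rw [pow_succ, Module.End.mul_apply, pow_one, h1, map_neg, neg_eq_zero]
      rcases eq_or_ne i j with rfl | hij
      · rw [if_pos rfl, adX_apply, mul_one, one_mul, sub_self]
      · rw [if_neg hij, map_zero]
  · intro r j
    refine ⟨1, ?_⟩
    rw [pow_one, adX_apply, sub_eq_zero]
    exact (Algebra.commutes r _).symm
  · intro x y _ _ hx hy j
    obtain ⟨k1, h1⟩ := hx j
    obtain ⟨k2, h2⟩ := hy j
    refine ⟨max k1 k2, ?_⟩
    rw [map_add, adX_pow_eventually_zero j h1 (le_max_left _ _),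
      adX_pow_eventually_zero j h2 (le_max_right _ _), add_zero]
  · intro x y _ _ hx hy j
    obtain ⟨k1, h1⟩ := hx j
    obtain ⟨k2, h2⟩ := hy j
    refine ⟨k1 + k2, ?_⟩
    have hmem := adX_pow_mul_mem j x y (k1 + k2)
    have hsub : {z : Module.End ℂ (Pn n) | ∃ i1 i2, i1 + i2 = k1 + k2 ∧
        z = (adX n j ^ i1) x * (adX n j ^ i2) y} ⊆ (⊥ : Submodule ℂ (Module.End ℂ (Pn n))) := by
      rintro z ⟨i1, i2, hi, rfl⟩
      simp only [SetLike.mem_coe, Submodule.mem_bot]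
      rcases le_or_gt k1 i1 with hle | hlt
      · rw [adX_pow_eventually_zero j h1 hle, zero_mul]
      · have : k2 ≤ i2 := by omega
        rw [adX_pow_eventually_zero j h2 this, mul_zero]
    have := Submodule.span_le.mpr hsub
    have hz := this hmem
    simpa using hz

/-! ### The commutative algebra of shift operators -/

lemma Sop_comm_aux : ∀ a ∈ Set.range (Sop n), ∀ b ∈ Set.range (Sop n), a * b = b * a := by
  rintro _ ⟨i, rfl⟩ _ ⟨j, rfl⟩
  refine LinearMap.ext fun c => ?_
  funext m
  simp only [Module.End.mul_apply, Sop_apply]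
  rw [add_assoc, add_assoc, add_comm (Finsupp.single j 1)]

def shiftAlg (n : ℕ) : Subalgebra ℂ (Module.End ℂ ((Fin n →₀ ℕ) → ℂ)) :=
  Algebra.adjoin ℂ (Set.range (Sop n))

instance shiftAlgComm (n : ℕ) : CommRing (shiftAlg n) :=
  { (shiftAlg n).toRing with mul_comm := (Algebra.adjoinCommRingOfComm ℂ Sop_comm_aux).mul_comm }

def sS (n : ℕ) (j : Fin n) : shiftAlg n := ⟨Sop n j, Algebra.subset_adjoin ⟨j, rfl⟩⟩

def sD (n : ℕ) (j : Fin n) : shiftAlg n := sS n j - 1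

lemma coe_sD_pow (j : Fin n) (t : ℕ) :
    ((sD n j ^ t : shiftAlg n) : Module.End ℂ ((Fin n →₀ ℕ) → ℂ)) = (Sop n j - 1) ^ t := by
  rw [SubmonoidClass.coe_pow]
  congr 1

lemma Sop_pow_apply (j : Fin n) (t : ℕ) (c : (Fin n →₀ ℕ) → ℂ) (m : Fin n →₀ ℕ) :
    (Sop n j ^ t) c m = c (m + Finsupp.single j t) := by
  induction t generalizing m with
  | zero => simp
  | succ t ih =>
    rw [pow_succ', Module.End.mul_apply, Sop_apply, ih, add_assoc, ← Finsupp.single_add,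
      add_comm 1 t]

lemma prod_sS_pow_apply (s : Finset (Fin n)) (m : Fin n →₀ ℕ) (c : (Fin n →₀ ℕ) → ℂ)
    (m' : Fin n →₀ ℕ) :
    ((↑(∏ j ∈ s, sS n j ^ (m j)) : Module.End ℂ ((Fin n →₀ ℕ) → ℂ))) c m'
      = c (m' + ∑ j ∈ s, Finsupp.single j (m j)) := by
  classical
  induction s using Finset.induction_on generalizing m' with
  | empty => simp only [Finset.prod_empty, Finset.sum_empty, add_zero]; rfl
  | insert a s hnot ih =>
    rw [Finset.prod_insert hnot, Finset.sum_insert hnot]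
    rw [MulMemClass.coe_mul, Module.End.mul_apply]
    have hs : (((sS n a ^ (m a) : shiftAlg n)) : Module.End ℂ ((Fin n →₀ ℕ) → ℂ))
        = Sop n a ^ (m a) := by rw [SubmonoidClass.coe_pow]; rfl
    rw [hs, Sop_pow_apply, ih]
    congr 1
    rw [add_assoc, add_comm (Finsupp.single a (m a))]

lemma full_shift_apply (m : Fin n →₀ ℕ) (c : (Fin n →₀ ℕ) → ℂ) :
    ((↑(∏ j, sS n j ^ (m j)) : Module.End ℂ ((Fin n →₀ ℕ) → ℂ))) c 0 = c m := by
  rw [prod_sS_pow_apply, zero_add, Finsupp.univ_sum_single]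

lemma sS_pow_binomial (j : Fin n) (t : ℕ) :
    sS n j ^ t = ∑ i ∈ Finset.range (t + 1), (t.choose i : ℂ) • sD n j ^ i := by
  have h : sS n j = sD n j + 1 := by rw [sD]; exact (sub_add_cancel _ _).symm
  rw [h, add_pow]
  refine Finset.sum_congr rfl fun i _ => ?_
  rw [one_pow, mul_one, mul_comm, ← nsmul_eq_mul, ← Nat.cast_smul_eq_nsmul ℂ]

lemma prod_smul_shift {ι : Type} (s : Finset ι) (b : ι → ℂ) (f : ι → shiftAlg n) :
    ∏ i ∈ s, (b i • f i) = (∏ i ∈ s, b i) • ∏ i ∈ s, f i := by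
  classical
  induction s using Finset.induction_on with
  | empty => simp
  | insert a s h ih =>
    rw [Finset.prod_insert h, Finset.prod_insert h, Finset.prod_insert h, ih,
      smul_mul_smul_comm]

lemma newton (c : (Fin n →₀ ℕ) → ℂ) (K : ℕ)
    (hK : ∀ j, ((sD n j ^ K : shiftAlg n) : Module.End ℂ ((Fin n →₀ ℕ) → ℂ)) c = 0)
    (m : Fin n →₀ ℕ) :
    c m = ∑ p ∈ Fintype.piFinset (fun _ : Fin n => Finset.range K),
      ((((∏ j, sD n j ^ (p j) : shiftAlg n)) : Module.End ℂ ((Fin n →₀ ℕ) → ℂ)) c 0)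
        * ∏ j, ((m j).choose (p j) : ℂ) := by
  classical
  set g : (Fin n → ℕ) → ℂ := fun p =>
    ((((∏ j, sD n j ^ (p j) : shiftAlg n)) : Module.End ℂ ((Fin n →₀ ℕ) → ℂ)) c 0)
      * ∏ j, ((m j).choose (p j) : ℂ) with hg
  have expand : (∏ j, sS n j ^ (m j))
      = ∑ p ∈ Fintype.piFinset (fun j => Finset.range (m j + 1)),
          (∏ j, ((m j).choose (p j) : ℂ)) • ∏ j, sD n j ^ (p j) := by
    calc (∏ j, sS n j ^ (m j))
        = ∏ j, ∑ i ∈ Finset.range (m j + 1), ((m j).choose i : ℂ) • sD n j ^ i := by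
          refine Finset.prod_congr rfl fun j _ => sS_pow_binomial j (m j)
      _ = ∑ p ∈ Fintype.piFinset (fun j => Finset.range (m j + 1)),
            ∏ j, ((m j).choose (p j) : ℂ) • sD n j ^ (p j) := Finset.prod_univ_sum _ _
      _ = _ := by
          refine Finset.sum_congr rfl fun p _ => ?_
          rw [prod_smul_shift]
  have hc : c m = ∑ p ∈ Fintype.piFinset (fun j => Finset.range (m j + 1)), g p := by
    conv_lhs => rw [← full_shift_apply m c]
    rw [expand, AddSubmonoidClass.coe_finset_sum]
    simp only [Subalgebra.coe_smul, LinearMap.sum_apply, LinearMap.smul_apply]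
    rw [Finset.sum_apply]
    refine Finset.sum_congr rfl fun p _ => ?_
    rw [hg]
    simp only [Pi.smul_apply, smul_eq_mul]
    ring
  -- vanishing of the Delta-coefficients beyond K
  have hvan : ∀ p : Fin n → ℕ, (∃ j, K ≤ p j) →
      ((↑(∏ j, sD n j ^ (p j)) : Module.End ℂ ((Fin n →₀ ℕ) → ℂ))) c = 0 := by
    rintro p ⟨j0, hj0⟩
    have hsplit : (∏ j, sD n j ^ (p j))
        = (∏ j ∈ Finset.univ.erase j0, sD n j ^ (p j)) * sD n j0 ^ (p j0) :=
      (Finset.prod_erase_mul _ _ (Finset.mem_univ j0)).symm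
    have hpow : sD n j0 ^ (p j0) = sD n j0 ^ (p j0 - K) * sD n j0 ^ K := by
      rw [← pow_add]
      congr 1
      omega
    rw [hsplit, hpow, MulMemClass.coe_mul, MulMemClass.coe_mul, Module.End.mul_apply,
      Module.End.mul_apply, hK j0, map_zero, map_zero]
  -- truncate the sum
  set big : Finset (Fin n → ℕ) :=
    Fintype.piFinset (fun j => Finset.range (max (m j + 1) K)) with hbig
  have h1 : ∑ p ∈ Fintype.piFinset (fun j => Finset.range (m j + 1)), g p = ∑ p ∈ big, g p := by
    refine Finset.sum_subset
      (Fintype.piFinset_subset _ _ fun a => Finset.range_subset_range.mpr (le_max_left _ _)) ?_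
    intro p _ hp
    rw [Fintype.mem_piFinset] at hp
    push_neg at hp
    obtain ⟨j, hj⟩ := hp
    rw [Finset.mem_range] at hj
    push_neg at hj
    have hchoose : ((m j).choose (p j) : ℂ) = 0 := by
      rw [Nat.choose_eq_zero_of_lt (by omega)]
      simp
    rw [hg]
    have : ∏ j', ((m j').choose (p j') : ℂ) = 0 :=
      Finset.prod_eq_zero (Finset.mem_univ j) hchoose
    simp [this]
  have h2 : ∑ p ∈ Fintype.piFinset (fun _ : Fin n => Finset.range K), g p = ∑ p ∈ big, g p := by
    refine Finset.sum_subset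
      (Fintype.piFinset_subset _ _ fun a => Finset.range_subset_range.mpr (le_max_right _ _)) ?_
    intro p _ hp
    rw [Fintype.mem_piFinset] at hp
    push_neg at hp
    obtain ⟨j, hj⟩ := hp
    rw [Finset.mem_range] at hj
    push_neg at hj
    have hv := hvan p ⟨j, hj⟩
    simp only [hg, hv, Pi.zero_apply, zero_mul]
  rw [hc, h1, ← h2]

/-! ### The commutative Euler algebra -/

instance eulAlgComm (n : ℕ) : CommRing (eulAlg n) :=
  { (eulAlg n).toRing with mul_comm := (Algebra.adjoinCommRingOfComm ℂ
    (by rintro _ ⟨i, rfl⟩ _ ⟨j, rfl⟩; exact eulOp_comm i j)).mul_comm }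

def sE (n : ℕ) (j : Fin n) : eulAlg n := ⟨eulOp n j, Algebra.subset_adjoin ⟨j, rfl⟩⟩

lemma sE_sub_smul_apply (j : Fin n) (t : ℕ) (m : Fin n →₀ ℕ) :
    ((sE n j - (t : ℂ) • 1 : eulAlg n) : Module.End ℂ (Pn n)) (monomial m 1)
      = ((m j : ℂ) - t) • monomial m 1 := by
  rw [AddSubgroupClass.coe_sub, Subalgebra.coe_smul, OneMemClass.coe_one, LinearMap.sub_apply,
    LinearMap.smul_apply, Module.End.one_apply]
  show eulOp n j (monomial m 1) - _ = _
  rw [eulOp_monomial, sub_smul]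

lemma coe_prod_apply_eul {ι : Type} (s : Finset ι) (T : ι → eulAlg n) (sc : ι → ℂ) (q : Pn n)
    (h : ∀ i ∈ s, ((T i : Module.End ℂ (Pn n))) q = sc i • q) :
    ((∏ i ∈ s, T i : eulAlg n) : Module.End ℂ (Pn n)) q = (∏ i ∈ s, sc i) • q := by
  classical
  induction s using Finset.induction_on with
  | empty => simp only [Finset.prod_empty, one_smul]; rfl
  | insert a s hnot ih =>
    rw [Finset.prod_insert hnot, Finset.prod_insert hnot, MulMemClass.coe_mul,
      Module.End.mul_apply, ih (fun i hi => h i (Finset.mem_insert_of_mem hi)), map_smul,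
      h a (Finset.mem_insert_self a s), smul_smul, mul_comm]

lemma prod_range_cast_sub (N r : ℕ) :
    ∏ t ∈ Finset.range r, ((N : ℂ) - t) = (N.descFactorial r : ℂ) := by
  induction r with
  | zero => simp
  | succ r ih =>
    have h1 := descPochhammer_eval_eq_descFactorial ℂ N (r + 1)
    have h2 := descPochhammer_eval_eq_descFactorial ℂ N r
    rw [descPochhammer_succ_right, Polynomial.eval_mul, Polynomial.eval_sub, Polynomial.eval_X,
      Polynomial.eval_natCast, h2] at h1
    rw [Finset.prod_range_succ, ih, h1]

def ech (n : ℕ) (j : Fin n) (r : ℕ) : eulAlg n :=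
  ((r.factorial : ℂ))⁻¹ • ∏ t ∈ Finset.range r, (sE n j - (t : ℂ) • 1)

lemma ech_apply (j : Fin n) (r : ℕ) (m : Fin n →₀ ℕ) :
    ((ech n j r : eulAlg n) : Module.End ℂ (Pn n)) (monomial m 1)
      = (((m j).choose r : ℂ)) • monomial m 1 := by
  have hp := coe_prod_apply_eul (Finset.range r) (fun t => sE n j - (t : ℂ) • 1)
    (fun t => ((m j : ℂ) - t)) (monomial m 1) (fun t _ => sE_sub_smul_apply j t m)
  rw [ech, Subalgebra.coe_smul, LinearMap.smul_apply, hp, prod_range_cast_sub, smul_smul]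
  congr 1
  rw [Nat.descFactorial_eq_factorial_mul_choose, Nat.cast_mul, ← mul_assoc,
    inv_mul_cancel₀ (by exact_mod_cast r.factorial_ne_zero), one_mul]

lemma ech_mem (j : Fin n) (r : ℕ) : (ech n j r : Module.End ℂ (Pn n)) ∈ eulAlg n :=
  (ech n j r).2

/-! ### Main forward direction -/

lemma mem_eulAlg_of_comm {ω : Module.End ℂ (Pn n)} (hω : ω ∈ weylD n)
    (hcm : ∀ j, ω * eulOp n j = eulOp n j * ω) : ω ∈ eulAlg n := by
  classical
  set c : (Fin n →₀ ℕ) → ℂ := fun m => coeff m (ω (monomial m 1)) with hcdef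
  have hd : ∀ m, ω (monomial m 1) = c m • monomial m 1 := fun m => diag_of_comm hcm m
  choose k hk using nilpotent_adX_of_mem_weylD hω
  set K := Finset.univ.sup k with hKdef
  have hDK : ∀ j, ((sD n j ^ K : shiftAlg n) : Module.End ℂ ((Fin n →₀ ℕ) → ℂ)) c = 0 := by
    intro j
    rw [coe_sD_pow]
    exact delta_pow_zero_of_adX hd j K
      (adX_pow_eventually_zero j (hk j) (Finset.le_sup (Finset.mem_univ j)))
  set box := Fintype.piFinset (fun _ : Fin n => Finset.range K) with hbox
  set lam : (Fin n → ℕ) → ℂ := fun p =>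
    ((↑(∏ j, sD n j ^ (p j)) : Module.End ℂ ((Fin n →₀ ℕ) → ℂ)) c) 0 with hlam
  set ω' : eulAlg n := ∑ p ∈ box, lam p • ∏ j, ech n j (p j) with hω'
  have hact : (↑ω' : Module.End ℂ (Pn n)) = ω := by
    refine ext_monomial fun m => ?_
    have h1 : (↑ω' : Module.End ℂ (Pn n)) (monomial m 1)
        = (∑ p ∈ box, lam p * ∏ j, ((m j).choose (p j) : ℂ)) • monomial m 1 := by
      rw [hω', AddSubmonoidClass.coe_finset_sum, LinearMap.sum_apply]
      rw [Finset.sum_smul]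
      refine Finset.sum_congr rfl fun p _ => ?_
      rw [Subalgebra.coe_smul, LinearMap.smul_apply,
        coe_prod_apply_eul _ _ (fun j => (((m j).choose (p j) : ℂ))) _
          (fun j _ => ech_apply j (p j) m), smul_smul]
    rw [h1, hd m, ← newton c K hDK m]
  rw [← hact]
  exact ω'.2

lemma eulAlg_le_weylD : eulAlg n ≤ weylD n := by
  refine Algebra.adjoin_le ?_
  rintro _ ⟨j, rfl⟩
  exact mul_mem (Algebra.subset_adjoin (Or.inl ⟨j, rfl⟩))
    (Algebra.subset_adjoin (Or.inr ⟨j, rfl⟩))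

lemma comm_of_mem_eulAlg {ω : Module.End ℂ (Pn n)} (hω : ω ∈ eulAlg n) (j : Fin n) :
    ω * eulOp n j = eulOp n j * ω := by
  have hle : eulAlg n ≤ Subalgebra.centralizer ℂ (Set.range (eulOp n)) := by
    refine Algebra.adjoin_le ?_
    rintro _ ⟨i, rfl⟩
    rw [SetLike.mem_coe, Subalgebra.mem_centralizer_iff]
    rintro _ ⟨j', rfl⟩
    exact eulOp_comm j' i
  exact ((Subalgebra.mem_centralizer_iff ℂ).mp (hle hω) _ ⟨j, rfl⟩).symm

/-- the centralizer of `E` in the Weyl algebra `D` is `E` itself: an element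
`ω ∈ D` commutes with all the Euler operators `e_j` if and only if `ω ∈ E`. -/
theorem stmt5 (n : ℕ) (hn : 1 ≤ n) :
    {ω : Module.End ℂ (Pn n) | ω ∈ weylD n ∧ ∀ j, ω * eulOp n j = eulOp n j * ω}
      = ↑(eulAlg n) := by
  ext ω
  simp only [Set.mem_setOf_eq, SetLike.mem_coe]
  constructor
  · rintro ⟨h1, h2⟩
    exact mem_eulAlg_of_comm h1 h2
  · intro h
    exact ⟨eulAlg_le_weylD h, fun j => comm_of_mem_eulAlg h j⟩

end
end

section
/- Let l, l' ∈ ℤ^n. For each j set d_j = min(|l_j|, |l'_j|) if l_j l'_j < 0 and d_j = 0 otherwise, and let d = ∑_{j=1}^n d_j. Then there exists a nonzero scalar c ∈ ℂ such that [μ_l, μ_{l'}]_d = c · μ_{l+l'}. In particular, μ_{l+l'} lies in any subspace of Q containing μ_l and μ_{l'} and closed under all the transvectant products. -/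
open MvPolynomial TensorProduct

noncomputable section

/-- The polynomial ring `Q = ℂ[x_1,…,x_n,y_1,…,y_n]`; the variable `x_j` is
`X (Sum.inl j)` and `y_j` is `X (Sum.inr j)`. -/
abbrev Qn (n : ℕ) := MvPolynomial (Fin n ⊕ Fin n) ℂ

/-- The operator `Γ = ∑_i (∂/∂x_i ⊗ ∂/∂y_i − ∂/∂y_i ⊗ ∂/∂x_i)` on `Q ⊗_ℂ Q`. -/
def Gam (n : ℕ) : Module.End ℂ (Qn n ⊗[ℂ] Qn n) :=
  ∑ i : Fin n,
    (TensorProduct.map (pderiv (Sum.inl i)).toLinearMap (pderiv (Sum.inr i)).toLinearMap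
      - TensorProduct.map (pderiv (Sum.inr i)).toLinearMap (pderiv (Sum.inl i)).toLinearMap)

/-- The `k`-th transvectant `[f,g]_k = m(Γ^k(f ⊗ g))`, where `m` is multiplication. -/
def transv (n k : ℕ) (f g : Qn n) : Qn n :=
  LinearMap.mul' ℂ (Qn n) ((Gam n ^ k) (f ⊗ₜ[ℂ] g))

/-- The monomial `μ_l = ∏_{l_j > 0} y_j^{l_j} · ∏_{l_j < 0} x_j^{-l_j}`. -/
def mu (n : ℕ) (l : Fin n → ℤ) : Qn n :=
  ∏ j : Fin n,
    if 0 < l j then (X (Sum.inr j) : Qn n) ^ (l j).toNat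
    else (X (Sum.inl j) : Qn n) ^ (-(l j)).toNat

def fac (n : ℕ) (l : Fin n → ℤ) (j : Fin n) : Qn n :=
  if 0 < l j then (X (Sum.inr j) : Qn n) ^ (l j).toNat
  else (X (Sum.inl j) : Qn n) ^ (-(l j)).toNat

lemma pderiv_X_pow_ne {n : ℕ} {v w : Fin n ⊕ Fin n} (h : w ≠ v) (k : ℕ) :
    pderiv v ((X w : Qn n) ^ k) = 0 := by
  rw [pderiv_pow, pderiv_X_of_ne h, mul_zero]

lemma pderiv_prod_erase {n : ℕ} (l : Fin n → ℤ) (v : Fin n ⊕ Fin n) (i : Fin n)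
    (s : Finset (Fin n)) (hs : i ∉ s) (hv : v = Sum.inl i ∨ v = Sum.inr i) :
    pderiv v (∏ j ∈ s, fac n l j) = 0 := by
  refine Finset.prod_induction _ (fun f => pderiv v f = 0)
    (fun a b ha hb => ?_) pderiv_one (fun j hj => ?_)
  · show pderiv v (a * b) = 0
    rw [pderiv_mul, ha, hb]; ring
  · have hji : j ≠ i := fun h => hs (h ▸ hj)
    show pderiv v (fac n l j) = 0
    unfold fac
    split <;> apply pderiv_X_pow_ne <;>
      rcases hv with rfl|rfl <;> simp [hji]

lemma mu_eq_prod {n : ℕ} (l : Fin n → ℤ) : mu n l = ∏ j, fac n l j := rfl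

lemma fac_of_ne {n : ℕ} (l : Fin n → ℤ) (i j : Fin n) (c : ℤ) (h : j ≠ i) :
    fac n (l + Pi.single i c) j = fac n l j := by
  unfold fac
  simp [Pi.single_eq_of_ne h]

lemma mu_split {n : ℕ} (l : Fin n → ℤ) (i : Fin n) :
    mu n l = fac n l i * ∏ j ∈ Finset.univ.erase i, fac n l j := by
  rw [mu_eq_prod, ← Finset.mul_prod_erase _ _ (Finset.mem_univ i)]

lemma mu_single {n : ℕ} (l : Fin n → ℤ) (i : Fin n) (c : ℤ) :
    mu n (l + Pi.single i c) = fac n (l + Pi.single i c) i *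
      ∏ j ∈ Finset.univ.erase i, fac n l j := by
  rw [mu_split _ i]
  congr 1
  exact Finset.prod_congr rfl fun j hj => fac_of_ne l i j c (Finset.ne_of_mem_erase hj)

lemma pderiv_inl_mu {n : ℕ} (l : Fin n → ℤ) (i : Fin n) (h : l i < 0) :
    pderiv (Sum.inl i) (mu n l) = (((-(l i)).toNat : ℂ)) • mu n (l + Pi.single i 1) := by
  rw [mu_split l i, pderiv_mul,
    pderiv_prod_erase l _ i _ (Finset.notMem_erase i _) (Or.inl rfl), mul_zero, add_zero]
  rw [mu_single l i 1]
  have h1 : fac n l i = (X (Sum.inl i) : Qn n) ^ (-(l i)).toNat := by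
    unfold fac; rw [if_neg (by omega)]
  have h2 : fac n (l + Pi.single i 1) i = (X (Sum.inl i) : Qn n) ^ ((-(l i)).toNat - 1) := by
    unfold fac
    rw [if_neg (by simp; omega)]
    congr 1
    simp only [Pi.add_apply, Pi.single_eq_same]
    omega
  rw [h1, h2, pderiv_pow, pderiv_X_self, mul_one, smul_eq_C_mul, ← mul_assoc]
  congr 2

lemma pderiv_inr_mu {n : ℕ} (l : Fin n → ℤ) (i : Fin n) (h : 0 < l i) :
    pderiv (Sum.inr i) (mu n l) = (((l i).toNat : ℂ)) • mu n (l + Pi.single i (-1)) := by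
  rw [mu_split l i, pderiv_mul,
    pderiv_prod_erase l _ i _ (Finset.notMem_erase i _) (Or.inr rfl), mul_zero, add_zero]
  rw [mu_single l i (-1)]
  have h1 : fac n l i = (X (Sum.inr i) : Qn n) ^ (l i).toNat := by
    unfold fac; rw [if_pos h]
  have h2 : fac n (l + Pi.single i (-1)) i = (X (Sum.inr i) : Qn n) ^ ((l i).toNat - 1) := by
    unfold fac
    simp only [Pi.add_apply, Pi.single_eq_same]
    by_cases hc : 0 < l i + -1
    · rw [if_pos hc]
      congr 1
      omega
    · rw [if_neg hc]
      have e1 : (-(l i + -1)).toNat = 0 := by omega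
      have e2 : (l i).toNat - 1 = 0 := by omega
      rw [e1, e2, pow_zero, pow_zero]
  rw [h1, h2, pderiv_pow, pderiv_X_self, mul_one, smul_eq_C_mul, ← mul_assoc]
  congr 2

lemma pderiv_inl_mu_zero {n : ℕ} (l : Fin n → ℤ) (i : Fin n) (h : 0 ≤ l i) :
    pderiv (Sum.inl i) (mu n l) = 0 := by
  rw [mu_split l i, pderiv_mul,
    pderiv_prod_erase l _ i _ (Finset.notMem_erase i _) (Or.inl rfl), mul_zero, add_zero]
  have : pderiv (Sum.inl i) (fac n l i) = 0 := by
    unfold fac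
    split
    · exact pderiv_X_pow_ne (by simp) _
    · have : (-(l i)).toNat = 0 := by omega
      rw [this, pow_zero, pderiv_one]
  rw [this, zero_mul]

lemma pderiv_inr_mu_zero {n : ℕ} (l : Fin n → ℤ) (i : Fin n) (h : l i ≤ 0) :
    pderiv (Sum.inr i) (mu n l) = 0 := by
  rw [mu_split l i, pderiv_mul,
    pderiv_prod_erase l _ i _ (Finset.notMem_erase i _) (Or.inr rfl), mul_zero, add_zero]
  have : pderiv (Sum.inr i) (fac n l i) = 0 := by
    unfold fac
    rw [if_neg (by omega)]
    exact pderiv_X_pow_ne (by simp) _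
  rw [this, zero_mul]
lemma Gam_tmul {n : ℕ} (f g : Qn n) :
    Gam n (f ⊗ₜ[ℂ] g) = ∑ i : Fin n,
      ((pderiv (Sum.inl i) f) ⊗ₜ[ℂ] (pderiv (Sum.inr i) g)
        - (pderiv (Sum.inr i) f) ⊗ₜ[ℂ] (pderiv (Sum.inl i) g)) := by
  rw [Gam, LinearMap.sum_apply]
  exact Finset.sum_congr rfl fun i _ => rfl

lemma fac_add {n : ℕ} (l l' : Fin n → ℤ) (j : Fin n) (h : ¬ (l j * l' j < 0)) :
    fac n l j * fac n l' j = fac n (l + l') j := by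
  unfold fac
  simp only [Pi.add_apply]
  rcases lt_trichotomy (l j) 0 with h1|h1|h1 <;> rcases lt_trichotomy (l' j) 0 with h2|h2|h2
  · rw [if_neg (by omega), if_neg (by omega), if_neg (by omega), ← pow_add]
    congr 1; omega
  · rw [if_neg (by omega), if_neg (by omega), if_neg (by omega), ← pow_add]
    congr 1; omega
  · exact absurd (mul_neg_of_neg_of_pos h1 h2) h
  · rw [h1]; simp only [zero_add]
    split <;> simp
  · rw [h1, h2]; norm_num
  · rw [h1]; simp only [zero_add]
    split <;> simp
  · exact absurd (mul_neg_of_pos_of_neg h1 h2) h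
  · rw [h2]; simp only [add_zero]
    split <;> simp
  · rw [if_pos h1, if_pos h2, if_pos (by omega), ← pow_add]
    congr 1; omega

lemma transv_zero {n : ℕ} (f g : Qn n) : transv n 0 f g = f * g := by
  rw [transv, pow_zero, Module.End.one_apply, LinearMap.mul'_apply]

lemma mu_mul_mu {n : ℕ} (l l' : Fin n → ℤ) (h : ∀ j, ¬ (l j * l' j < 0)) :
    mu n l * mu n l' = mu n (l + l') := by
  rw [mu_eq_prod, mu_eq_prod, mu_eq_prod, ← Finset.prod_mul_distrib]
  exact Finset.prod_congr rfl fun j _ => fac_add l l' j (h j)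

def Dn {n : ℕ} (l l' : Fin n → ℤ) : ℕ :=
  ∑ j, if 0 < l j ∧ l' j < 0 then min (l j).toNat (-(l' j)).toNat else 0

lemma term1 {a b : ℤ} (h1 : a < 0) (h2 : 0 < b) :
    (if (a + 1) * (b + -1) < 0 then min |a + 1| |b + -1| else 0)
      = (if a * b < 0 then min |a| |b| else 0) - 1 := by
  rw [if_pos (mul_neg_of_neg_of_pos h1 h2), abs_of_neg h1, abs_of_pos h2]
  by_cases hp : (a + 1) * (b + -1) < 0
  · have ha : a + 1 ≠ 0 := by intro e; rw [e, zero_mul] at hp; exact absurd hp (by omega)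
    have hb : b + -1 ≠ 0 := by intro e; rw [e, mul_zero] at hp; exact absurd hp (by omega)
    rw [if_pos hp, abs_of_neg (by omega), abs_of_pos (by omega)]
    have ha' : a + 1 < 0 := by omega
    have hb' : 0 < b + -1 := by omega
    omega
  · rw [if_neg hp]
    by_cases e1 : a + 1 = 0
    · omega
    · have e2 : b + -1 = 0 := by
        by_contra e
        exact hp (mul_neg_of_neg_of_pos (by omega) (by omega))
      omega

lemma term2 {a b : ℤ} (h1 : 0 < a) (h2 : b < 0) :
    (if (a + -1) * (b + 1) < 0 then min |a + -1| |b + 1| else 0)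
      = (if a * b < 0 then min |a| |b| else 0) - 1 := by
  rw [if_pos (mul_neg_of_pos_of_neg h1 h2), abs_of_pos h1, abs_of_neg h2]
  by_cases hp : (a + -1) * (b + 1) < 0
  · have ha : a + -1 ≠ 0 := by intro e; rw [e, zero_mul] at hp; exact absurd hp (by omega)
    have hb : b + 1 ≠ 0 := by intro e; rw [e, mul_zero] at hp; exact absurd hp (by omega)
    rw [if_pos hp, abs_of_pos (by omega), abs_of_neg (by omega)]
    have ha' : 0 < a + -1 := by omega
    have hb' : b + 1 < 0 := by omega
    omega
  · rw [if_neg hp]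
    by_cases e1 : a + -1 = 0
    · omega
    · have e2 : b + 1 = 0 := by
        by_contra e
        exact hp (mul_neg_of_pos_of_neg (by omega) (by omega))
      omega

lemma sum_split_i {M : Type} [AddCommMonoid M] {n : ℕ} (F G : Fin n → M) (i : Fin n) (c : M)
    (h : ∀ j, j ≠ i → F j = G j) (hi : F i + c = G i) : (∑ j, F j) + c = ∑ j, G j := by
  rw [← Finset.add_sum_erase _ F (Finset.mem_univ i),
    ← Finset.add_sum_erase _ G (Finset.mem_univ i),
    Finset.sum_congr rfl (fun j hj => h j (Finset.ne_of_mem_erase hj)),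
    add_right_comm, hi]

lemma child_apply_ne {n : ℕ} (l : Fin n → ℤ) (i j : Fin n) (c : ℤ) (h : j ≠ i) :
    (l + Pi.single i c : Fin n → ℤ) j = l j := by
  simp [Pi.single_eq_of_ne h]

lemma child_apply_eq {n : ℕ} (l : Fin n → ℤ) (i : Fin n) (c : ℤ) :
    (l + Pi.single i c : Fin n → ℤ) i = l i + c := by simp

lemma ds_child1 {n : ℕ} (l l' : Fin n → ℤ) (i : Fin n) (h1 : l i < 0) (h2 : 0 < l' i) :
    (∑ j, if (l + Pi.single i 1 : Fin n → ℤ) j * (l' + Pi.single i (-1) : Fin n → ℤ) j < 0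
        then min |(l + Pi.single i 1 : Fin n → ℤ) j| |(l' + Pi.single i (-1) : Fin n → ℤ) j|
        else 0) + 1
      = ∑ j, if l j * l' j < 0 then min |l j| |l' j| else 0 := by
  refine sum_split_i _ _ i 1
    (fun j hj => by rw [child_apply_ne _ _ _ _ hj, child_apply_ne _ _ _ _ hj]) ?_
  rw [child_apply_eq, child_apply_eq, term1 h1 h2]
  ring

lemma ds_child2 {n : ℕ} (l l' : Fin n → ℤ) (i : Fin n) (h1 : 0 < l i) (h2 : l' i < 0) :
    (∑ j, if (l + Pi.single i (-1) : Fin n → ℤ) j * (l' + Pi.single i 1 : Fin n → ℤ) j < 0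
        then min |(l + Pi.single i (-1) : Fin n → ℤ) j| |(l' + Pi.single i 1 : Fin n → ℤ) j|
        else 0) + 1
      = ∑ j, if l j * l' j < 0 then min |l j| |l' j| else 0 := by
  refine sum_split_i _ _ i 1
    (fun j hj => by rw [child_apply_ne _ _ _ _ hj, child_apply_ne _ _ _ _ hj]) ?_
  rw [child_apply_eq, child_apply_eq, term2 h1 h2]
  ring

lemma Dn_child1 {n : ℕ} (l l' : Fin n → ℤ) (i : Fin n) (h1 : l i < 0) (h2 : 0 < l' i) :
    Dn (l + Pi.single i 1) (l' + Pi.single i (-1)) = Dn l l' := by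
  have h := sum_split_i
    (fun j => if 0 < (l + Pi.single i 1 : Fin n → ℤ) j ∧ (l' + Pi.single i (-1) : Fin n → ℤ) j < 0
      then min ((l + Pi.single i 1 : Fin n → ℤ) j).toNat
        (-((l' + Pi.single i (-1) : Fin n → ℤ) j)).toNat else 0)
    (fun j => if 0 < l j ∧ l' j < 0 then min (l j).toNat (-(l' j)).toNat else 0) i 0
    (fun j hj => by rw [child_apply_ne _ _ _ _ hj, child_apply_ne _ _ _ _ hj]) ?_
  · simpa [Dn] using h
  · rw [child_apply_eq, child_apply_eq, if_neg (by omega), if_neg (by omega)]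

lemma Dn_child2 {n : ℕ} (l l' : Fin n → ℤ) (i : Fin n) (h1 : 0 < l i) (h2 : l' i < 0) :
    Dn (l + Pi.single i (-1)) (l' + Pi.single i 1) + 1 = Dn l l' := by
  refine sum_split_i _ _ i 1
    (fun j hj => by rw [child_apply_ne _ _ _ _ hj, child_apply_ne _ _ _ _ hj]) ?_
  rw [child_apply_eq, child_apply_eq, if_pos (show 0 < l i ∧ l' i < 0 from ⟨h1, h2⟩)]
  by_cases hc : 0 < l i + -1 ∧ l' i + 1 < 0
  · rw [if_pos hc]; omega
  · rw [if_neg hc]; omega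

lemma child_add {n : ℕ} (l l' : Fin n → ℤ) (i : Fin n) (c c' : ℤ) (hcc : c + c' = 0) :
    (l + Pi.single i c) + (l' + Pi.single i c') = l + l' := by
  funext j
  by_cases hj : j = i
  · subst hj
    simp only [Pi.add_apply, Pi.single_eq_same]
    omega
  · simp only [Pi.add_apply, Pi.single_eq_of_ne hj]
    ring

lemma transv_def {n k : ℕ} (f g : Qn n) :
    LinearMap.mul' ℂ (Qn n) ((Gam n ^ k) (f ⊗ₜ[ℂ] g)) = transv n k f g := rfl

lemma key {n : ℕ} : ∀ d : ℕ, ∀ l l' : Fin n → ℤ,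
    ((d : ℤ) = ∑ j, if l j * l' j < 0 then min |l j| |l' j| else 0) →
    ∃ c : ℝ, 0 < c ∧ transv n d (mu n l) (mu n l') =
      ((((-1 : ℝ) ^ Dn l l' * c : ℝ) : ℂ)) • mu n (l + l') := by
  intro d
  induction d with
  | zero =>
    intro l l' hd
    have hsum : ∑ j, (if l j * l' j < 0 then min |l j| |l' j| else 0) = 0 := by
      rw [← hd]; norm_num
    have hterm : ∀ j, ¬ (l j * l' j < 0) := by
      intro j hj
      have h0 := (Finset.sum_eq_zero_iff_of_nonneg (fun j _ => by positivity)).mp hsum j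
        (Finset.mem_univ j)
      rw [if_pos hj] at h0
      have hl : l j ≠ 0 := fun e => by rw [e, zero_mul] at hj; exact absurd hj (by omega)
      have hl' : l' j ≠ 0 := fun e => by rw [e, mul_zero] at hj; exact absurd hj (by omega)
      have : |l j| = 0 ∨ |l' j| = 0 := by
        rcases le_total |l j| |l' j| with h|h
        · left; have := min_eq_left h ▸ h0; omega
        · right; have := min_eq_right h ▸ h0; omega
      rcases this with h|h
      · exact hl (abs_eq_zero.mp h)
      · exact hl' (abs_eq_zero.mp h)
    have hD : Dn l l' = 0 := by
      apply Finset.sum_eq_zero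
      intro j _
      rw [if_neg]
      rintro ⟨h1, h2⟩
      exact hterm j (mul_neg_of_pos_of_neg h1 h2)
    refine ⟨1, one_pos, ?_⟩
    rw [transv_zero, mu_mul_mu l l' hterm, hD]
    norm_num
  | succ d ih =>
    intro l l' hd
    have hA : (Finset.univ.filter (fun i : Fin n => l i * l' i < 0)).Nonempty := by
      rw [Finset.filter_nonempty_iff]
      by_contra hA
      push_neg at hA
      have : ∑ j, (if l j * l' j < 0 then min |l j| |l' j| else 0) = 0 :=
        Finset.sum_eq_zero fun j _ => if_neg (not_lt.mpr (hA j (Finset.mem_univ j)))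
      rw [this] at hd
      exact absurd hd (by push_cast; omega)
    set A := Finset.univ.filter (fun i : Fin n => l i * l' i < 0) with hAdef
    have main : ∀ i : Fin n, ∃ p : ℝ, (i ∈ A → 0 < p ∧
        LinearMap.mul' ℂ (Qn n) ((Gam n ^ d)
          ((pderiv (Sum.inl i) (mu n l)) ⊗ₜ[ℂ] (pderiv (Sum.inr i) (mu n l'))
            - (pderiv (Sum.inr i) (mu n l)) ⊗ₜ[ℂ] (pderiv (Sum.inl i) (mu n l'))))
        = (((-1 : ℝ) ^ Dn l l' * p : ℝ) : ℂ) • mu n (l + l')) := by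
      intro i
      by_cases hi : i ∈ A
      swap
      · exact ⟨1, fun h => absurd h hi⟩
      have hprod : l i * l' i < 0 := (Finset.mem_filter.mp hi).2
      rcases mul_neg_iff.mp hprod with ⟨h1, h2⟩ | ⟨h1, h2⟩
      · -- 0 < l i, l' i < 0
        have hchild : ((d : ℕ) : ℤ) = ∑ j,
            if (l + Pi.single i (-1) : Fin n → ℤ) j * (l' + Pi.single i 1 : Fin n → ℤ) j < 0
            then min |(l + Pi.single i (-1) : Fin n → ℤ) j| |(l' + Pi.single i 1 : Fin n → ℤ) j|
            else 0 := by
          have := ds_child2 l l' i h1 h2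
          push_cast at hd ⊢
          omega
        obtain ⟨c, hc, heq⟩ := ih _ _ hchild
        refine ⟨((l i).toNat : ℝ) * ((-(l' i)).toNat : ℝ) * c, fun _ => ⟨by
          have : 1 ≤ (l i).toNat := by omega
          have : 1 ≤ (-(l' i)).toNat := by omega
          positivity, ?_⟩⟩
        rw [pderiv_inl_mu_zero l i h1.le, pderiv_inr_mu l i h1, pderiv_inl_mu l' i h2,
          TensorProduct.zero_tmul, zero_sub, TensorProduct.smul_tmul_smul, map_neg, map_neg,
          map_smul, map_smul, transv_def, heq]
        rw [child_add l l' i (-1) 1 (by ring), ← Dn_child2 l l' i h1 h2, pow_succ]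
        rw [smul_smul, ← neg_smul]
        congr 1
        push_cast
        ring
      · -- l i < 0, 0 < l' i
        have hchild : ((d : ℕ) : ℤ) = ∑ j,
            if (l + Pi.single i 1 : Fin n → ℤ) j * (l' + Pi.single i (-1) : Fin n → ℤ) j < 0
            then min |(l + Pi.single i 1 : Fin n → ℤ) j| |(l' + Pi.single i (-1) : Fin n → ℤ) j|
            else 0 := by
          have := ds_child1 l l' i h1 h2
          push_cast at hd ⊢
          omega
        obtain ⟨c, hc, heq⟩ := ih _ _ hchild
        refine ⟨((-(l i)).toNat : ℝ) * ((l' i).toNat : ℝ) * c, fun _ => ⟨by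
          have : 1 ≤ (-(l i)).toNat := by omega
          have : 1 ≤ (l' i).toNat := by omega
          positivity, ?_⟩⟩
        rw [pderiv_inl_mu l i h1, pderiv_inr_mu l' i h2, pderiv_inr_mu_zero l i h1.le,
          TensorProduct.zero_tmul, sub_zero, TensorProduct.smul_tmul_smul,
          map_smul, map_smul, transv_def, heq]
        rw [child_add l l' i 1 (-1) (by ring), Dn_child1 l l' i h1 h2]
        rw [smul_smul]
        congr 1
        push_cast
        ring
    choose p hp using main
    refine ⟨∑ i ∈ A, p i, Finset.sum_pos (fun i hi => ((hp i) hi).1) hA, ?_⟩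
    have expand : transv n (d+1) (mu n l) (mu n l') = ∑ i : Fin n,
        LinearMap.mul' ℂ (Qn n) ((Gam n ^ d)
          ((pderiv (Sum.inl i) (mu n l)) ⊗ₜ[ℂ] (pderiv (Sum.inr i) (mu n l'))
            - (pderiv (Sum.inr i) (mu n l)) ⊗ₜ[ℂ] (pderiv (Sum.inl i) (mu n l')))) := by
      rw [transv, pow_succ, Module.End.mul_apply, Gam_tmul, map_sum, map_sum]
    have hzero : ∀ i ∈ Finset.univ, i ∉ A →
        LinearMap.mul' ℂ (Qn n) ((Gam n ^ d)
          ((pderiv (Sum.inl i) (mu n l)) ⊗ₜ[ℂ] (pderiv (Sum.inr i) (mu n l'))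
            - (pderiv (Sum.inr i) (mu n l)) ⊗ₜ[ℂ] (pderiv (Sum.inl i) (mu n l')))) = 0 := by
      intro i _ hi
      have hnprod : ¬ (l i * l' i < 0) := by
        intro h; exact hi (Finset.mem_filter.mpr ⟨Finset.mem_univ i, h⟩)
      rcases mul_nonneg_iff.mp (not_lt.mp hnprod) with ⟨h1, h2⟩ | ⟨h1, h2⟩
      · rw [pderiv_inl_mu_zero l i h1, pderiv_inl_mu_zero l' i h2,
          TensorProduct.zero_tmul, TensorProduct.tmul_zero, sub_zero, map_zero, map_zero]
      · rw [pderiv_inr_mu_zero l i h1, pderiv_inr_mu_zero l' i h2,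
          TensorProduct.tmul_zero, TensorProduct.zero_tmul, sub_zero, map_zero, map_zero]
    rw [expand, ← Finset.sum_subset (Finset.subset_univ A) hzero]
    rw [Finset.sum_congr rfl (fun i hi => ((hp i) hi).2), ← Finset.sum_smul]
    congr 1
    push_cast
    rw [← Finset.mul_sum]

/-- with `d = ∑_j d_j`, where `d_j = min(|l_j|, |l'_j|)` if `l_j l'_j < 0`
and `d_j = 0` otherwise, there is a nonzero scalar `c` with `[μ_l, μ_{l'}]_d = c·μ_{l+l'}`;
in particular `μ_{l+l'}` lies in any subspace of `Q` containing `μ_l` and `μ_{l'}` and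
closed under all transvectant products. -/
theorem stmt7 (n : ℕ) (hn : 1 ≤ n) (l l' : Fin n → ℤ) (d : ℕ)
    (hd : (d : ℤ) = ∑ j, if l j * l' j < 0 then min |l j| |l' j| else 0) :
    (∃ c : ℂ, c ≠ 0 ∧ transv n d (mu n l) (mu n l') = c • mu n (l + l')) ∧
    (∀ S : Submodule ℂ (Qn n), mu n l ∈ S → mu n l' ∈ S →
      (∀ f ∈ S, ∀ g ∈ S, ∀ k : ℕ, transv n k f g ∈ S) → mu n (l + l') ∈ S) := by
  obtain ⟨c₀, hc₀, heq⟩ := key d l l' hd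
  have hcne : ((((-1 : ℝ) ^ Dn l l' * c₀ : ℝ)) : ℂ) ≠ 0 := by
    rw [Complex.ofReal_ne_zero]
    exact mul_ne_zero (pow_ne_zero _ (by norm_num)) hc₀.ne'
  refine ⟨⟨_, hcne, heq⟩, ?_⟩
  intro S hl hl' hS
  have hmem := hS _ hl _ hl' d
  rw [heq] at hmem
  have h2 := S.smul_mem (((((-1 : ℝ) ^ Dn l l' * c₀ : ℝ)) : ℂ))⁻¹ hmem
  rwa [inv_smul_smul₀ hcne] at h2

end
end

section
/- Sym^𝔤 is a *-subalgebra of Q: for all f, g ∈ Sym^𝔤 and all k ≥ 0, the transvectant [f,g]_k again lies in Sym^𝔤. -/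
open MvPolynomial TensorProduct

noncomputable section

/-- The orthogonal complement `A^⊥ = {u ∈ ℂ^n : ∑_j u_j a_j = 0 for all a ∈ A}`. -/
def perpC (n : ℕ) (A : Submodule ℂ (Fin n → ℂ)) : Set (Fin n → ℂ) :=
  {u | ∀ v ∈ A, ∑ j, u j * v j = 0}

/-- `Sym^𝔤`: the ℂ-linear span of the monomials `x^b y^a` with `a - b ∈ A^⊥`. -/
def SymG (n : ℕ) (A : Submodule ℂ (Fin n → ℂ)) : Submodule ℂ (Qn n) :=
  Submodule.span ℂ {q : Qn n | ∃ a b : Fin n → ℕ,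
    (fun j => ((a j : ℂ) - (b j : ℂ))) ∈ perpC n A ∧
    q = (∏ j : Fin n, (X (Sum.inl j) : Qn n) ^ b j) *
        ∏ j : Fin n, (X (Sum.inr j) : Qn n) ^ a j}

/-- The weight of an exponent vector. -/
def wt (n : ℕ) (d : Fin n ⊕ Fin n →₀ ℕ) : Fin n → ℂ :=
  fun j => (d (Sum.inr j) : ℂ) - (d (Sum.inl j) : ℂ)

lemma perp_add {n : ℕ} {A : Submodule ℂ (Fin n → ℂ)} {u v : Fin n → ℂ}
    (hu : u ∈ perpC n A) (hv : v ∈ perpC n A) : u + v ∈ perpC n A := by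
  intro w hw
  have := hu w hw
  have := hv w hw
  simp only [Pi.add_apply, add_mul, Finset.sum_add_distrib]
  rw [hu w hw, hv w hw, add_zero]

lemma prod_monomial {n : ℕ} {ι : Type*} (s : Finset ι) (f : ι → (Fin n ⊕ Fin n →₀ ℕ)) :
    (∏ i ∈ s, monomial (f i) (1 : ℂ)) = monomial (∑ i ∈ s, f i) 1 := by
  induction s using Finset.cons_induction with
  | empty => simp [monomial_zero']
  | cons a s ha ih => rw [Finset.prod_cons, ih, monomial_mul, Finset.sum_cons, one_mul]

lemma xy_eq_monomial {n : ℕ} (a b : Fin n → ℕ) :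
    ((∏ j : Fin n, (X (Sum.inl j) : Qn n) ^ b j) *
        ∏ j : Fin n, (X (Sum.inr j) : Qn n) ^ a j) =
      monomial ((∑ j : Fin n, Finsupp.single (Sum.inl j) (b j)) +
        ∑ j : Fin n, Finsupp.single (Sum.inr j) (a j)) (1 : ℂ) := by
  simp only [X_pow_eq_monomial, prod_monomial, monomial_mul, one_mul]

lemma finsupp_decomp {n : ℕ} (c : Fin n ⊕ Fin n →₀ ℕ) :
    c = (∑ j : Fin n, Finsupp.single (Sum.inl j) (c (Sum.inl j))) +
        ∑ j : Fin n, Finsupp.single (Sum.inr j) (c (Sum.inr j)) := by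
  ext s
  cases s with
  | inl i =>
    simp [Finsupp.finset_sum_apply, Finsupp.single_apply, Sum.inl.injEq,
      Finset.sum_ite_eq]
  | inr i =>
    simp [Finsupp.finset_sum_apply, Finsupp.single_apply, Sum.inr.injEq,
      Finset.sum_ite_eq]

lemma wt_decomp {n : ℕ} (a b : Fin n → ℕ) :
    wt n ((∑ j : Fin n, Finsupp.single (Sum.inl j) (b j)) +
        ∑ j : Fin n, Finsupp.single (Sum.inr j) (a j)) =
      fun j => ((a j : ℂ) - (b j : ℂ)) := by
  funext j
  simp [wt, Finsupp.finset_sum_apply, Finsupp.single_apply, Sum.inl.injEq, Sum.inr.injEq,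
    Finset.sum_ite_eq]

lemma monomial_mem_SymG {n : ℕ} {A : Submodule ℂ (Fin n → ℂ)} {d : Fin n ⊕ Fin n →₀ ℕ}
    (hd : wt n d ∈ perpC n A) : monomial d (1 : ℂ) ∈ SymG n A := by
  apply Submodule.subset_span
  refine ⟨fun j => d (Sum.inr j), fun j => d (Sum.inl j), ?_, ?_⟩
  · exact hd
  · rw [xy_eq_monomial, ← finsupp_decomp d]

/-- Submodule of the tensor square spanned by weight-compatible pairs of monomials. -/
def TS (n : ℕ) (A : Submodule ℂ (Fin n → ℂ)) : Submodule ℂ (Qn n ⊗[ℂ] Qn n) :=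
  Submodule.span ℂ {t | ∃ d e : Fin n ⊕ Fin n →₀ ℕ,
    wt n d + wt n e ∈ perpC n A ∧ t = monomial d (1 : ℂ) ⊗ₜ[ℂ] monomial e (1 : ℂ)}

lemma tmul_mem_TS {n : ℕ} {A : Submodule ℂ (Fin n → ℂ)} {f g : Qn n}
    (hf : f ∈ SymG n A) (hg : g ∈ SymG n A) : f ⊗ₜ[ℂ] g ∈ TS n A := by
  induction hf using Submodule.span_induction with
  | mem f hfm =>
    induction hg using Submodule.span_induction with
    | mem g hgm =>
      obtain ⟨a, b, hab, rfl⟩ := hfm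
      obtain ⟨a', b', hab', rfl⟩ := hgm
      apply Submodule.subset_span
      rw [xy_eq_monomial, xy_eq_monomial]
      refine ⟨_, _, ?_, rfl⟩
      rw [wt_decomp, wt_decomp]
      exact perp_add hab hab'
    | zero => rw [tmul_zero]; exact Submodule.zero_mem _
    | add x y _ _ hx hy => rw [tmul_add]; exact Submodule.add_mem _ hx hy
    | smul c x _ hx => rw [tmul_smul]; exact Submodule.smul_mem _ c hx
  | zero => rw [zero_tmul]; exact Submodule.zero_mem _
  | add x y _ _ hx hy => rw [add_tmul]; exact Submodule.add_mem _ hx hy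
  | smul c x _ hx => rw [← smul_tmul']; exact Submodule.smul_mem _ c hx

lemma wt_sub_single_inl {n : ℕ} (d : Fin n ⊕ Fin n →₀ ℕ) (i : Fin n) (hd : d (Sum.inl i) ≠ 0) :
    wt n (d - Finsupp.single (Sum.inl i) 1) = wt n d + fun j => if j = i then 1 else 0 := by
  funext j
  simp only [wt, Finsupp.tsub_apply, Finsupp.single_apply, Pi.add_apply]
  by_cases h : j = i
  · subst h
    have h1 : 1 ≤ d (Sum.inl j) := Nat.one_le_iff_ne_zero.2 hd
    simp [Nat.cast_sub h1]
    ring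
  · have h' : (Sum.inl i : Fin n ⊕ Fin n) ≠ Sum.inl j := by simpa using Ne.symm h
    simp [h', h]

lemma wt_sub_single_inr {n : ℕ} (d : Fin n ⊕ Fin n →₀ ℕ) (i : Fin n) (hd : d (Sum.inr i) ≠ 0) :
    wt n (d - Finsupp.single (Sum.inr i) 1) = wt n d - fun j => if j = i then 1 else 0 := by
  funext j
  simp only [wt, Finsupp.tsub_apply, Finsupp.single_apply, Pi.sub_apply]
  by_cases h : j = i
  · subst h
    have h1 : 1 ≤ d (Sum.inr j) := Nat.one_le_iff_ne_zero.2 hd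
    simp [Nat.cast_sub h1]
    ring
  · have h' : (Sum.inr i : Fin n ⊕ Fin n) ≠ Sum.inr j := by simpa using Ne.symm h
    simp [h', h]

lemma monomial_tmul_eq_smul {n : ℕ} (d e : Fin n ⊕ Fin n →₀ ℕ) (c1 c2 : ℂ) :
    (monomial d c1 : Qn n) ⊗ₜ[ℂ] (monomial e c2 : Qn n) =
      (c1 * c2) • ((monomial d (1:ℂ) : Qn n) ⊗ₜ[ℂ] (monomial e (1:ℂ) : Qn n)) := by
  have h1 : (monomial d c1 : Qn n) = c1 • monomial d 1 := by rw [smul_monomial, smul_eq_mul, mul_one]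
  have h2 : (monomial e c2 : Qn n) = c2 • monomial e 1 := by rw [smul_monomial, smul_eq_mul, mul_one]
  rw [h1, h2, ← smul_tmul', tmul_smul, smul_smul]

lemma gam_mem_TS {n : ℕ} {A : Submodule ℂ (Fin n → ℂ)} {t : Qn n ⊗[ℂ] Qn n}
    (ht : t ∈ TS n A) : Gam n t ∈ TS n A := by
  induction ht using Submodule.span_induction with
  | zero => simp
  | add x y _ _ hx hy => rw [map_add]; exact Submodule.add_mem _ hx hy
  | smul c x _ hx => rw [map_smul]; exact Submodule.smul_mem _ c hx
  | mem t htm =>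
    obtain ⟨d, e, hde, rfl⟩ := htm
    rw [Gam, LinearMap.sum_apply]
    apply Submodule.sum_mem
    intro i _
    rw [LinearMap.sub_apply]
    apply Submodule.sub_mem
    · -- first term: ∂x ⊗ ∂y
      rw [TensorProduct.map_tmul]
      simp only [LinearMap.coe_mk, Derivation.coeFn_coe, pderiv_monomial, one_mul]
      by_cases hd : d (Sum.inl i) = 0
      · simp [hd]
      by_cases he : e (Sum.inr i) = 0
      · simp [he]
      rw [monomial_tmul_eq_smul]
      apply Submodule.smul_mem
      apply Submodule.subset_span
      refine ⟨_, _, ?_, rfl⟩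
      rw [wt_sub_single_inl d i hd, wt_sub_single_inr e i he]
      have : wt n d + (fun j => if j = i then (1:ℂ) else 0) +
          (wt n e - fun j => if j = i then (1:ℂ) else 0) = wt n d + wt n e := by
        funext j; simp only [Pi.add_apply, Pi.sub_apply]; ring
      rw [this]; exact hde
    · -- second term: ∂y ⊗ ∂x
      rw [TensorProduct.map_tmul]
      simp only [LinearMap.coe_mk, Derivation.coeFn_coe, pderiv_monomial, one_mul]
      by_cases hd : d (Sum.inr i) = 0
      · simp [hd]
      by_cases he : e (Sum.inl i) = 0
      · simp [he]
      rw [monomial_tmul_eq_smul]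
      apply Submodule.smul_mem
      apply Submodule.subset_span
      refine ⟨_, _, ?_, rfl⟩
      rw [wt_sub_single_inr d i hd, wt_sub_single_inl e i he]
      have : wt n d - (fun j => if j = i then (1:ℂ) else 0) +
          (wt n e + fun j => if j = i then (1:ℂ) else 0) = wt n d + wt n e := by
        funext j; simp only [Pi.add_apply, Pi.sub_apply]; ring
      rw [this]; exact hde

lemma mul_TS_mem_SymG {n : ℕ} {A : Submodule ℂ (Fin n → ℂ)} {t : Qn n ⊗[ℂ] Qn n}
    (ht : t ∈ TS n A) : LinearMap.mul' ℂ (Qn n) t ∈ SymG n A := by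
  induction ht using Submodule.span_induction with
  | zero => simp
  | add x y _ _ hx hy => rw [map_add]; exact Submodule.add_mem _ hx hy
  | smul c x _ hx => rw [map_smul]; exact Submodule.smul_mem _ c hx
  | mem t htm =>
    obtain ⟨d, e, hde, rfl⟩ := htm
    rw [LinearMap.mul'_apply, monomial_mul, one_mul]
    apply monomial_mem_SymG
    have : wt n (d + e) = wt n d + wt n e := by
      funext j; simp [wt]; ring
    rw [this]; exact hde

/-- `Sym^𝔤` is a `*`-subalgebra of `Q`: it is closed under all the
transvectant products `[·,·]_k`, `k ≥ 0`. -/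
theorem stmt9 (n : ℕ) (hn : 1 ≤ n) (A : Submodule ℂ (Fin n → ℂ)) :
    ∀ f ∈ SymG n A, ∀ g ∈ SymG n A, ∀ k : ℕ, transv n k f g ∈ SymG n A := by
  intro f hf g hg k
  apply mul_TS_mem_SymG
  have base : f ⊗ₜ[ℂ] g ∈ TS n A := tmul_mem_TS hf hg
  induction k with
  | zero => simpa using base
  | succ m ih =>
    rw [pow_succ', Module.End.mul_apply]
    exact gam_mem_TS ih

end
end

section
/- Suppose A ⊆ ℂ^n is a subspace whose perpendicular lattice A^⊥ ∩ ℤ^n has ℤ-basis l^1,…,l^r. Then the smallest ℂ-subspace of Q that contains the elements 1, x_1 y_1, …, x_n y_n, μ_{l^1}, …, μ_{l^r}, μ_{-l^1}, …, μ_{-l^r} and is closed under all the transvectant products (f,g) ↦ [f,g]_k for k ≥ 0 is equal to Sym^𝔤. In other words, Sym^𝔤 is generated as a *-algebra by this finite collection. -/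
open MvPolynomial TensorProduct

noncomputable section

namespace Stmt10

variable {n : ℕ} {A : Submodule ℂ (Fin n → ℂ)}

lemma perp_zero : (0 : Fin n → ℂ) ∈ perpC n A := by
  intro v hv; simp

lemma perp_add {u w : Fin n → ℂ} (hu : u ∈ perpC n A) (hw : w ∈ perpC n A) :
    u + w ∈ perpC n A := by
  intro v hv
  have := hu v hv; have := hw v hv
  simp only [Pi.add_apply, add_mul, Finset.sum_add_distrib]
  rw [hu v hv, hw v hv]; ring
  
lemma perp_neg {u : Fin n → ℂ} (hu : u ∈ perpC n A) : -u ∈ perpC n A := by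
  intro v hv
  have h := hu v hv
  simp only [Pi.neg_apply, neg_mul, Finset.sum_neg_distrib]
  rw [h]; ring

/-- weight of an exponent vector -/
def wt (d : Fin n ⊕ Fin n →₀ ℕ) : Fin n → ℂ := fun j => (d (Sum.inr j) : ℂ) - d (Sum.inl j)

/-- The subspace of polynomials supported on monomials of weight in `A^⊥`. -/
def S0 (n : ℕ) (A : Submodule ℂ (Fin n → ℂ)) : Submodule ℂ (Qn n) where
  carrier := {f | ∀ d ∈ f.support, wt d ∈ perpC n A}
  zero_mem' := by intro d hd; simp at hd
  add_mem' := by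
    intro f g hf hg d hd
    rcases Finset.mem_union.mp (MvPolynomial.support_add hd) with h | h
    · exact hf d h
    · exact hg d h
  smul_mem' := by
    intro c f hf d hd
    exact hf d (Finsupp.support_smul hd)

lemma monomial_mem_S0 {d : Fin n ⊕ Fin n →₀ ℕ} {c : ℂ} (h : wt d ∈ perpC n A) :
    monomial d c ∈ S0 n A := by
  intro d' hd'
  classical
  rw [MvPolynomial.support_monomial] at hd'
  by_cases hc : c = 0
  · simp [hc] at hd'
  · simp [hc] at hd'; subst hd'; exact h

/-- exponent finsupp from two ℕ-vectors -/
def ee (b a : Fin n → ℕ) : Fin n ⊕ Fin n →₀ ℕ :=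
  Finsupp.equivFunOnFinite.symm (Sum.elim b a)

@[simp] lemma ee_inl (b a : Fin n → ℕ) (j : Fin n) : ee b a (Sum.inl j) = b j := rfl
@[simp] lemma ee_inr (b a : Fin n → ℕ) (j : Fin n) : ee b a (Sum.inr j) = a j := rfl

/-- The monomial x^b y^a -/
def M (b a : Fin n → ℕ) : Qn n :=
  (∏ j : Fin n, (X (Sum.inl j) : Qn n) ^ b j) *
    ∏ j : Fin n, (X (Sum.inr j) : Qn n) ^ a j

lemma M_eq_monomial (b a : Fin n → ℕ) : M b a = monomial (ee b a) 1 := by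
  rw [monomial_eq, Finsupp.prod_fintype _ _ (by intro s; simp)]
  rw [Fintype.prod_sum_type]
  simp [M, mul_comm]

lemma wt_ee (b a : Fin n → ℕ) : wt (ee b a) = fun j => (a j : ℂ) - b j := rfl

lemma ee_add (b a b' a' : Fin n → ℕ) : ee b a + ee b' a' = ee (b + b') (a + a') := by
  ext s; cases s <;> simp

lemma M_mul (b a b' a' : Fin n → ℕ) : M b a * M b' a' = M (b + b') (a + a') := by
  rw [M_eq_monomial, M_eq_monomial, M_eq_monomial, monomial_mul, ee_add, one_mul]

lemma M_zero : M (0 : Fin n → ℕ) 0 = 1 := by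
  rw [M_eq_monomial]
  have : ee (0 : Fin n → ℕ) 0 = 0 := by ext s; cases s <;> simp
  rw [this, monomial_zero']; simp

lemma M_pow (b a : Fin n → ℕ) (m : ℕ) : M b a ^ m = M (m • b) (m • a) := by
  induction m with
  | zero => simpa using M_zero.symm
  | succ k ih =>
      rw [pow_succ, ih, M_mul]
      congr 1 <;> · funext j; simp [Nat.succ_mul, Nat.add_comm]

lemma mu_eq (l : Fin n → ℤ) :
    mu n l = M (fun j => (-(l j)).toNat) (fun j => (l j).toNat) := by
  rw [M, ← Finset.prod_mul_distrib]
  refine Finset.prod_congr rfl fun j _ => ?_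
  by_cases h : 0 < l j
  · have h1 : (-(l j)).toNat = 0 := by omega
    simp [h, h1]
  · have h1 : (l j).toNat = 0 := by omega
    simp [h, h1]

lemma Gam_tmul (f g : Qn n) :
    Gam n (f ⊗ₜ[ℂ] g) = ∑ i : Fin n,
      (pderiv (Sum.inl i) f ⊗ₜ[ℂ] pderiv (Sum.inr i) g
        - pderiv (Sum.inr i) f ⊗ₜ[ℂ] pderiv (Sum.inl i) g) := by
  simp [Gam, LinearMap.sum_apply, LinearMap.sub_apply, TensorProduct.map_tmul]

lemma transv_zero_eq (f g : Qn n) : transv n 0 f g = f * g := by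
  simp [transv, LinearMap.mul'_apply]

lemma Gam_xy_tmul (j : Fin n) (f : Qn n) :
    Gam n ((X (Sum.inl j) * X (Sum.inr j)) ⊗ₜ[ℂ] f)
      = X (Sum.inr j) ⊗ₜ[ℂ] pderiv (Sum.inr j) f
        - X (Sum.inl j) ⊗ₜ[ℂ] pderiv (Sum.inl j) f := by
  classical
  rw [Gam_tmul]
  rw [Finset.sum_eq_single j]
  · simp [pderiv_mul]
  · intro i _ hij
    simp [pderiv_mul, pderiv_X, Pi.single_apply, Sum.inl.injEq, Sum.inr.injEq, hij]
  · simp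

lemma Gam_sq_xy (j : Fin n) (f : Qn n) :
    (Gam n) ((Gam n) ((X (Sum.inl j) * X (Sum.inr j)) ⊗ₜ[ℂ] f))
      = - (1 ⊗ₜ[ℂ] pderiv (Sum.inl j) (pderiv (Sum.inr j) f))
        - 1 ⊗ₜ[ℂ] pderiv (Sum.inr j) (pderiv (Sum.inl j) f) := by
  classical
  rw [Gam_xy_tmul, map_sub, Gam_tmul, Gam_tmul]
  rw [Finset.sum_eq_single j, Finset.sum_eq_single j]
  · simp [TensorProduct.sub_tmul]
  · intro i _ hij
    simp [pderiv_X, Pi.single_apply, Sum.inl.injEq, Sum.inr.injEq, hij]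
  · simp
  · intro i _ hij
    simp [pderiv_X, Pi.single_apply, Sum.inl.injEq, Sum.inr.injEq, hij]
  · simp

lemma transv_two (j : Fin n) (f : Qn n) :
    transv n 2 (X (Sum.inl j) * X (Sum.inr j)) f
      = - pderiv (Sum.inl j) (pderiv (Sum.inr j) f)
        - pderiv (Sum.inr j) (pderiv (Sum.inl j) f) := by
  have h2 : (Gam n ^ 2) ((X (Sum.inl j) * X (Sum.inr j)) ⊗ₜ[ℂ] f)
      = (Gam n) ((Gam n) ((X (Sum.inl j) * X (Sum.inr j)) ⊗ₜ[ℂ] f)) := by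
    rw [pow_two]; rfl
  rw [transv, h2, Gam_sq_xy]
  simp [LinearMap.mul'_apply]

/-- bump a function by 1 at coordinate j -/
def bump (b : Fin n → ℕ) (j : Fin n) : Fin n → ℕ := fun k => if k = j then b k + 1 else b k

lemma ee_sub_inr (b a : Fin n → ℕ) (j : Fin n) :
    ee b (bump a j) - Finsupp.single (Sum.inr j) 1 = ee b a := by
  ext s
  cases s with
  | inl k => simp [Finsupp.single_apply]
  | inr k =>
      rcases eq_or_ne k j with h | h
      · subst h; simp [bump]
      · simp [Finsupp.single_apply, bump, h, Ne.symm h]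

lemma ee_sub_inl (b a : Fin n → ℕ) (j : Fin n) :
    ee (bump b j) a - Finsupp.single (Sum.inl j) 1 = ee b a := by
  ext s
  cases s with
  | inr k => simp [Finsupp.single_apply]
  | inl k =>
      rcases eq_or_ne k j with h | h
      · subst h; simp [bump]
      · simp [Finsupp.single_apply, bump, h, Ne.symm h]

lemma pd_inr (b a : Fin n → ℕ) (j : Fin n) :
    pderiv (Sum.inr j) (M b (bump a j)) = (((a j : ℂ)) + 1) • M b a := by
  rw [M_eq_monomial, M_eq_monomial, pderiv_monomial, ee_sub_inr]
  rw [smul_monomial]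
  congr 1
  simp [bump]

lemma pd_inl (b a : Fin n → ℕ) (j : Fin n) :
    pderiv (Sum.inl j) (M (bump b j) a) = (((b j : ℂ)) + 1) • M b a := by
  rw [M_eq_monomial, M_eq_monomial, pderiv_monomial, ee_sub_inl]
  rw [smul_monomial]
  congr 1
  simp [bump]

lemma transv_two_M (j : Fin n) (b a : Fin n → ℕ) :
    transv n 2 (X (Sum.inl j) * X (Sum.inr j)) (M (bump b j) (bump a j))
      = (-(2 * ((b j : ℂ) + 1) * ((a j : ℂ) + 1))) • M b a := by
  rw [transv_two]
  rw [pd_inr, Derivation.map_smul, pd_inl]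
  rw [pd_inl, Derivation.map_smul, pd_inr]
  rw [smul_smul, smul_smul, ← neg_smul, ← sub_smul]
  congr 1
  ring

section Sclosure

variable {S : Submodule ℂ (Qn n)}
  (htr : ∀ f ∈ S, ∀ g ∈ S, ∀ k : ℕ, transv n k f g ∈ S)
  (hxy : ∀ j : Fin n, (X (Sum.inl j) : Qn n) * X (Sum.inr j) ∈ S)
  (h1 : (1 : Qn n) ∈ S)

include htr

lemma mul_mem' {f g : Qn n} (hf : f ∈ S) (hg : g ∈ S) : f * g ∈ S := by
  have := htr f hf g hg 0; rwa [transv_zero_eq] at this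

include h1 in
lemma pow_mem' {f : Qn n} (hf : f ∈ S) (m : ℕ) : f ^ m ∈ S := by
  induction m with
  | zero => simpa using h1
  | succ k ih => rw [pow_succ]; exact mul_mem' htr ih hf

include hxy in
lemma strip_step (j : Fin n) {b a : Fin n → ℕ}
    (h : M (bump b j) (bump a j) ∈ S) : M b a ∈ S := by
  have ht := htr _ (hxy j) _ h 2
  rw [transv_two_M] at ht
  have hb : ((b j : ℂ) + 1) ≠ 0 := Nat.cast_add_one_ne_zero (b j)
  have ha : ((a j : ℂ) + 1) ≠ 0 := Nat.cast_add_one_ne_zero (a j)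
  have hc : (-(2 * ((b j : ℂ) + 1) * ((a j : ℂ) + 1))) ≠ 0 := by
    simp [hb, ha]
  have := S.smul_mem (-(2 * ((b j : ℂ) + 1) * ((a j : ℂ) + 1)))⁻¹ ht
  rwa [smul_smul, inv_mul_cancel₀ hc, one_smul] at this

include hxy in
lemma strip_all : ∀ s : ℕ, ∀ N b a : Fin n → ℕ, (∑ j, N j) = s →
    M (b + N) (a + N) ∈ S → M b a ∈ S := by
  intro s
  induction s with
  | zero =>
      intro N b a hs h
      have hN : N = 0 := by
        funext j
        have := (Finset.sum_eq_zero_iff.mp hs) j (Finset.mem_univ j)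
        simpa using this
      simpa [hN] using h
  | succ t ih =>
      intro N b a hs h
      have hex : ∃ j, N j ≠ 0 := by
        by_contra hc
        push_neg at hc
        simp [hc] at hs
      obtain ⟨j, hj⟩ := hex
      set N' : Fin n → ℕ := fun k => if k = j then N k - 1 else N k with hN'
      have hb : b + N = bump (b + N') j := by
        funext k
        rcases eq_or_ne k j with rfl | hkj
        · simp [bump, hN']; omega
        · simp [bump, hN', hkj]
      have ha : a + N = bump (a + N') j := by
        funext k
        rcases eq_or_ne k j with rfl | hkj
        · simp [bump, hN']; omega
        · simp [bump, hN', hkj]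
      rw [hb, ha] at h
      have h' := strip_step htr hxy j h
      refine ih N' b a ?_ h'
      have e1 := Finset.add_sum_erase Finset.univ N (Finset.mem_univ j)
      have e2 := Finset.add_sum_erase Finset.univ N' (Finset.mem_univ j)
      have e3 : ∑ k ∈ Finset.univ.erase j, N' k = ∑ k ∈ Finset.univ.erase j, N k := by
        refine Finset.sum_congr rfl fun k hk => ?_
        have : k ≠ j := Finset.ne_of_mem_erase hk
        simp [hN', this]
      have e4 : N' j = N j - 1 := by simp [hN']
      omega

include hxy h1 in
lemma Mbb_mem (b : Fin n → ℕ) : M b b ∈ S := by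
  have heq : M b b = ∏ j : Fin n, (X (Sum.inl j) * X (Sum.inr j) : Qn n) ^ b j := by
    rw [M, ← Finset.prod_mul_distrib]
    exact Finset.prod_congr rfl fun j _ => (mul_pow _ _ _).symm
  rw [heq]
  refine Finset.prod_induction _ (· ∈ S) (fun x y hx hy => mul_mem' htr hx hy) h1
    fun j _ => pow_mem' htr h1 (hxy j) (b j)

include hxy h1 in
lemma reach {b0 a0 b a : Fin n → ℕ}
    (hw : ∀ j, (a j : ℤ) - b j = (a0 j : ℤ) - b0 j)
    (h : M b0 a0 ∈ S) : M b a ∈ S := by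
  have hmem : M (b + b0) (a + b0) ∈ S := by
    have hm : M b0 a0 * M b b ∈ S := mul_mem' htr h (Mbb_mem htr hxy h1 b)
    rw [M_mul] at hm
    have e1 : b0 + b = b + b0 := add_comm _ _
    have e2 : a0 + b = a + b0 := by funext j; have := hw j; simp only [Pi.add_apply]; omega
    rwa [e1, e2] at hm
  exact strip_all htr hxy _ b0 b a rfl hmem

end Sclosure

lemma prod_M {ι : Type*} (s : Finset ι) (B A : ι → Fin n → ℕ) :
    ∏ i ∈ s, M (B i) (A i)
      = M (fun j => ∑ i ∈ s, B i j) (fun j => ∑ i ∈ s, A i j) := by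
  classical
  induction s using Finset.induction_on with
  | empty => simp only [Finset.prod_empty, Finset.sum_empty]; exact M_zero.symm
  | insert _ _ hx ih =>
      rw [Finset.prod_insert hx, ih, M_mul]
      congr 1 <;> funext j <;> simp [Finset.sum_insert hx]

lemma gen_mem {r : ℕ} (l : Fin r → Fin n → ℤ) {S : Submodule ℂ (Qn n)}
    (h1 : (1 : Qn n) ∈ S)
    (hxy : ∀ j : Fin n, (X (Sum.inl j) : Qn n) * X (Sum.inr j) ∈ S)
    (hmu : ∀ i, mu n (l i) ∈ S) (hmun : ∀ i, mu n (-(l i)) ∈ S)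
    (htr : ∀ f ∈ S, ∀ g ∈ S, ∀ k : ℕ, transv n k f g ∈ S)
    {b a : Fin n → ℕ} (c : Fin r → ℤ)
    (hu : ∀ j, (a j : ℤ) - b j = ∑ i, c i * l i j) :
    M b a ∈ S := by
  classical
  set Bf : Fin r → Fin n → ℕ := fun i j =>
    if 0 ≤ c i then (c i).toNat * (-(l i j)).toNat else (-(c i)).toNat * (l i j).toNat with hBf
  set Af : Fin r → Fin n → ℕ := fun i j =>
    if 0 ≤ c i then (c i).toNat * (l i j).toNat else (-(c i)).toNat * (-(l i j)).toNat with hAf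
  have hfac : ∀ i, M (Bf i) (Af i) ∈ S := by
    intro i
    by_cases hci : 0 ≤ c i
    · have heq : M (Bf i) (Af i) = mu n (l i) ^ (c i).toNat := by
        rw [mu_eq, M_pow]
        congr 1 <;> funext j <;>
          simp [hBf, hAf, hci, Pi.smul_apply, smul_eq_mul]
      rw [heq]; exact pow_mem' htr h1 (hmu i) _
    · have heq : M (Bf i) (Af i) = mu n (-(l i)) ^ (-(c i)).toNat := by
        rw [mu_eq, M_pow]
        congr 1 <;> funext j <;>
          simp [hBf, hAf, hci, Pi.smul_apply, smul_eq_mul]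
      rw [heq]; exact pow_mem' htr h1 (hmun i) _
  have hprod : M (fun j => ∑ i, Bf i j) (fun j => ∑ i, Af i j) ∈ S := by
    rw [← prod_M]
    exact Finset.prod_induction _ (· ∈ S) (fun x y hx hy => mul_mem' htr hx hy) h1
      fun i _ => hfac i
  refine reach htr hxy h1 (b0 := fun j => ∑ i, Bf i j) (a0 := fun j => ∑ i, Af i j)
    (fun j => ?_) hprod
  rw [hu j]
  push_cast
  rw [← Finset.sum_sub_distrib]
  refine Finset.sum_congr rfl fun i _ => ?_
  by_cases hci : 0 ≤ c i
  · simp only [hBf, hAf, if_pos hci]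
    push_cast
    rw [← mul_sub, Int.toNat_of_nonneg hci]
    congr 1
    omega
  · simp only [hBf, hAf, if_neg hci]
    push_cast
    rw [← mul_sub]
    have e1 : ((-(c i)).toNat : ℤ) = -(c i) := Int.toNat_of_nonneg (by omega)
    have e2 : ((-(l i j)).toNat : ℤ) - ((l i j).toNat : ℤ) = -(l i j) := by omega
    rw [e1, e2]; ring

lemma wt_add (d d' : Fin n ⊕ Fin n →₀ ℕ) : wt (d + d') = wt d + wt d' := by
  funext j
  simp only [wt, Finsupp.add_apply, Pi.add_apply]
  push_cast
  ring

lemma wt_zero : wt (0 : Fin n ⊕ Fin n →₀ ℕ) = 0 := by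
  funext j; simp [wt]

lemma ee_comp (d : Fin n ⊕ Fin n →₀ ℕ) :
    ee (fun j => d (Sum.inl j)) (fun j => d (Sum.inr j)) = d := by
  ext s; cases s <;> simp

lemma SymG_eq_S0 : SymG n A = S0 n A := by
  apply le_antisymm
  · rw [SymG, Submodule.span_le]
    rintro q ⟨a, b, hab, rfl⟩
    have h : ((∏ j : Fin n, (X (Sum.inl j) : Qn n) ^ b j) *
        ∏ j : Fin n, (X (Sum.inr j) : Qn n) ^ a j) = M b a := rfl
    rw [h, M_eq_monomial]
    exact monomial_mem_S0 (by rw [wt_ee]; exact hab)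
  · intro f hf
    rw [← support_sum_monomial_coeff f]
    refine Submodule.sum_mem _ fun d hd => ?_
    have hwd : wt d ∈ perpC n A := hf d hd
    have h : (monomial d (coeff d f) : Qn n)
        = (coeff d f) • M (fun j => d (Sum.inl j)) (fun j => d (Sum.inr j)) := by
      rw [M_eq_monomial, ee_comp, smul_monomial, smul_eq_mul, mul_one]
    rw [h]
    exact Submodule.smul_mem _ _ (Submodule.subset_span
      ⟨fun j => d (Sum.inr j), fun j => d (Sum.inl j), hwd, rfl⟩)

lemma one_mem_S0 : (1 : Qn n) ∈ S0 n A := by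
  have h : (1 : Qn n) = monomial 0 1 := by rw [monomial_zero']; simp
  rw [h]
  exact monomial_mem_S0 (by rw [wt_zero]; exact perp_zero)

lemma xy_mem_S0 (j : Fin n) : (X (Sum.inl j) : Qn n) * X (Sum.inr j) ∈ S0 n A := by
  have hX : ∀ s : Fin n ⊕ Fin n, (X s : Qn n) = monomial (Finsupp.single s 1) 1 := fun s => rfl
  rw [hX, hX, monomial_mul, one_mul]
  refine monomial_mem_S0 ?_
  have h : wt (Finsupp.single (Sum.inl j) 1 + Finsupp.single (Sum.inr j) 1)
      = (0 : Fin n → ℂ) := by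
    funext k
    simp only [wt, Finsupp.add_apply, Finsupp.single_apply, Pi.zero_apply]
    rcases eq_or_ne j k with rfl | hjk
    · simp
    · simp [hjk]
  rw [h]; exact perp_zero

lemma mu_mem_S0 (l : Fin n → ℤ) (h : (fun j => ((l j : ℤ) : ℂ)) ∈ perpC n A) :
    mu n l ∈ S0 n A := by
  rw [mu_eq, M_eq_monomial]
  refine monomial_mem_S0 ?_
  have he : wt (ee (fun j => (-(l j)).toNat) (fun j => (l j).toNat))
      = fun j => ((l j : ℤ) : ℂ) := by
    funext j
    rw [wt_ee]
    have h2 : ((l j).toNat : ℤ) - ((-(l j)).toNat : ℤ) = l j := by omega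
    have h3 := congrArg (fun z : ℤ => (z : ℂ)) h2
    push_cast at h3
    push_cast
    exact h3
  rw [he]; exact h

/-- tensors of matching weight -/
def T0 (n : ℕ) (A : Submodule ℂ (Fin n → ℂ)) : Submodule ℂ (Qn n ⊗[ℂ] Qn n) :=
  Submodule.span ℂ {t | ∃ d d' : (Fin n ⊕ Fin n →₀ ℕ), ∃ c c' : ℂ,
    wt d + wt d' ∈ perpC n A ∧ t = monomial d c ⊗ₜ[ℂ] monomial d' c'}

lemma tmul_mem_T0 {f g : Qn n} (hf : f ∈ S0 n A) (hg : g ∈ S0 n A) :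
    f ⊗ₜ[ℂ] g ∈ T0 n A := by
  rw [← support_sum_monomial_coeff f, ← support_sum_monomial_coeff g,
    TensorProduct.sum_tmul]
  refine Submodule.sum_mem _ fun d hd => ?_
  rw [TensorProduct.tmul_sum]
  refine Submodule.sum_mem _ fun d' hd' => ?_
  exact Submodule.subset_span ⟨d, d', _, _, perp_add (hf d hd) (hg d' hd'), rfl⟩

lemma wt_sub_inl {d : Fin n ⊕ Fin n →₀ ℕ} {i : Fin n} (h : d (Sum.inl i) ≠ 0) :
    wt (d - Finsupp.single (Sum.inl i) 1)
      = wt d + fun j => if i = j then (1 : ℂ) else 0 := by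
  funext j
  have hs : (d - Finsupp.single (Sum.inl i) 1 : Fin n ⊕ Fin n →₀ ℕ) (Sum.inr j)
      = d (Sum.inr j) := by
    simp [Finsupp.sub_apply, Finsupp.single_apply]
  have hs2 : (d - Finsupp.single (Sum.inl i) 1 : Fin n ⊕ Fin n →₀ ℕ) (Sum.inl j)
      = d (Sum.inl j) - (if i = j then 1 else 0) := by
    simp [Finsupp.sub_apply, Finsupp.single_apply]
  simp only [wt, Pi.add_apply, hs, hs2]
  rcases eq_or_ne i j with rfl | hij
  · rw [Nat.cast_sub (by simp; omega)]
    push_cast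
    simp only [if_pos rfl]
    ring
  · simp [hij]

lemma wt_sub_inr {d : Fin n ⊕ Fin n →₀ ℕ} {i : Fin n} (h : d (Sum.inr i) ≠ 0) :
    wt (d - Finsupp.single (Sum.inr i) 1)
      = wt d - fun j => if i = j then (1 : ℂ) else 0 := by
  funext j
  have hs : (d - Finsupp.single (Sum.inr i) 1 : Fin n ⊕ Fin n →₀ ℕ) (Sum.inl j)
      = d (Sum.inl j) := by
    simp [Finsupp.sub_apply, Finsupp.single_apply]
  have hs2 : (d - Finsupp.single (Sum.inr i) 1 : Fin n ⊕ Fin n →₀ ℕ) (Sum.inr j)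
      = d (Sum.inr j) - (if i = j then 1 else 0) := by
    simp [Finsupp.sub_apply, Finsupp.single_apply]
  simp only [wt, Pi.sub_apply, hs, hs2]
  rcases eq_or_ne i j with rfl | hij
  · rw [Nat.cast_sub (by simp; omega)]
    push_cast
    simp only [if_pos rfl]
    ring
  · simp [hij]

lemma Gam_mem_T0 {t : Qn n ⊗[ℂ] Qn n} (ht : t ∈ T0 n A) : Gam n t ∈ T0 n A := by
  induction ht using Submodule.span_induction with
  | mem x hx =>
      obtain ⟨d, d', c, c', hw, rfl⟩ := hx
      rw [Gam_tmul]
      refine Submodule.sum_mem _ fun i _ => sub_mem ?_ ?_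
      · rw [pderiv_monomial, pderiv_monomial]
        by_cases hd1 : d (Sum.inl i) = 0
        · rw [hd1]; simp
        · by_cases hd2 : d' (Sum.inr i) = 0
          · rw [hd2]; simp
          · refine Submodule.subset_span ⟨_, _, _, _, ?_, rfl⟩
            rw [wt_sub_inl hd1, wt_sub_inr hd2]
            have : wt d + (fun j => if i = j then (1:ℂ) else 0)
                + (wt d' - fun j => if i = j then (1:ℂ) else 0) = wt d + wt d' := by
              abel
            rw [this]; exact hw
      · rw [pderiv_monomial, pderiv_monomial]
        by_cases hd1 : d (Sum.inr i) = 0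
        · rw [hd1]; simp
        · by_cases hd2 : d' (Sum.inl i) = 0
          · rw [hd2]; simp
          · refine Submodule.subset_span ⟨_, _, _, _, ?_, rfl⟩
            rw [wt_sub_inr hd1, wt_sub_inl hd2]
            have : wt d - (fun j => if i = j then (1:ℂ) else 0)
                + (wt d' + fun j => if i = j then (1:ℂ) else 0) = wt d + wt d' := by
              abel
            rw [this]; exact hw
  | zero => simp
  | add x y _ _ hx hy => rw [map_add]; exact add_mem hx hy
  | smul c x _ hx => rw [map_smul]; exact Submodule.smul_mem _ _ hx

lemma mul'_mem_S0 {t : Qn n ⊗[ℂ] Qn n} (ht : t ∈ T0 n A) :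
    LinearMap.mul' ℂ (Qn n) t ∈ S0 n A := by
  induction ht using Submodule.span_induction with
  | mem x hx =>
      obtain ⟨d, d', c, c', hw, rfl⟩ := hx
      rw [LinearMap.mul'_apply, monomial_mul]
      exact monomial_mem_S0 (by rw [wt_add]; exact hw)
  | zero => simp
  | add x y _ _ hx hy => rw [map_add]; exact add_mem hx hy
  | smul c x _ hx => rw [map_smul]; exact Submodule.smul_mem _ _ hx

lemma transv_mem_S0 {f g : Qn n} (hf : f ∈ S0 n A) (hg : g ∈ S0 n A) (k : ℕ) :
    transv n k f g ∈ S0 n A := by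
  have h : ∀ m : ℕ, (Gam n ^ m) (f ⊗ₜ[ℂ] g) ∈ T0 n A := by
    intro m
    induction m with
    | zero => simpa using tmul_mem_T0 hf hg
    | succ p ih =>
        rw [pow_succ', Module.End.mul_apply]
        exact Gam_mem_T0 ih
  exact mul'_mem_S0 (h k)

end Stmt10

/-- if the lattice `A^⊥ ∩ ℤ^n` has ℤ-basis `l^1, …, l^r`, then the
smallest ℂ-subspace of `Q` containing `1`, the `x_j y_j`, the `μ_{l^i}` and the
`μ_{-l^i}`, and closed under all transvectant products, is exactly `Sym^𝔤`. -/
theorem stmt10 (n r : ℕ) (hn : 1 ≤ n) (A : Submodule ℂ (Fin n → ℂ))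
    (l : Fin r → Fin n → ℤ)
    (hl : ∀ i, (fun j => ((l i j : ℤ) : ℂ)) ∈ perpC n A)
    (hlZbasis : ∀ u : Fin n → ℤ, (fun j => ((u j : ℤ) : ℂ)) ∈ perpC n A →
      ∃! c : Fin r → ℤ, u = ∑ i, c i • l i) :
    sInf {S : Submodule ℂ (Qn n) |
        (1 : Qn n) ∈ S ∧
        (∀ j : Fin n, (X (Sum.inl j) : Qn n) * X (Sum.inr j) ∈ S) ∧
        (∀ i, mu n (l i) ∈ S) ∧ (∀ i, mu n (-(l i)) ∈ S) ∧
        (∀ f ∈ S, ∀ g ∈ S, ∀ k : ℕ, transv n k f g ∈ S)}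
      = SymG n A := by
  classical
  apply le_antisymm
  · apply sInf_le
    rw [Stmt10.SymG_eq_S0]
    refine ⟨Stmt10.one_mem_S0, fun j => Stmt10.xy_mem_S0 j, fun i => Stmt10.mu_mem_S0 _ (hl i),
      fun i => Stmt10.mu_mem_S0 _ ?_, fun f hf g hg k => Stmt10.transv_mem_S0 hf hg k⟩
    have h := Stmt10.perp_neg (hl i)
    have he : (fun j => (((-(l i)) j : ℤ) : ℂ)) = -(fun j => ((l i j : ℤ) : ℂ)) := by
      funext j
      push_cast
      simp
    rw [he]
    exact h
  · refine le_sInf fun S hS => ?_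
    obtain ⟨h1, hxy, hmu, hmun, htr⟩ := hS
    rw [SymG, Submodule.span_le]
    rintro q ⟨a, b, hab, rfl⟩
    show Stmt10.M b a ∈ S
    set u : Fin n → ℤ := fun j => (a j : ℤ) - b j with hu
    have hup : (fun j => ((u j : ℤ) : ℂ)) ∈ perpC n A := by
      have he : (fun j => ((u j : ℤ) : ℂ)) = fun j => (a j : ℂ) - b j := by
        funext j
        rw [hu]
        push_cast
        ring
      rw [he]
      exact hab
    obtain ⟨c, hc, -⟩ := hlZbasis u hup
    refine Stmt10.gen_mem l h1 hxy hmu hmun htr c fun j => ?_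
    have hj := congrFun hc j
    simpa [hu, Finset.sum_apply, Pi.smul_apply, smul_eq_mul] using hj

end
end
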